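/- arXiv:2111.01771 — 8 statements merged into one kernel-verified Lean document; each statement's English description precedes it below -/
import Mathlib

section
/- Let A be an m×(m+1) matrix with entries in an arbitrary field. For any column indices 1 ≤ i < j < k ≤ m+1 and any row index 1 ≤ α ≤ m, the identity det A^{î} · det A^{ĵ k̂}_{α̂} + det A^{k̂} · det A^{î ĵ}_{α̂} = det A^{ĵ} · det A^{î k̂}_{α̂} holds. -/
/-- The entry of a matrix at the 1-based position `(a, b)`; equals `0` out of range. -/
def ent {F : Type*} [Zero F] {r c : ℕ} (A : Matrix (Fin r) (Fin c) F) (a b : ℕ) : F :=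
  if h : a - 1 < r ∧ b - 1 < c then A ⟨a - 1, h.1⟩ ⟨b - 1, h.2⟩ else 0

/-- The determinant of the `p × p` submatrix of `A` whose rows are the (1-based) rows
`row 0, row 1, …, row (p-1)` of `A` and whose columns are `col 0, …, col (p-1)`. -/
noncomputable def subdet {F : Type*} [Field F] {r c : ℕ} (A : Matrix (Fin r) (Fin c) F)
    (p : ℕ) (row col : ℕ → ℕ) : F :=
  (Matrix.of fun a b : Fin p => ent A (row a.val) (col b.val)).det

/-- The increasing enumeration (0-based argument, 1-based values) of `{1, …} \ {i}`. -/
def del1 (i : ℕ) : ℕ → ℕ := fun t => if t + 1 < i then t + 1 else t + 2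

/-- The increasing enumeration (0-based argument, 1-based values) of `{1, …} \ {i, j}`
for `i < j`. -/
def del2 (i j : ℕ) : ℕ → ℕ :=
  fun t => if t + 1 < i then t + 1 else if t + 2 < j then t + 2 else t + 3

section Helpers

variable {F : Type*} [Field F]

lemma ent_congr {r c : ℕ} (A : Matrix (Fin r) (Fin c) F) {a b a' b' : ℕ}
    (h1 : a = a') (h2 : b = b') : ent A a b = ent A a' b' := by rw [h1, h2]

/-- A square matrix whose rows all lie in a submodule of rank `< r` has zero determinant. -/
lemma det_eq_zero_of_rows_mem {r : ℕ} (N : Matrix (Fin r) (Fin r) F)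
    (V : Submodule F (Fin r → F)) (hV : ∀ b, N b ∈ V)
    (hr : Module.finrank F V < r) : N.det = 0 := by
  have hnLI : ¬ LinearIndependent F N := by
    intro hLI
    have h2 : LinearIndependent F (fun b => (⟨N b, hV b⟩ : V)) := by
      apply LinearIndependent.of_comp V.subtype
      exact hLI
    exact absurd (h2.fintype_card_le_finrank) (by simpa using Nat.not_le.mpr hr)
  have hnLI := Fintype.not_linearIndependent_iff.mp hnLI
  obtain ⟨g, hg, b0, hb0⟩ := hnLI
  rw [← Matrix.exists_vecMul_eq_zero_iff]
  refine ⟨g, fun hgz => hb0 (by rw [hgz]; rfl), ?_⟩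
  funext c
  have := congrFun hg c
  simpa [Matrix.vecMul, dotProduct] using this

end Helpers


section Rot
variable {F : Type*} [Field F]

lemma fin_ne_mk {r : ℕ} (b : Fin r) (x : ℕ) (hx : x < r) (h : (b : ℕ) ≠ x) :
    b ≠ ⟨x, hx⟩ := fun hh => h (by rw [hh])

/-- Cyclically shifting a block of `d+1` rows changes the determinant by `(-1)^d`. -/
lemma det_rot {r : ℕ} (d : ℕ) (p : ℕ) (h : p + d < r) (N M : Matrix (Fin r) (Fin r) F)
    (h1 : ∀ b : Fin r, (b : ℕ) < p → N b = M b)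
    (h2 : N ⟨p, by omega⟩ = M ⟨p + d, h⟩)
    (h3 : ∀ b : Fin r, p < (b : ℕ) → (b : ℕ) ≤ p + d → N b = M ⟨(b : ℕ) - 1, by omega⟩)
    (h4 : ∀ b : Fin r, p + d < (b : ℕ) → N b = M b) :
    N.det = (-1) ^ d * M.det := by
  induction d generalizing p N with
  | zero =>
    have hNM : N = M := by
      funext b
      rcases lt_trichotomy ((b : ℕ)) p with hb | hb | hb
      · exact h1 b hb
      · have hbe : b = ⟨p, by omega⟩ := Fin.ext (show (b : ℕ) = p from hb)
        rw [hbe, h2]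
        have : (⟨p + 0, h⟩ : Fin r) = ⟨p, by omega⟩ := rfl
        rw [this]
      · exact h4 b (by omega)
    rw [hNM]; ring
  | succ d ih =>
    have hp : p < r := by omega
    have hp1 : p + 1 < r := by omega
    set s : Equiv.Perm (Fin r) := Equiv.swap ⟨p, hp⟩ ⟨p + 1, hp1⟩ with hs
    have hdp : (N.submatrix s id).det = Equiv.Perm.sign s * N.det := Matrix.det_permute s N
    have hNe : (⟨p, hp⟩ : Fin r) ≠ ⟨p + 1, hp1⟩ :=
      fin_ne_mk _ _ hp1 (show p ≠ p + 1 by omega)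
    have hsign : Equiv.Perm.sign s = -1 := Equiv.Perm.sign_swap hNe
    have hN2 : (N.submatrix s id).det = (-1) ^ d * M.det := by
      apply ih (p + 1) (by omega)
      · intro b hb
        show N (s b) = M b
        rcases Nat.lt_or_ge (b : ℕ) p with hbp | hbp
        · rw [show s b = b from Equiv.swap_apply_of_ne_of_ne
            (fin_ne_mk b p hp (by omega)) (fin_ne_mk b (p+1) hp1 (by omega))]
          exact h1 b hbp
        · have hbe : b = ⟨p, hp⟩ := Fin.ext (show (b : ℕ) = p by omega)
          rw [hbe, hs, Equiv.swap_apply_left]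
          exact (h3 ⟨p + 1, hp1⟩ (Nat.lt_succ_self p)
            (Nat.add_le_add_left (Nat.succ_le_succ (Nat.zero_le d)) p)).trans rfl
      · show N (s ⟨p + 1, hp1⟩) = M ⟨p + 1 + d, by omega⟩
        rw [hs, Equiv.swap_apply_right]
        have he : (⟨p + 1 + d, show p + 1 + d < r by omega⟩ : Fin r) = ⟨p + (d + 1), h⟩ :=
          Fin.mk_eq_mk.mpr (by omega)
        rw [he]
        exact h2
      · intro b hb1 hb2
        show N (s b) = M ⟨(b : ℕ) - 1, by omega⟩
        rw [show s b = b from Equiv.swap_apply_of_ne_of_ne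
            (fin_ne_mk b p hp (by omega)) (fin_ne_mk b (p+1) hp1 (by omega))]
        exact h3 b (by omega) (by omega)
      · intro b hb
        show N (s b) = M b
        rw [show s b = b from Equiv.swap_apply_of_ne_of_ne
            (fin_ne_mk b p hp (by omega)) (fin_ne_mk b (p+1) hp1 (by omega))]
        exact h4 b (by omega)
    rw [hdp, hsign] at hN2
    simp only [Units.val_neg, Units.val_one, Int.cast_neg, Int.cast_one] at hN2
    linear_combination -hN2
end Rot

section DJ

variable {F : Type*} [Field F] {m : ℕ}

/-- the `1`-based column vector entries of `A`, as a vector in `Fin m → F`. -/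
def colv (A : Matrix (Fin m) (Fin (m + 1)) F) (t : ℕ) : Fin m → F :=
  fun a => ent A ((a : ℕ) + 1) t

/-- `cent v r` : 1-based entry of the vector `v`. -/
def cent (v : Fin m → F) (r : ℕ) : F := if h : r - 1 < m then v ⟨r - 1, h⟩ else 0

lemma cent_colv (A : Matrix (Fin m) (Fin (m + 1)) F) (t r' : ℕ) (hr : 1 ≤ r') :
    cent (colv A t) r' = ent A r' t := by
  unfold cent colv
  by_cases h : r' - 1 < m
  · rw [dif_pos h]
    show ent A ((r' - 1) + 1) t = ent A r' t
    exact ent_congr A (by omega) rfl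
  · rw [dif_neg h]
    unfold ent
    rw [dif_neg (by omega)]

/-- Transposed maximal minor matrix: delete 1-based column `c`. -/
def TD (A : Matrix (Fin m) (Fin (m + 1)) F) (c : ℕ) : Matrix (Fin m) (Fin m) F :=
  Matrix.of fun b a => ent A ((a : ℕ) + 1) (del1 c (b : ℕ))

/-- Transposed minor matrix: delete 1-based row `α` and columns `p < q`. -/
def TM (A : Matrix (Fin m) (Fin (m + 1)) F) (α p q : ℕ) :
    Matrix (Fin (m - 1)) (Fin (m - 1)) F :=
  Matrix.of fun b a => ent A (del1 α (a : ℕ)) (del2 p q (b : ℕ))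

lemma TD_det (A : Matrix (Fin m) (Fin (m + 1)) F) (c : ℕ) :
    (TD A c).det = subdet A m (fun t => t + 1) (del1 c) := by
  unfold subdet
  rw [← Matrix.det_transpose]
  congr 1

lemma TM_det (A : Matrix (Fin m) (Fin (m + 1)) F) (α p q : ℕ) :
    (TM A α p q).det = subdet A (m - 1) (del1 α) (del2 p q) := by
  unfold subdet
  rw [← Matrix.det_transpose]
  congr 1

/-- `A` with (1-based) column `i` replaced by `v`, column `c` deleted, transposed. -/
def DvM (A : Matrix (Fin m) (Fin (m + 1)) F) (i c : ℕ) (v : Fin m → F) :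
    Matrix (Fin m) (Fin m) F :=
  Matrix.of fun b a =>
    if del1 c (b : ℕ) = i then v a else ent A ((a : ℕ) + 1) (del1 c (b : ℕ))

/-- `A` with column `i` replaced by `v`, row `α` and columns `p < q` deleted, transposed. -/
def MvM (A : Matrix (Fin m) (Fin (m + 1)) F) (α i p q : ℕ) (v : Fin m → F) :
    Matrix (Fin (m - 1)) (Fin (m - 1)) F :=
  Matrix.of fun b a =>
    if del2 p q (b : ℕ) = i then cent v (del1 α (a : ℕ))
    else ent A (del1 α (a : ℕ)) (del2 p q (b : ℕ))

lemma DvM_colv_i (A : Matrix (Fin m) (Fin (m + 1)) F) (i c : ℕ) :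
    DvM A i c (colv A i) = TD A c := by
  ext b a
  show (if del1 c (b : ℕ) = i then colv A i a else _) = ent A ((a : ℕ) + 1) (del1 c (b : ℕ))
  split_ifs with h
  · rw [h]; rfl
  · rfl

lemma MvM_colv_i (A : Matrix (Fin m) (Fin (m + 1)) F) (α i p q : ℕ) :
    MvM A α i p q (colv A i) = TM A α p q := by
  ext b a
  show (if del2 p q (b : ℕ) = i then cent (colv A i) (del1 α (a : ℕ)) else _)
      = ent A (del1 α (a : ℕ)) (del2 p q (b : ℕ))
  split_ifs with h
  · rw [cent_colv A i _ (by unfold del1; split <;> omega), h]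
  · rfl

end DJ
section DJ2

variable {F : Type*} [Field F] {m : ℕ}

/-- determinant after replacing row `b₀`, as a linear map in the new row. -/
def detUpd {r : ℕ} (B : Matrix (Fin r) (Fin r) F) (b₀ : Fin r) : (Fin r → F) →ₗ[F] F where
  toFun u := (B.updateRow b₀ u).det
  map_add' u v := Matrix.det_updateRow_add B b₀ u v
  map_smul' c u := by simpa using Matrix.det_updateRow_smul B b₀ c u

@[simp] lemma detUpd_apply {r : ℕ} (B : Matrix (Fin r) (Fin r) F) (b₀ : Fin r)
    (u : Fin r → F) : detUpd B b₀ u = (B.updateRow b₀ u).det := rfl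

/-- deleting the (1-based) entry `α` of a vector, as a linear map. -/
def centL (α : ℕ) : (Fin m → F) →ₗ[F] (Fin (m - 1) → F) where
  toFun v := fun a => cent v (del1 α (a : ℕ))
  map_add' u v := by
    funext a
    show cent (u + v) _ = cent u _ + cent v _
    unfold cent
    split
    · rfl
    · simp
  map_smul' c u := by
    funext a
    show cent (c • u) _ = c * cent u _
    unfold cent
    split
    · rfl
    · simp

@[simp] lemma centL_apply (α : ℕ) (v : Fin m → F) (a : Fin (m - 1)) :
    centL α v a = cent v (del1 α (a : ℕ)) := rfl

lemma DvM_eq_updateRow (A : Matrix (Fin m) (Fin (m + 1)) F) {i c : ℕ}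
    (hi : 1 ≤ i) (hic : i < c) (him : i - 1 < m) (v : Fin m → F) :
    DvM A i c v = (TD A c).updateRow ⟨i - 1, him⟩ v := by
  ext b a
  rw [Matrix.updateRow_apply]
  show (if del1 c (b : ℕ) = i then v a else ent A ((a : ℕ) + 1) (del1 c (b : ℕ))) = _
  by_cases hb : (b : ℕ) = i - 1
  · rw [if_pos (show del1 c (b : ℕ) = i by unfold del1; split <;> omega),
      if_pos (Fin.ext (show (b : ℕ) = i - 1 from hb))]
  · rw [if_neg (show ¬(del1 c (b : ℕ) = i) by unfold del1; split <;> omega),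
      if_neg (fun hh : b = ⟨i - 1, him⟩ => hb (by rw [hh]))]
    rfl

lemma MvM_eq_updateRow (A : Matrix (Fin m) (Fin (m + 1)) F) {α i p q : ℕ}
    (hi : 1 ≤ i) (hip : i < p) (hpq : p < q) (him : i - 1 < m - 1) (v : Fin m → F) :
    MvM A α i p q v = (TM A α p q).updateRow ⟨i - 1, him⟩ (centL α v) := by
  ext b a
  rw [Matrix.updateRow_apply]
  show (if del2 p q (b : ℕ) = i then cent v (del1 α (a : ℕ))
      else ent A (del1 α (a : ℕ)) (del2 p q (b : ℕ))) = _
  by_cases hb : (b : ℕ) = i - 1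
  · rw [if_pos (show del2 p q (b : ℕ) = i by unfold del2; split_ifs <;> omega),
      if_pos (Fin.ext (show (b : ℕ) = i - 1 from hb))]
    rfl
  · rw [if_neg (show ¬(del2 p q (b : ℕ) = i) by unfold del2; split_ifs <;> omega),
      if_neg (fun hh : b = ⟨i - 1, him⟩ => hb (by rw [hh]))]
    rfl

end DJ2
section DJ3

variable {F : Type*} [Field F] {m : ℕ}

lemma dupD (A : Matrix (Fin m) (Fin (m + 1)) F) {i c t : ℕ}
    (hi : 1 ≤ i) (hic : i < c) (hc : c ≤ m + 1) (ht1 : 1 ≤ t) (ht2 : t ≤ m + 1)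
    (hti : t ≠ i) (htc : t ≠ c) :
    (DvM A i c (colv A t)).det = 0 := by
  have hbt : (if t < c then t - 1 else t - 2) < m := by split <;> omega
  apply Matrix.det_zero_of_row_eq (i := ⟨i - 1, by omega⟩)
    (j := ⟨if t < c then t - 1 else t - 2, hbt⟩)
  · intro hh
    have := congrArg Fin.val hh
    simp only at this
    split at this <;> omega
  · funext a
    show (if del1 c (i - 1) = i then colv A t a else _)
        = (if del1 c (if t < c then t - 1 else t - 2) = i then colv A t a else
            ent A ((a : ℕ) + 1) (del1 c (if t < c then t - 1 else t - 2)))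
    rw [if_pos (show del1 c (i - 1) = i by unfold del1; split <;> omega),
      if_neg (show ¬(del1 c (if t < c then t - 1 else t - 2) = i) by
        unfold del1; split_ifs <;> omega)]
    show ent A ((a : ℕ) + 1) t = _
    exact ent_congr A rfl (by unfold del1; split_ifs <;> omega)

lemma dupM (A : Matrix (Fin m) (Fin (m + 1)) F) {α i j k t : ℕ}
    (hi : 1 ≤ i) (hij : i < j) (hjk : j < k) (hk : k ≤ m + 1)
    (hα1 : 1 ≤ α) (hα2 : α ≤ m)
    (ht1 : 1 ≤ t) (ht2 : t ≤ m + 1) (hti : t ≠ i) (htj : t ≠ j) (htk : t ≠ k) :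
    (MvM A α i j k (colv A t)).det = 0 := by
  have hbt : (if t < j then t - 1 else if t < k then t - 2 else t - 3) < m - 1 := by
    split_ifs <;> omega
  apply Matrix.det_zero_of_row_eq (i := ⟨i - 1, by omega⟩)
    (j := ⟨if t < j then t - 1 else if t < k then t - 2 else t - 3, hbt⟩)
  · intro hh
    have := congrArg Fin.val hh
    simp only at this
    split_ifs at this <;> omega
  · funext a
    show (if del2 j k (i - 1) = i then cent (colv A t) (del1 α (a : ℕ)) else _)
        = (if del2 j k (if t < j then t - 1 else if t < k then t - 2 else t - 3) = i
            then cent (colv A t) (del1 α (a : ℕ)) else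
            ent A (del1 α (a : ℕ))
              (del2 j k (if t < j then t - 1 else if t < k then t - 2 else t - 3)))
    rw [if_pos (show del2 j k (i - 1) = i by unfold del2; split_ifs <;> omega),
      if_neg (show ¬(del2 j k (if t < j then t - 1 else if t < k then t - 2 else t - 3) = i) by
        unfold del2; split_ifs <;> omega),
      cent_colv A t _ (by unfold del1; split <;> omega)]
    exact ent_congr A rfl (by unfold del2; split_ifs <;> omega)

end DJ3
section DJ4

variable {F : Type*} [Field F] {m : ℕ}

lemma shiftD (A : Matrix (Fin m) (Fin (m + 1)) F) {i c : ℕ}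
    (hi : 1 ≤ i) (hic : i < c) (hc : c ≤ m + 1) :
    (DvM A i c (colv A c)).det = (-1) ^ (c - i - 1) * (TD A i).det := by
  refine det_rot (c - i - 1) (i - 1) (by omega) _ _ ?_ ?_ ?_ ?_
  · intro b hb
    funext a
    show (if del1 c (b : ℕ) = i then colv A c a else ent A ((a : ℕ) + 1) (del1 c (b : ℕ)))
        = ent A ((a : ℕ) + 1) (del1 i (b : ℕ))
    rw [if_neg (show ¬(del1 c (b : ℕ) = i) by unfold del1; split <;> omega)]
    exact ent_congr A rfl (by unfold del1; split_ifs <;> omega)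
  · funext a
    show (if del1 c (i - 1) = i then colv A c a else ent A ((a : ℕ) + 1) (del1 c (i - 1)))
        = ent A ((a : ℕ) + 1) (del1 i (i - 1 + (c - i - 1)))
    rw [if_pos (show del1 c (i - 1) = i by unfold del1; split <;> omega)]
    show ent A ((a : ℕ) + 1) c = _
    exact ent_congr A rfl (by unfold del1; split <;> omega)
  · intro b hb1 hb2
    funext a
    show (if del1 c (b : ℕ) = i then colv A c a else ent A ((a : ℕ) + 1) (del1 c (b : ℕ)))
        = ent A ((a : ℕ) + 1) (del1 i ((b : ℕ) - 1))
    rw [if_neg (show ¬(del1 c (b : ℕ) = i) by unfold del1; split <;> omega)]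
    exact ent_congr A rfl (by unfold del1; split_ifs <;> omega)
  · intro b hb
    funext a
    show (if del1 c (b : ℕ) = i then colv A c a else ent A ((a : ℕ) + 1) (del1 c (b : ℕ)))
        = ent A ((a : ℕ) + 1) (del1 i (b : ℕ))
    rw [if_neg (show ¬(del1 c (b : ℕ) = i) by unfold del1; split <;> omega)]
    exact ent_congr A rfl (by unfold del1; split_ifs <;> omega)

lemma shiftM1 (A : Matrix (Fin m) (Fin (m + 1)) F) {α i j k : ℕ}
    (hi : 1 ≤ i) (hij : i < j) (hjk : j < k) (hk : k ≤ m + 1) :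
    (MvM A α i j k (colv A j)).det = (-1) ^ (j - i - 1) * (TM A α i k).det := by
  refine det_rot (j - i - 1) (i - 1) (by omega) _ _ ?_ ?_ ?_ ?_
  · intro b hb
    funext a
    show (if del2 j k (b : ℕ) = i then cent (colv A j) (del1 α (a : ℕ))
          else ent A (del1 α (a : ℕ)) (del2 j k (b : ℕ)))
        = ent A (del1 α (a : ℕ)) (del2 i k (b : ℕ))
    rw [if_neg (show ¬(del2 j k (b : ℕ) = i) by unfold del2; split_ifs <;> omega)]
    exact ent_congr A rfl (by unfold del2; split_ifs <;> omega)
  · funext a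
    show (if del2 j k (i - 1) = i then cent (colv A j) (del1 α (a : ℕ))
          else ent A (del1 α (a : ℕ)) (del2 j k (i - 1)))
        = ent A (del1 α (a : ℕ)) (del2 i k (i - 1 + (j - i - 1)))
    rw [if_pos (show del2 j k (i - 1) = i by unfold del2; split_ifs <;> omega),
      cent_colv A j _ (by unfold del1; split <;> omega)]
    exact ent_congr A rfl (by unfold del2; split_ifs <;> omega)
  · intro b hb1 hb2
    funext a
    show (if del2 j k (b : ℕ) = i then cent (colv A j) (del1 α (a : ℕ))
          else ent A (del1 α (a : ℕ)) (del2 j k (b : ℕ)))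
        = ent A (del1 α (a : ℕ)) (del2 i k ((b : ℕ) - 1))
    rw [if_neg (show ¬(del2 j k (b : ℕ) = i) by unfold del2; split_ifs <;> omega)]
    exact ent_congr A rfl (by unfold del2; split_ifs <;> omega)
  · intro b hb
    funext a
    show (if del2 j k (b : ℕ) = i then cent (colv A j) (del1 α (a : ℕ))
          else ent A (del1 α (a : ℕ)) (del2 j k (b : ℕ)))
        = ent A (del1 α (a : ℕ)) (del2 i k (b : ℕ))
    rw [if_neg (show ¬(del2 j k (b : ℕ) = i) by unfold del2; split_ifs <;> omega)]
    exact ent_congr A rfl (by unfold del2; split_ifs <;> omega)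

lemma shiftM2 (A : Matrix (Fin m) (Fin (m + 1)) F) {α i j k : ℕ}
    (hi : 1 ≤ i) (hij : i < j) (hjk : j < k) (hk : k ≤ m + 1) :
    (MvM A α i j k (colv A k)).det = (-1) ^ (k - i - 2) * (TM A α i j).det := by
  refine det_rot (k - i - 2) (i - 1) (by omega) _ _ ?_ ?_ ?_ ?_
  · intro b hb
    funext a
    show (if del2 j k (b : ℕ) = i then cent (colv A k) (del1 α (a : ℕ))
          else ent A (del1 α (a : ℕ)) (del2 j k (b : ℕ)))
        = ent A (del1 α (a : ℕ)) (del2 i j (b : ℕ))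
    rw [if_neg (show ¬(del2 j k (b : ℕ) = i) by unfold del2; split_ifs <;> omega)]
    exact ent_congr A rfl (by unfold del2; split_ifs <;> omega)
  · funext a
    show (if del2 j k (i - 1) = i then cent (colv A k) (del1 α (a : ℕ))
          else ent A (del1 α (a : ℕ)) (del2 j k (i - 1)))
        = ent A (del1 α (a : ℕ)) (del2 i j (i - 1 + (k - i - 2)))
    rw [if_pos (show del2 j k (i - 1) = i by unfold del2; split_ifs <;> omega),
      cent_colv A k _ (by unfold del1; split <;> omega)]
    exact ent_congr A rfl (by unfold del2; split_ifs <;> omega)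
  · intro b hb1 hb2
    funext a
    show (if del2 j k (b : ℕ) = i then cent (colv A k) (del1 α (a : ℕ))
          else ent A (del1 α (a : ℕ)) (del2 j k (b : ℕ)))
        = ent A (del1 α (a : ℕ)) (del2 i j ((b : ℕ) - 1))
    rw [if_neg (show ¬(del2 j k (b : ℕ) = i) by unfold del2; split_ifs <;> omega)]
    exact ent_congr A rfl (by unfold del2; split_ifs <;> omega)
  · intro b hb
    funext a
    show (if del2 j k (b : ℕ) = i then cent (colv A k) (del1 α (a : ℕ))
          else ent A (del1 α (a : ℕ)) (del2 j k (b : ℕ)))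
        = ent A (del1 α (a : ℕ)) (del2 i j (b : ℕ))
    rw [if_neg (show ¬(del2 j k (b : ℕ) = i) by unfold del2; split_ifs <;> omega)]
    exact ent_congr A rfl (by unfold del2; split_ifs <;> omega)

end DJ4
section DJ5

variable {F : Type*} [Field F] {m : ℕ}

lemma succAbove_val {n : ℕ} (q : Fin (n + 1)) (x : Fin n) :
    ((q.succAbove x : Fin (n + 1)) : ℕ) = if (x : ℕ) < (q : ℕ) then (x : ℕ) else (x : ℕ) + 1 := by
  by_cases h : (x : ℕ) < (q : ℕ)
  · rw [if_pos h, Fin.succAbove_of_castSucc_lt q x (by rwa [Fin.lt_def, Fin.coe_castSucc])]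
    exact Fin.coe_castSucc x
  · rw [if_neg h, Fin.succAbove_of_le_castSucc q x (by rw [Fin.le_def, Fin.coe_castSucc]; omega)]
    exact Fin.val_succ x

lemma singleM (A : Matrix (Fin m) (Fin (m + 1)) F) {α i j k : ℕ}
    (hi : 1 ≤ i) (hij : i < j) (hjk : j < k) (hk : k ≤ m + 1)
    (hα1 : 1 ≤ α) (hα2 : α ≤ m) (hα : α - 1 < m) :
    (MvM A α i j k (Pi.single (⟨α - 1, hα⟩ : Fin m) (1 : F))).det = 0 := by
  apply Matrix.det_eq_zero_of_row_eq_zero (⟨i - 1, by omega⟩ : Fin (m - 1))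
  intro a
  show (if del2 j k (i - 1) = i then cent (Pi.single (⟨α - 1, hα⟩ : Fin m) (1 : F)) (del1 α (a : ℕ))
        else ent A (del1 α (a : ℕ)) (del2 j k (i - 1))) = 0
  rw [if_pos (show del2 j k (i - 1) = i by unfold del2; split_ifs <;> omega)]
  unfold cent
  split
  · exact Pi.single_eq_of_ne (Fin.ne_of_val_ne (by
      show del1 α (a : ℕ) - 1 ≠ α - 1
      unfold del1; split <;> omega)) 1
  · rfl

lemma singleD (A : Matrix (Fin m) (Fin (m + 1)) F) {i c α : ℕ}
    (hi : 1 ≤ i) (hic : i < c) (hc : c ≤ m + 1) (hα1 : 1 ≤ α) (hα2 : α ≤ m)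
    (hm : 2 ≤ m) (hα : α - 1 < m) :
    (DvM A i c (Pi.single (⟨α - 1, hα⟩ : Fin m) (1 : F))).det
      = (-1) ^ ((i - 1) + (α - 1)) * (TM A α i c).det := by
  obtain ⟨m', rfl⟩ : ∃ m', m = m' + 2 := ⟨m - 2, by omega⟩
  set α0 : Fin (m' + 2) := ⟨α - 1, hα⟩ with hα0
  set bD : Fin (m' + 2) := ⟨i - 1, by omega⟩ with hbD
  rw [show (DvM A i c (Pi.single α0 (1 : F))).det
      = ∑ a : Fin (m' + 2), (-1) ^ ((bD : ℕ) + (a : ℕ)) * (DvM A i c (Pi.single α0 (1 : F))) bD a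
          * ((DvM A i c (Pi.single α0 (1 : F))).submatrix bD.succAbove a.succAbove).det
      from Matrix.det_succ_row _ bD]
  rw [Finset.sum_eq_single α0]
  · have hbv0 : (bD : ℕ) = i - 1 := rfl
    have hav0 : (α0 : ℕ) = α - 1 := rfl
    have h1 : (DvM A i c (Pi.single α0 (1 : F))) bD α0 = 1 := by
      simp only [DvM, Matrix.of_apply]
      rw [if_pos (show del1 c (i - 1) = i by unfold del1; split <;> omega)]
      simp
    rw [h1, mul_one]
    have h2 : ((DvM A i c (Pi.single α0 (1 : F))).submatrix bD.succAbove α0.succAbove)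
        = TM A α i c := by
      ext b' a'
      have hbv := succAbove_val bD b'
      have hav := succAbove_val α0 a'
      rw [hbv0] at hbv
      rw [hav0] at hav
      simp only [Matrix.submatrix_apply, DvM, TM, Matrix.of_apply]
      rw [hbv, hav]
      rw [if_neg (show ¬(del1 c (if (b' : ℕ) < i - 1 then (b' : ℕ) else (b' : ℕ) + 1) = i) by
        unfold del1; split_ifs <;> omega)]
      exact ent_congr A (by unfold del1; split_ifs <;> omega)
        (by unfold del1 del2; split_ifs <;> omega)
    rw [h2, hbv0, hav0]
  · intro a _ ha
    have h0 : (DvM A i c (Pi.single α0 (1 : F))) bD a = 0 := by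
      simp only [DvM, Matrix.of_apply]
      rw [if_pos (show del1 c (i - 1) = i by unfold del1; split <;> omega)]
      exact Pi.single_eq_of_ne ha 1
    rw [h0]
    ring
  · intro h
    exact absurd (Finset.mem_univ α0) h

end DJ5
section DJ6

variable {F : Type*} [Field F] {m : ℕ}

lemma centL_ker {α : ℕ} (hα1 : 1 ≤ α) (hα2 : α ≤ m) (hα : α - 1 < m) (z : Fin m → F)
    (hz : centL (m := m) (F := F) α z = 0) :
    z = z ⟨α - 1, hα⟩ • (Pi.single (⟨α - 1, hα⟩ : Fin m) (1 : F) : Fin m → F) := by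
  funext x
  by_cases hx : x = (⟨α - 1, hα⟩ : Fin m)
  · subst hx
    simp
  · have hxv : (x : ℕ) ≠ α - 1 := fun h => hx (Fin.ext h)
    have hxm := x.isLt
    have ha : ∃ a : Fin (m - 1), del1 α ((a : Fin (m - 1)) : ℕ) = (x : ℕ) + 1 := by
      refine ⟨⟨if (x : ℕ) + 1 < α then (x : ℕ) else (x : ℕ) - 1, by split <;> omega⟩, ?_⟩
      show del1 α (if (x : ℕ) + 1 < α then (x : ℕ) else (x : ℕ) - 1) = (x : ℕ) + 1
      unfold del1; split_ifs <;> omega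
    obtain ⟨a, ha⟩ := ha
    have h1 := congrFun hz a
    rw [centL_apply, ha] at h1
    unfold cent at h1
    rw [dif_pos (show (x : ℕ) + 1 - 1 < m by omega)] at h1
    have h2 : (⟨(x : ℕ) + 1 - 1, show (x : ℕ) + 1 - 1 < m by omega⟩ : Fin m) = x :=
      Fin.ext (show (x : ℕ) + 1 - 1 = (x : ℕ) by omega)
    rw [h2] at h1
    have h3 : (z ⟨α - 1, hα⟩ • (Pi.single (⟨α - 1, hα⟩ : Fin m) (1 : F) : Fin m → F)) x = 0 := by
      rw [Pi.smul_apply, Pi.single_eq_of_ne hx 1, smul_zero]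
    rw [h3]
    exact h1

end DJ6
/-- Desnanot–Jacobi identity for an `m × (m+1)` matrix: for column indices
`1 ≤ i < j < k ≤ m+1` and a row index `1 ≤ α ≤ m`,
`det A^{î} det A^{ĵk̂}_{α̂} + det A^{k̂} det A^{îĵ}_{α̂} = det A^{ĵ} det A^{îk̂}_{α̂}`. -/
theorem statement0 {F : Type*} [Field F] {m : ℕ} (A : Matrix (Fin m) (Fin (m + 1)) F)
    (i j k α : ℕ) (hi : 1 ≤ i) (hij : i < j) (hjk : j < k) (hk : k ≤ m + 1)
    (hα1 : 1 ≤ α) (hα2 : α ≤ m) :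
    subdet A m (fun t => t + 1) (del1 i) * subdet A (m - 1) (del1 α) (del2 j k)
      + subdet A m (fun t => t + 1) (del1 k) * subdet A (m - 1) (del1 α) (del2 i j)
    = subdet A m (fun t => t + 1) (del1 j) * subdet A (m - 1) (del1 α) (del2 i k) := by
  have hm : 2 ≤ m := by omega
  have hα : α - 1 < m := by omega
  rw [← TD_det A i, ← TD_det A j, ← TD_det A k, ← TM_det A α j k, ← TM_det A α i j,
    ← TM_det A α i k]
  set S : Set (Fin m → F) :=
    (colv A '' {t | 1 ≤ t ∧ t ≤ m + 1 ∧ t ≠ i}) ∪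
      {(Pi.single (⟨α - 1, hα⟩ : Fin m) (1 : F) : Fin m → F)} with hSdef
  by_cases hspan : Submodule.span F S = ⊤
  · -- spanning case
    set bD : Fin m := ⟨i - 1, by omega⟩ with hbDdef
    set bM : Fin (m - 1) := ⟨i - 1, by omega⟩ with hbMdef
    set φL : (Fin m → F) →ₗ[F] F :=
      (TD A i).det • ((detUpd (TM A α j k) bM).comp (centL α))
      - (TM A α i k).det • (detUpd (TD A j) bD)
      + (TM A α i j).det • (detUpd (TD A k) bD) with hphi
    have hφ : ∀ v, φL v = (TD A i).det * (MvM A α i j k v).det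
        - (DvM A i j v).det * (TM A α i k).det
        + (DvM A i k v).det * (TM A α i j).det := by
      intro v
      have e1 : MvM A α i j k v = (TM A α j k).updateRow bM (centL α v) :=
        MvM_eq_updateRow A hi hij hjk (by omega) v
      have e2 : DvM A i j v = (TD A j).updateRow bD v :=
        DvM_eq_updateRow A hi hij (by omega) v
      have e3 : DvM A i k v = (TD A k).updateRow bD v :=
        DvM_eq_updateRow A hi (lt_trans hij hjk) (by omega) v
      rw [hphi, e1, e2, e3]
      simp only [LinearMap.add_apply, LinearMap.sub_apply, LinearMap.smul_apply,
        LinearMap.comp_apply, detUpd_apply, smul_eq_mul]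
      ring
    have hker : ∀ s ∈ S, φL s = 0 := by
      intro s hs
      rw [hSdef] at hs
      rcases hs with ⟨t, ⟨ht1, ht2, hti⟩, rfl⟩ | hs
      · by_cases htj : t = j
        · subst htj
          rw [hφ, shiftM1 A hi hij hjk hk, shiftD A hi hij (by omega),
            dupD A hi (lt_trans hij hjk) hk ht1 ht2 hti (by omega)]
          ring
        · by_cases htk : t = k
          · subst htk
            rw [hφ, shiftM2 A hi hij hjk hk, dupD A hi hij (by omega) ht1 ht2 hti htj,
              shiftD A hi (lt_trans hij hjk) hk]
            rw [show t - i - 1 = (t - i - 2) + 1 by omega]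
            ring
          · rw [hφ, dupM A hi hij hjk hk hα1 hα2 ht1 ht2 hti htj htk,
              dupD A hi hij (by omega) ht1 ht2 hti htj,
              dupD A hi (lt_trans hij hjk) hk ht1 ht2 hti htk]
            ring
      · rw [Set.mem_singleton_iff] at hs
        subst hs
        rw [hφ, singleM A hi hij hjk hk hα1 hα2 hα,
          singleD A hi hij (by omega) hα1 hα2 hm hα,
          singleD A hi (lt_trans hij hjk) hk hα1 hα2 hm hα]
        ring
    have hle : Submodule.span F S ≤ LinearMap.ker φL :=
      Submodule.span_le.mpr (fun s hs => LinearMap.mem_ker.mpr (hker s hs))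
    have hmem : colv A i ∈ Submodule.span F S := hspan ▸ Submodule.mem_top
    have h0 : φL (colv A i) = 0 := LinearMap.mem_ker.mp (hle hmem)
    rw [hφ, MvM_colv_i, DvM_colv_i, DvM_colv_i] at h0
    linear_combination h0
  · -- non-spanning case
    have hfin : Module.finrank F (Submodule.span F S) < m := by
      have h1 := Submodule.finrank_lt (K := F) (V := Fin m → F)
        hspan
      rwa [Module.finrank_fintype_fun_eq_card, Fintype.card_fin] at h1
    have hDi : (TD A i).det = 0 := by
      apply det_eq_zero_of_rows_mem _ (Submodule.span F S) _ hfin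
      intro b
      have hb := b.isLt
      have hrow : TD A i b = colv A (del1 i (b : ℕ)) := rfl
      rw [hrow]
      refine Submodule.subset_span (Set.mem_union_left _ ⟨del1 i (b : ℕ), ?_, rfl⟩)
      refine ⟨by unfold del1; split <;> omega, by unfold del1; split <;> omega,
        by unfold del1; split <;> omega⟩
    have hMcol : ∀ c : ℕ, i < c → c ≤ m + 1 → (TM A α i c).det = 0 := by
      intro c hic hc
      set V' := Submodule.map (centL (m := m) (F := F) α) (Submodule.span F S) with hV'def
      have hV' : V' ≠ ⊤ := by
        intro htop
        apply hspan
        rw [eq_top_iff]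
        rintro x -
        have hx : centL α x ∈ V' := htop.symm ▸ Submodule.mem_top
        obtain ⟨y, hy, hyx⟩ := Submodule.mem_map.mp hx
        have hz : centL (m := m) (F := F) α (x - y) = 0 := by rw [map_sub, hyx, sub_self]
        have hxy := centL_ker hα1 hα2 hα (x - y) hz
        have hsingle : (Pi.single (⟨α - 1, hα⟩ : Fin m) (1 : F) : Fin m → F)
            ∈ Submodule.span F S :=
          Submodule.subset_span (Set.mem_union_right _ rfl)
        have hx2 : x = y + (x - y) := by abel
        rw [hx2, hxy]
        exact Submodule.add_mem _ hy (Submodule.smul_mem _ _ hsingle)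
      have hfin' : Module.finrank F V' < m - 1 := by
        have h1 := Submodule.finrank_lt (K := F) (V := Fin (m - 1) → F)
          hV'
        rwa [Module.finrank_fintype_fun_eq_card, Fintype.card_fin] at h1
      apply det_eq_zero_of_rows_mem _ V' _ hfin'
      intro b
      have hb := b.isLt
      have hrow : TM A α i c b = centL α (colv A (del2 i c (b : ℕ))) := by
        funext a
        rw [centL_apply, cent_colv A _ _ (by unfold del1; split <;> omega)]
        rfl
      rw [hrow]
      refine Submodule.mem_map_of_mem (Submodule.subset_span (Set.mem_union_left _
        ⟨del2 i c (b : ℕ), ?_, rfl⟩))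
      refine ⟨by unfold del2; split_ifs <;> omega, by unfold del2; split_ifs <;> omega,
        by unfold del2; split_ifs <;> omega⟩
    rw [hDi, hMcol j hij (by omega), hMcol k (lt_trans hij hjk) hk]
    ring
end

section
/- Let Y be an n×n matrix over a field and let s, k, i be integers with 2 ≤ s ≤ n−1, 0 ≤ k ≤ s−2 and 0 ≤ i ≤ n−s−1. Then det Y^{[n−i,n]}_{[s,s+i]} · det Y^{[n−i−1,n]}_{{s−k−1}∪[s+1,s+i+1]} = det Y^{[n−i−1,n]}_{[s,s+i+1]} · det Y^{[n−i,n]}_{{s−k−1}∪[s+1,s+i]} + det Y^{[n−i−1,n]}_{{s−k−1}∪[s,s+i]} · det Y^{[n−i,n]}_{[s+1,s+i+1]}. (For i = 0 the interval [s+1,s+i] is empty, so the minor det Y^{[n−i,n]}_{{s−k−1}∪[s+1,s+i]} is the single entry Y_{s−k−1,n}.) -/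
open Matrix

namespace DJaux

variable {R : Type*} [CommRing R]

def mid (p : ℕ) (j : Fin p) : Fin (p + 2) := ⟨j.val + 1, by omega⟩

def eqv (p : ℕ) : Fin 2 ⊕ Fin p ≃ Fin (p + 2) where
  toFun x := Sum.elim (fun a => if a = 0 then (0 : Fin (p + 2)) else Fin.last (p + 1)) (mid p) x
  invFun y :=
    if h0 : y.val = 0 then .inl 0
    else if h1 : y.val = p + 1 then .inl 1 else .inr ⟨y.val - 1, by omega⟩
  left_inv := by
    rintro (a | j)
    · fin_cases a <;> simp [Fin.last]
    · have h1 : (mid p j).val ≠ 0 := by simp [mid]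
      have h2 : (mid p j).val ≠ p + 1 := by simp [mid]; omega
      simp only [Sum.elim_inr, dif_neg h1, dif_neg h2]
      exact (dif_neg h1).trans ((dif_neg h2).trans (congrArg Sum.inr (Fin.ext (by simp [mid]))))
  right_inv := by
    intro y
    dsimp only
    by_cases h0 : y.val = 0
    · rw [dif_pos h0]
      show (if (0 : Fin 2) = 0 then (0 : Fin (p + 2)) else Fin.last (p + 1)) = y
      rw [if_pos rfl]
      exact (Fin.ext h0.symm)
    · rw [dif_neg h0]
      by_cases h1 : y.val = p + 1
      · rw [dif_pos h1]
        show (if (1 : Fin 2) = 0 then (0 : Fin (p + 2)) else Fin.last (p + 1)) = y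
        rw [if_neg (by decide)]
        exact Fin.ext (by simp [Fin.last, h1])
      · rw [dif_neg h1]
        show mid p _ = y
        simp [mid, Fin.ext_iff]
        omega

theorem det_C_struct (p : ℕ) (N : Matrix (Fin (p + 2)) (Fin (p + 2)) R)
    (h : ∀ (b : Fin (p + 2)) (c : Fin p), N b (mid p c) = if b = mid p c then 1 else 0) :
    N.det = N 0 0 * N (Fin.last (p + 1)) (Fin.last (p + 1)) -
      N 0 (Fin.last (p + 1)) * N (Fin.last (p + 1)) 0 := by
  have key : N.submatrix (eqv p) (eqv p) =
      fromBlocks (Matrix.of fun a b : Fin 2 => N (eqv p (.inl a)) (eqv p (.inl b))) 0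
        (Matrix.of fun (a : Fin p) (b : Fin 2) => N (eqv p (.inr a)) (eqv p (.inl b))) 1 := by
    ext a b
    rcases a with a | a <;> rcases b with b | b
    · rfl
    · show N (eqv p (.inl a)) (mid p b) = 0
      rw [h, if_neg]
      fin_cases a <;> simp [eqv, mid, Fin.last] <;> omega
    · rfl
    · show N (mid p a) (mid p b) = (1 : Matrix (Fin p) (Fin p) R) a b
      rw [h, Matrix.one_apply]
      by_cases hab : a = b
      · simp [hab]
      · rw [if_neg, if_neg hab]
        simp [mid, Fin.ext_iff]
        omega
  have h2 := det_submatrix_equiv_self (eqv p) N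
  rw [← h2, key, det_fromBlocks_zero₁₂, det_one, mul_one, det_fin_two]
  have e0 : eqv p (.inl 0) = 0 := by simp [eqv]
  have e1 : eqv p (.inl 1) = Fin.last (p + 1) := by simp [eqv]
  simp [e0, e1]

theorem det_D_struct (p : ℕ) (N : Matrix (Fin (p + 2)) (Fin (p + 2)) R) (d : R)
    (h0 : ∀ b, N b 0 = if b = 0 then d else 0)
    (hl : ∀ b, N b (Fin.last (p + 1)) = if b = Fin.last (p + 1) then d else 0) :
    N.det = d * d * (N.submatrix (mid p) (mid p)).det := by
  have key : N.submatrix (eqv p) (eqv p) =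
      fromBlocks (Matrix.of fun a b : Fin 2 => N (eqv p (.inl a)) (eqv p (.inl b)))
        (Matrix.of fun (a : Fin 2) (b : Fin p) => N (eqv p (.inl a)) (mid p b)) 0
        (N.submatrix (mid p) (mid p)) := by
    ext a b
    rcases a with a | a <;> rcases b with b | b
    · rfl
    · rfl
    · show N (mid p a) (eqv p (.inl b)) = 0
      have hb : eqv p (.inl b) = 0 ∨ eqv p (.inl b) = Fin.last (p + 1) := by
        fin_cases b <;> simp [eqv]
      rcases hb with hb | hb
      · rw [hb, h0, if_neg]
        simp [mid, Fin.ext_iff]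
      · rw [hb, hl, if_neg]
        simp [mid, Fin.ext_iff, Fin.last]
        omega
    · rfl
  have h2 := det_submatrix_equiv_self (eqv p) N
  rw [← h2, key, det_fromBlocks_zero₂₁, det_fin_two]
  have e0 : eqv p (.inl 0) = 0 := by simp [eqv]
  have e1 : eqv p (.inl 1) = Fin.last (p + 1) := by simp [eqv]
  have hne : (0 : Fin (p + 2)) ≠ Fin.last (p + 1) := by simp [Fin.ext_iff, Fin.last]
  simp only [Matrix.of_apply, e0, e1]
  rw [h0 0, hl (Fin.last (p + 1)), hl 0, h0 (Fin.last (p + 1)), if_pos rfl, if_pos rfl,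
    if_neg hne, if_neg (Ne.symm hne)]
  ring

theorem dj_aux (p : ℕ) (M : Matrix (Fin (p + 2)) (Fin (p + 2)) R) :
    M.det * (M.adjugate 0 0 * M.adjugate (Fin.last (p + 1)) (Fin.last (p + 1)) -
      M.adjugate 0 (Fin.last (p + 1)) * M.adjugate (Fin.last (p + 1)) 0) =
    M.det * (M.det * (M.submatrix (mid p) (mid p)).det) := by
  set l : Fin (p + 2) := Fin.last (p + 1) with hldef
  have hl0 : l ≠ 0 := by simp [hldef, Fin.ext_iff, Fin.last]
  set C : Matrix (Fin (p + 2)) (Fin (p + 2)) R := Matrix.of fun b c =>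
    if c = 0 then M.adjugate b 0 else if c = l then M.adjugate b l
    else if b = c then 1 else 0 with hCdef
  have hmid0 : ∀ c : Fin p, mid p c ≠ 0 := fun c => by simp [mid, Fin.ext_iff]
  have hmidl : ∀ c : Fin p, mid p c ≠ l := fun c => by
    simp [mid, hldef, Fin.ext_iff, Fin.last]; omega
  have hC : C.det = M.adjugate 0 0 * M.adjugate l l -
      M.adjugate 0 l * M.adjugate l 0 := by
    have h := det_C_struct p C (fun b c => by
      simp only [hCdef, Matrix.of_apply, if_neg (hmid0 c), if_neg (hmidl c)])
    rw [h]
    have h00 : C 0 0 = M.adjugate 0 0 := by simp [hCdef]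
    have hll : C l l = M.adjugate l l := by simp [hCdef, hl0]
    have h0l : C 0 l = M.adjugate 0 l := by simp [hCdef, hl0]
    have hl02 : C l 0 = M.adjugate l 0 := by simp [hCdef]
    rw [← hldef, h00, hll, h0l, hl02]
  have hMC : M * C = Matrix.of fun b c =>
      if c = 0 then (if b = 0 then M.det else 0)
      else if c = l then (if b = l then M.det else 0) else M b c := by
    ext b c
    rw [Matrix.mul_apply, Matrix.of_apply]
    by_cases hc0 : c = 0
    · subst hc0
      rw [if_pos rfl]
      have : ∀ x, M b x * C x 0 = M b x * M.adjugate x 0 := fun x => by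
        simp [hCdef]
      rw [Finset.sum_congr rfl (fun x _ => this x), ← Matrix.mul_apply, mul_adjugate]
      simp [Matrix.one_apply, eq_comm]
    · rw [if_neg hc0]
      by_cases hcl : c = l
      · subst hcl
        rw [if_pos rfl]
        have : ∀ x, M b x * C x l = M b x * M.adjugate x l := fun x => by
          simp [hCdef, hl0]
        rw [Finset.sum_congr rfl (fun x _ => this x), ← Matrix.mul_apply, mul_adjugate]
        simp [Matrix.one_apply, eq_comm]
      · rw [if_neg hcl]
        have : ∀ x, M b x * C x c = if x = c then M b x else 0 := fun x => by
          simp only [hCdef, Matrix.of_apply, if_neg hc0, if_neg hcl]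
          split_ifs <;> simp
        rw [Finset.sum_congr rfl (fun x _ => this x), Finset.sum_ite_eq' Finset.univ c (M b)]
        simp
  have hsub : (M * C).submatrix (mid p) (mid p) = M.submatrix (mid p) (mid p) := by
    ext a b
    simp only [Matrix.submatrix_apply, hMC, Matrix.of_apply, if_neg (hmid0 b),
      if_neg (hmidl b)]
  have hD : (M * C).det = M.det * M.det * ((M * C).submatrix (mid p) (mid p)).det := by
    refine det_D_struct p (M * C) M.det (fun b => ?_) (fun b => ?_)
    · simp [hMC]
    · rw [← hldef]
      simp [hMC, hl0]
  have := Matrix.det_mul M C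
  rw [hD, hsub, hC] at this
  linear_combination -this

theorem dj {S : Type*} [CommRing S] (p : ℕ) (M : Matrix (Fin (p + 2)) (Fin (p + 2)) S) :
    (M.submatrix (Fin.succAbove 0) (Fin.succAbove 0)).det *
        (M.submatrix (Fin.succAbove (Fin.last (p + 1)))
          (Fin.succAbove (Fin.last (p + 1)))).det -
      (M.submatrix (Fin.succAbove (Fin.last (p + 1))) (Fin.succAbove 0)).det *
        (M.submatrix (Fin.succAbove 0) (Fin.succAbove (Fin.last (p + 1)))).det
    = M.det * (M.submatrix (mid p) (mid p)).det := by
  have key :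
      M.adjugate 0 0 * M.adjugate (Fin.last (p + 1)) (Fin.last (p + 1)) -
        M.adjugate 0 (Fin.last (p + 1)) * M.adjugate (Fin.last (p + 1)) 0
      = M.det * (M.submatrix (mid p) (mid p)).det := by
    set A := M with hA
    let X := mvPolynomialX (Fin (p + 2)) (Fin (p + 2)) ℤ
    have h0 := dj_aux p X
    have hcanc := mul_left_cancel₀ (det_mvPolynomialX_ne_zero (Fin (p + 2)) ℤ) h0
    have := congrArg (MvPolynomial.aeval fun q : Fin (p + 2) × Fin (p + 2) => A q.1 q.2) hcanc
    set φ := MvPolynomial.aeval (R := ℤ) fun q : Fin (p + 2) × Fin (p + 2) => A q.1 q.2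
    have hX : φ.mapMatrix X = A := mvPolynomialX_mapMatrix_aeval ℤ A
    have hadj : ∀ i j : Fin (p + 2), φ (X.adjugate i j) = A.adjugate i j := by
      intro i j
      have h1 : φ.mapMatrix X.adjugate = (φ.mapMatrix X).adjugate :=
        AlgHom.map_adjugate φ X
      calc φ (X.adjugate i j) = (φ.mapMatrix X.adjugate) i j := rfl
        _ = (φ.mapMatrix X).adjugate i j := by rw [h1]
        _ = A.adjugate i j := by rw [hX]
    have hdet : φ X.det = A.det := by
      rw [AlgHom.map_det, hX]
    have hdet2 : φ (X.submatrix (mid p) (mid p)).det =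
        (A.submatrix (mid p) (mid p)).det := by
      rw [AlgHom.map_det]
      congr 1
      ext a b
      show φ (X (mid p a) (mid p b)) = A (mid p a) (mid p b)
      rw [← hX]
      rfl
    simpa only [_root_.map_sub, _root_.map_mul, hadj, hdet, hdet2] using this
  have h := key
  have e00 : M.adjugate 0 0 = (M.submatrix (Fin.succAbove 0) (Fin.succAbove 0)).det := by
    rw [adjugate_fin_succ_eq_det_submatrix]
    simp
  have ell : M.adjugate (Fin.last (p + 1)) (Fin.last (p + 1)) =
      (M.submatrix (Fin.succAbove (Fin.last (p + 1)))
        (Fin.succAbove (Fin.last (p + 1)))).det := by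
    rw [adjugate_fin_succ_eq_det_submatrix]
    have : (-1 : S) ^ (((Fin.last (p + 1)) : ℕ) + ((Fin.last (p + 1)) : ℕ)) = 1 :=
      Even.neg_one_pow ⟨p + 1, by simp [Fin.last]⟩
    rw [this, one_mul]
  have e0l : M.adjugate 0 (Fin.last (p + 1)) = (-1 : S) ^ (p + 1) *
      (M.submatrix (Fin.succAbove (Fin.last (p + 1))) (Fin.succAbove 0)).det := by
    rw [adjugate_fin_succ_eq_det_submatrix]
    norm_num [Fin.last]
  have el0 : M.adjugate (Fin.last (p + 1)) 0 = (-1 : S) ^ (p + 1) *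
      (M.submatrix (Fin.succAbove 0) (Fin.succAbove (Fin.last (p + 1)))).det := by
    rw [adjugate_fin_succ_eq_det_submatrix]
    norm_num [Fin.last]
  rw [e00, ell, e0l, el0] at h
  have hsq : ((-1 : S) ^ (p + 1)) * ((-1 : S) ^ (p + 1)) = 1 := by
    rw [← pow_add]
    exact Even.neg_one_pow ⟨p + 1, by ring⟩
  linear_combination h + ((M.submatrix (Fin.succAbove (Fin.last (p + 1)))
      (Fin.succAbove 0)).det *
    (M.submatrix (Fin.succAbove 0) (Fin.succAbove (Fin.last (p + 1)))).det) * hsq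

theorem det_of_unit_col {m : ℕ} (N : Matrix (Fin (m + 1)) (Fin (m + 1)) R)
    (r j : Fin (m + 1)) (h : ∀ a, a ≠ r → N a j = 0) :
    N.det = (-1) ^ (r.val + j.val) * N r j * (N.submatrix r.succAbove j.succAbove).det := by
  rw [det_succ_column N j, Fintype.sum_eq_single r (fun a ha => by rw [h a ha]; ring)]

theorem sv {m : ℕ} (r : Fin (m + 1)) (a : Fin m) :
    (r.succAbove a).val = if a.val < r.val then a.val else a.val + 1 := by
  rw [Fin.succAbove]
  split_ifs with h h2 h3 <;>
    simp_all [Fin.lt_def, Fin.coe_castSucc, Fin.val_succ]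

theorem midv (p : ℕ) (j : Fin p) : (mid p j).val = j.val + 1 := congrArg id rfl

theorem vlast (n : ℕ) : (Fin.last n).val = n := congrArg id rfl

theorem vzero (n : ℕ) : (0 : Fin (n + 1)).val = 0 := congrArg id rfl

theorem det_eq_of_entries {α : Type*} [CommRing α] {p : ℕ} (M N : Matrix (Fin p) (Fin p) α)
    (h : ∀ a b, M a b = N a b) : M.det = N.det := by
  congr 1
  ext a b
  exact h a b

end DJaux



set_option maxHeartbeats 1000000 in
/-- The identity behind the mutation at `h_{s,n-i}` after the sequence
`B_{s-k} → ⋯ → B_{s-1}`: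
`det Y^{[n−i,n]}_{[s,s+i]} · det Y^{[n−i−1,n]}_{{s−k−1}∪[s+1,s+i+1]}
 = det Y^{[n−i−1,n]}_{[s,s+i+1]} · det Y^{[n−i,n]}_{{s−k−1}∪[s+1,s+i]}
 + det Y^{[n−i−1,n]}_{{s−k−1}∪[s,s+i]} · det Y^{[n−i,n]}_{[s+1,s+i+1]}`. -/
theorem statement3 {F : Type*} [Field F] {n : ℕ} (Y : Matrix (Fin n) (Fin n) F)
    (s k i : ℕ) (hs1 : 2 ≤ s) (hs2 : s ≤ n - 1) (hk : k ≤ s - 2) (hi : i ≤ n - s - 1) :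
    subdet Y (i + 1) (fun t => s + t) (fun t => n - i + t) *
      subdet Y (i + 2) (fun t => if t = 0 then s - k - 1 else s + t) (fun t => n - i - 1 + t)
    = subdet Y (i + 2) (fun t => s + t) (fun t => n - i - 1 + t) *
        subdet Y (i + 1) (fun t => if t = 0 then s - k - 1 else s + t) (fun t => n - i + t)
      + subdet Y (i + 2) (fun t => if t = 0 then s - k - 1 else s + t - 1)
          (fun t => n - i - 1 + t) *
        subdet Y (i + 1) (fun t => s + 1 + t) (fun t => n - i + t) := by
  have hn : s + i + 1 ≤ n := by omega
  set L1 := subdet Y (i + 1) (fun t => s + t) (fun t => n - i + t) with hL1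
  set L2 := subdet Y (i + 2) (fun t => if t = 0 then s - k - 1 else s + t)
      (fun t => n - i - 1 + t) with hL2
  set R1 := subdet Y (i + 2) (fun t => s + t) (fun t => n - i - 1 + t) with hR1
  set R2 := subdet Y (i + 1) (fun t => if t = 0 then s - k - 1 else s + t)
      (fun t => n - i + t) with hR2
  set R3 := subdet Y (i + 2) (fun t => if t = 0 then s - k - 1 else s + t - 1)
      (fun t => n - i - 1 + t) with hR3
  set R4 := subdet Y (i + 1) (fun t => s + 1 + t) (fun t => n - i + t) with hR4
  let Q : Matrix (Fin (i + 1 + 2)) (Fin (i + 1 + 2)) F := Matrix.of fun a b =>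
    if b.val = i + 2 then (if a.val = 1 then (1 : F) else 0)
    else ent Y (if a.val = 0 then s - k - 1 else s + a.val - 1) (n - i - 1 + b.val)
  have hQval : ∀ a b : Fin (i + 1 + 2), Q a b =
      if b.val = i + 2 then (if a.val = 1 then (1 : F) else 0)
      else ent Y (if a.val = 0 then s - k - 1 else s + a.val - 1) (n - i - 1 + b.val) :=
    fun a b => rfl
  have hdj := DJaux.dj (i + 1) Q
  have one3 : ((⟨1, by omega⟩ : Fin (i + 1 + 2))).val = 1 := rfl
  have one2 : ((⟨1, by omega⟩ : Fin (i + 1 + 1))).val = 1 := rfl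
  -- the inner minor
  have hInner : (Q.submatrix (DJaux.mid (i + 1)) (DJaux.mid (i + 1))).det = L1 := by
    rw [hL1]
    unfold subdet
    refine DJaux.det_eq_of_entries _ _ (fun a b => ?_)
    have ha := a.isLt
    have hb := b.isLt
    simp only [Matrix.submatrix_apply, hQval, Matrix.of_apply, DJaux.midv]
    rw [if_neg (by omega : ¬ (b.val + 1 = i + 2)), if_neg (by omega : ¬ (a.val + 1 = 0))]
    congr 1 <;> omega
  -- the full determinant
  have hQdet : Q.det = (-1 : F) ^ (i + 1) * L2 := by
    have hu := DJaux.det_of_unit_col Q ⟨1, by omega⟩ (Fin.last (i + 2)) (fun a ha => by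
      have ha2 : a.val ≠ 1 := fun h => ha (Fin.ext (h.trans one3.symm))
      rw [hQval, if_pos (by simp), if_neg ha2])
    rw [hu, hQval, if_pos (by simp), if_pos one3, mul_one, one3, Fin.val_last,
      show (-1 : F) ^ (1 + (i + 2)) = (-1 : F) ^ (i + 1) by rw [show 1 + (i + 2) = (i + 1) + 2 by omega, pow_add]; ring]
    congr 1
    rw [hL2]
    unfold subdet
    refine DJaux.det_eq_of_entries _ _ (fun a b => ?_)
    have ha := a.isLt
    have hb := b.isLt
    simp only [Matrix.submatrix_apply, hQval, Matrix.of_apply, DJaux.sv, one3, Fin.val_last]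
    rw [if_pos (by omega : b.val < i + 2), if_neg (by omega : ¬ (b.val = i + 2))]
    by_cases h0 : a.val = 0
    · rw [if_pos (by omega : a.val < 1), if_pos h0, if_pos h0]
    · rw [if_neg (by omega : ¬ (a.val < 1)), if_neg (by omega : ¬ (a.val + 1 = 0)),
        if_neg h0]
      exact congrArg (fun x => ent Y x (n - i - 1 + b.val)) (by omega)
  -- corner: delete row 0 and column last
  have h0l : (Q.submatrix (Fin.succAbove 0)
      (Fin.succAbove (Fin.last (i + 1 + 1)))).det = R1 := by
    rw [hR1]
    unfold subdet
    refine DJaux.det_eq_of_entries _ _ (fun a b => ?_)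
    have ha := a.isLt
    have hb := b.isLt
    simp only [Matrix.submatrix_apply, hQval, Matrix.of_apply, DJaux.sv, DJaux.vlast,
      DJaux.vzero]
    rw [if_neg (by omega : ¬ (a.val < 0)), if_pos (by omega : b.val < i + 2),
      if_neg (by omega : ¬ (b.val = i + 2)), if_neg (by omega : ¬ (a.val + 1 = 0))]
    congr 1 <;> omega
  -- corner: delete row last and column last
  have hll : (Q.submatrix (Fin.succAbove (Fin.last (i + 1 + 1)))
      (Fin.succAbove (Fin.last (i + 1 + 1)))).det = R3 := by
    rw [hR3]
    unfold subdet
    refine DJaux.det_eq_of_entries _ _ (fun a b => ?_)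
    have ha := a.isLt
    have hb := b.isLt
    simp only [Matrix.submatrix_apply, hQval, Matrix.of_apply, DJaux.sv, Fin.val_last]
    rw [if_pos (by omega : a.val < i + 2), if_pos (by omega : b.val < i + 2),
      if_neg (by omega : ¬ (b.val = i + 2))]
  -- corner: delete row 0 and column 0
  have h00 : (Q.submatrix (Fin.succAbove 0) (Fin.succAbove 0)).det
      = (-1 : F) ^ (i + 1) * R4 := by
    set N := Q.submatrix (Fin.succAbove (0 : Fin (i + 1 + 2))) (Fin.succAbove 0) with hN
    have hNval : ∀ a b : Fin (i + 1 + 1), N a b =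
        Q (Fin.succAbove 0 a) (Fin.succAbove 0 b) := fun a b => rfl
    have hrow : ∀ a : Fin (i + 1 + 1), (Fin.succAbove (0 : Fin (i + 1 + 2)) a).val
        = a.val + 1 := fun a => by
      rw [DJaux.sv, Fin.val_zero, if_neg (by omega)]
    have hu := DJaux.det_of_unit_col N 0 (Fin.last (i + 1)) (fun a ha => by
      have ha2 : a.val ≠ 0 := fun h => ha (Fin.ext h)
      rw [hNval, hQval, hrow, hrow, Fin.val_last, if_pos (by omega),
        if_neg (by omega : ¬ (a.val + 1 = 1))])
    rw [hu, hNval, hQval, hrow, hrow, Fin.val_last, Fin.val_zero, if_pos (by omega),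
      if_pos (by omega : (0 : ℕ) + 1 = 1), mul_one, Nat.zero_add]
    congr 1
    rw [hR4]
    unfold subdet
    refine DJaux.det_eq_of_entries _ _ (fun a b => ?_)
    have ha := a.isLt
    have hb := b.isLt
    simp only [Matrix.submatrix_apply, hNval, hQval, Matrix.of_apply, hrow, DJaux.sv,
      DJaux.vlast, DJaux.vzero]
    rw [if_pos (by omega : b.val < i + 1), if_neg (by omega : ¬ (b.val + 1 = i + 2)),
      if_neg (by omega : ¬ (a.val < 0)), if_neg (by omega : ¬ (a.val + 1 + 1 = 0))]
    congr 1 <;> omega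
  -- corner: delete row last and column 0
  have hl0 : (Q.submatrix (Fin.succAbove (Fin.last (i + 1 + 1))) (Fin.succAbove 0)).det
      = (-1 : F) ^ (i + 2) * R2 := by
    set N := Q.submatrix (Fin.succAbove (Fin.last (i + 1 + 1)))
      (Fin.succAbove (0 : Fin (i + 1 + 2))) with hN
    have hNval : ∀ a b : Fin (i + 1 + 1), N a b =
        Q (Fin.succAbove (Fin.last (i + 1 + 1)) a) (Fin.succAbove 0 b) := fun a b => rfl
    have hrow : ∀ a : Fin (i + 1 + 1),
        (Fin.succAbove (Fin.last (i + 1 + 1)) a).val = a.val := fun a => by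
      rw [DJaux.sv, Fin.val_last, if_pos a.isLt]
    have hcol : ∀ b : Fin (i + 1 + 1), (Fin.succAbove (0 : Fin (i + 1 + 2)) b).val
        = b.val + 1 := fun b => by
      rw [DJaux.sv, Fin.val_zero, if_neg (by omega)]
    have hu := DJaux.det_of_unit_col N ⟨1, by omega⟩ (Fin.last (i + 1)) (fun a ha => by
      have ha2 : a.val ≠ 1 := fun h => ha (Fin.ext (h.trans one2.symm))
      rw [hNval, hQval, hrow, hcol, Fin.val_last, if_pos (by omega), if_neg ha2])
    rw [hu, hNval, hQval, hrow, hcol, Fin.val_last, if_pos (by omega), one2,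
      if_pos rfl, mul_one,
      show (-1 : F) ^ (1 + (i + 1)) = (-1 : F) ^ (i + 2) by rw [show 1 + (i + 1) = i + 2 by omega]]
    congr 1
    rw [hR2]
    unfold subdet
    refine DJaux.det_eq_of_entries _ _ (fun a b => ?_)
    have ha := a.isLt
    have hb := b.isLt
    simp only [Matrix.submatrix_apply, hNval, hQval, Matrix.of_apply, hrow, hcol, DJaux.sv,
      one2, Fin.val_last]
    rw [if_pos (by omega : b.val < i + 1),
      if_neg (by omega : ¬ (b.val + 1 = i + 2))]
    by_cases h0 : a.val = 0
    · rw [if_pos (by omega : a.val < 1), if_pos h0, if_pos h0]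
      exact congrArg (ent Y (s - k - 1)) (by omega)
    · rw [if_neg (by omega : ¬ (a.val < 1)), if_neg (by omega : ¬ (a.val + 1 = 0)),
        if_neg h0]
      congr 1 <;> omega
  rw [hInner, hQdet, h00, hll, hl0, h0l] at hdj
  have hsq : ((-1 : F) ^ (i + 1)) * ((-1 : F) ^ (i + 1)) = 1 := by
    rw [← pow_add]
    exact Even.neg_one_pow ⟨i + 1, by ring⟩
  have hneg : (-1 : F) ^ (i + 2) = -((-1 : F) ^ (i + 1)) := by
    rw [pow_succ]
    ring
  rw [hneg] at hdj
  linear_combination (-((-1 : F) ^ (i + 1))) * hdj + (R1 * R2 + R3 * R4 - L1 * L2) * hsq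
end

section
/- Let X and Y be n×n matrices over a field and let s, k, i be integers with 2 ≤ s ≤ n−1, 0 ≤ k ≤ s−2 and 1 ≤ i ≤ n−s. Then det [X^{[n−i+1,n]} | Y^{[s+i,n]}]_{[s,n]} · det [X^{[n−i,n]} | Y^{[s+i+1,n]}]_{{s−k−1}∪[s+1,n]} = det [X^{[n−i,n]} | Y^{[s+i,n]}]_{{s−k−1}∪[s,n]} · det [X^{[n−i+1,n]} | Y^{[s+i+1,n]}]_{[s+1,n]} + det [X^{[n−i,n]} | Y^{[s+i+1,n]}]_{[s,n]} · det [X^{[n−i+1,n]} | Y^{[s+i,n]}]_{{s−k−1}∪[s+1,n]}. (For i = n−s the interval [s+i+1,n] is empty, and the corresponding juxtapositions consist of the X-columns only.) -/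
/-- The determinant of the `p × p` matrix whose rows are the (1-based) indices
`row 0, …, row (p-1)` and whose columns are: the columns `colX 0, …, colX (px-1)` of `X`
followed by the columns `colY 0, …, colY (p-px-1)` of `Y`. -/
noncomputable def detXY {F : Type*} [Field F] {n : ℕ} (X Y : Matrix (Fin n) (Fin n) F)
    (p px : ℕ) (row colX colY : ℕ → ℕ) : F :=
  (Matrix.of fun a b : Fin p =>
    if b.val < px then ent X (row a.val) (colX b.val)
    else ent Y (row a.val) (colY (b.val - px))).det

lemma val_succAbove {M : ℕ} (p : Fin (M+1)) (a : Fin M) :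
    ((p.succAbove a : Fin (M+1)) : ℕ) = if (a:ℕ) < (p:ℕ) then (a:ℕ) else (a:ℕ)+1 := by
  rw [Fin.succAbove]
  split_ifs with h1 h2 h2
  · rfl
  · exact absurd (by simpa [Fin.lt_def] using h1) h2
  · exact absurd (Fin.lt_def.mpr (by simpa using h2)) h1
  · rfl

section JF
open Matrix Finset
variable {L : Type*} [Field L] {N : ℕ}

theorem jacobiField (A : Matrix (Fin (N+2)) (Fin (N+2)) L) (e : Fin (N+1))
    (hA : A.det ≠ 0) :
    A.det * (A.submatrix (fun j : Fin N => j.succ.succ) (fun j => (e.succAbove j).succ)).det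
      = (A.submatrix Fin.succ Fin.succ).det *
          (A.submatrix ((1 : Fin (N+2)).succAbove) (e.succ.succAbove)).det
        - (A.submatrix Fin.succ (e.succ.succAbove)).det *
          (A.submatrix ((1 : Fin (N+2)).succAbove) Fin.succ).det := by
  classical
  set d : Fin (N+2) := e.succ with hd
  have hd0 : d ≠ 0 := Fin.succ_ne_zero e
  set u : Fin (N+2) → L := fun x => A.adjugate x 0 with hu
  set v : Fin (N+2) → L := fun x => A.adjugate x 1 with hv
  set C : Matrix (Fin (N+2)) (Fin (N+2)) L :=
    Matrix.of (fun x y => if y = 0 then u x else if y = d then v x else if x = y then 1 else 0)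
    with hC
  set B : Matrix (Fin (N+2)) (Fin (N+2)) L := Matrix.of (fun x y =>
      if y = 0 then (if x = 0 then A.det else 0)
      else if y = d then (if x = 1 then A.det else 0) else A x y) with hB
  -- A * C = B
  have hAC : A * C = B := by
    ext x y
    rw [Matrix.mul_apply]
    by_cases h0 : y = 0
    · subst h0
      have h1 : ∀ k, A x k * C k 0 = A x k * A.adjugate k 0 := fun k => by
        simp [hC, hu]
      calc ∑ k, A x k * C k 0 = ∑ k, A x k * A.adjugate k 0 :=
            Finset.sum_congr rfl fun k _ => h1 k
        _ = (A * A.adjugate) x 0 := (Matrix.mul_apply).symm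
        _ = (A.det • (1 : Matrix (Fin (N+2)) (Fin (N+2)) L)) x 0 := by rw [Matrix.mul_adjugate]
        _ = _ := by simp [Matrix.one_apply, hB]
    · by_cases hdy : y = d
      · subst hdy
        have h1 : ∀ k, A x k * C k d = A x k * A.adjugate k 1 := fun k => by
          simp [hC, hv, hd0]
        calc ∑ k, A x k * C k d = ∑ k, A x k * A.adjugate k 1 :=
              Finset.sum_congr rfl fun k _ => h1 k
          _ = (A * A.adjugate) x 1 := (Matrix.mul_apply).symm
          _ = (A.det • (1 : Matrix (Fin (N+2)) (Fin (N+2)) L)) x 1 := by rw [Matrix.mul_adjugate]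
          _ = _ := by simp [Matrix.one_apply, hd0, hB]
      · have h1 : ∀ k, A x k * C k y = A x k * (if k = y then 1 else 0) := fun k => by
          simp [hC, h0, hdy]
        calc ∑ k, A x k * C k y = ∑ k, A x k * (if k = y then 1 else 0) :=
              Finset.sum_congr rfl fun k _ => h1 k
          _ = A x y := by simp
          _ = _ := by simp [h0, hdy, hB]
  -- determinant of B by double cofactor expansion
  have h1 : B.det = A.det * (B.submatrix Fin.succ Fin.succ).det := by
    rw [Matrix.det_succ_column_zero]
    rw [Finset.sum_eq_single 0]
    · simp [hB, Fin.succAbove_zero]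
    · intro b _ hb
      simp [hB, hb]
    · simp
  set M1 : Matrix (Fin (N+1)) (Fin (N+1)) L := B.submatrix Fin.succ Fin.succ with hM1
  have h2 : M1.det = (-1)^(e:ℕ) * A.det * (M1.submatrix Fin.succ e.succAbove).det := by
    rw [Matrix.det_succ_column M1 e]
    rw [Finset.sum_eq_single 0]
    · have : M1 0 e = A.det := by
        simp [hM1, hB, hd, Fin.succ_ne_zero, Fin.succ_zero_eq_one]
      rw [this]
      simp [Fin.succAbove_zero, mul_assoc]
    · intro b _ hb
      have : M1 b e = 0 := by
        have hb1 : b.succ ≠ 1 := by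
          rw [← Fin.succ_zero_eq_one]
          exact fun h => hb (Fin.succ_injective _ h)
        simp [hM1, hB, hd, Fin.succ_ne_zero, hb1]
      rw [this]; ring
    · simp
  have h3 : M1.submatrix Fin.succ e.succAbove
      = A.submatrix (fun j : Fin N => j.succ.succ) (fun j => (e.succAbove j).succ) := by
    ext x y
    have hy0 : ((e.succAbove y).succ : Fin (N+2)) ≠ 0 := Fin.succ_ne_zero _
    have hyd : ((e.succAbove y).succ : Fin (N+2)) ≠ d := by
      rw [hd]
      exact fun h => Fin.succAbove_ne e y (Fin.succ_injective _ h)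
    simp [hM1, hB, hy0, hyd]
  -- determinant of C
  set g : Fin 2 ⊕ Fin N → Fin (N+2) :=
    Sum.elim ![0, d] (fun j => (e.succAbove j).succ) with hg
  have hne : ∀ j : Fin N, (e.succAbove j).succ ≠ 0 ∧ (e.succAbove j).succ ≠ d := fun j =>
    ⟨Fin.succ_ne_zero _, fun h => Fin.succAbove_ne e j (Fin.succ_injective _ h)⟩
  have hg_inj : Function.Injective g := by
    rintro (a | a) (b | b) hab
    · fin_cases a <;> fin_cases b
      · rfl
      · exact absurd (show (0:Fin (N+2)) = d by simpa [hg] using hab).symm hd0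
      · exact absurd (show d = (0:Fin (N+2)) by simpa [hg] using hab) hd0
      · rfl
    · exfalso
      fin_cases a <;>
        simp only [hg, Sum.elim_inl, Sum.elim_inr, Matrix.cons_val_zero, Matrix.cons_val_one,
          Matrix.head_cons] at hab
      · exact (hne b).1 hab.symm
      · exact (hne b).2 hab.symm
    · exfalso
      fin_cases b <;>
        simp only [hg, Sum.elim_inl, Sum.elim_inr, Matrix.cons_val_zero, Matrix.cons_val_one,
          Matrix.head_cons] at hab
      · exact (hne a).1 hab
      · exact (hne a).2 hab
    · simp only [hg, Sum.elim_inr] at hab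
      exact congrArg Sum.inr (Fin.succAbove_right_injective (p := e) (Fin.succ_injective _ hab))
  have hg_bij : Function.Bijective g :=
    (Fintype.bijective_iff_injective_and_card g).mpr ⟨hg_inj, by simp [Nat.add_comm]⟩
  set σc : Fin 2 ⊕ Fin N ≃ Fin (N+2) := Equiv.ofBijective g hg_bij with hσc
  have hblock : C.submatrix σc σc =
      Matrix.fromBlocks !![u 0, v 0; u d, v d] 0
        (Matrix.of fun (j : Fin N) (b : Fin 2) => C ((e.succAbove j).succ) (![0, d] b)) 1 := by
    ext (a | a) (b | b)
    · have : σc (Sum.inl a) = ![0, d] a := rfl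
      fin_cases a <;> fin_cases b <;>
        simp [hC, hσc, Equiv.ofBijective_apply, hg, hd0, hd0.symm, Matrix.one_apply]
    · have hh1 : σc (Sum.inl a) = ![0, d] a := rfl
      have hh2 : σc (Sum.inr b) = (e.succAbove b).succ := rfl
      rw [Matrix.submatrix_apply, hh1, hh2]
      fin_cases a <;>
        simp [hC, (hne b).1, (hne b).2, Ne.symm (hne b).1, Ne.symm (hne b).2, Matrix.fromBlocks]
    · rfl
    · have hh2 : ∀ j, σc (Sum.inr j) = (e.succAbove j).succ := fun _ => rfl
      rw [Matrix.submatrix_apply, hh2, hh2]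
      have : ((e.succAbove a).succ = (e.succAbove b).succ) ↔ a = b := by
        constructor
        · exact fun h => Fin.succAbove_right_injective (p := e) (Fin.succ_injective _ h)
        · rintro rfl; rfl
      simp [hC, (hne b).1, (hne b).2, Ne.symm (hne b).1, Ne.symm (hne b).2, Matrix.one_apply,
        this, Matrix.fromBlocks]
  have hdetC : C.det = u 0 * v d - v 0 * u d := by
    rw [← Matrix.det_submatrix_equiv_self σc C, hblock, Matrix.det_fromBlocks_zero₁₂,
      Matrix.det_one, mul_one, Matrix.det_fin_two_of]
  -- adjugate entries as minors
  set ε : L := (-1)^(e:ℕ) with hε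
  have hε0 : ε ≠ 0 := pow_ne_zero _ (by norm_num)
  have hu0 : u 0 = (A.submatrix Fin.succ Fin.succ).det := by
    show A.adjugate 0 0 = _
    rw [Matrix.adjugate_fin_succ_eq_det_submatrix]
    simp [Fin.succAbove_zero]
  have hvd : v d = ε * (A.submatrix ((1 : Fin (N+2)).succAbove) (d.succAbove)).det := by
    show A.adjugate d 1 = _
    rw [Matrix.adjugate_fin_succ_eq_det_submatrix]
    have : ((1 : Fin (N+2)) : ℕ) + (d : ℕ) = (e : ℕ) + 2 := by
      simp [hd, Fin.val_succ]; omega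
    rw [this, hε, pow_add]
    norm_num
  have hv0 : v 0 = -(A.submatrix ((1 : Fin (N+2)).succAbove) Fin.succ).det := by
    show A.adjugate 0 1 = _
    rw [Matrix.adjugate_fin_succ_eq_det_submatrix]
    have : ((1 : Fin (N+2)) : ℕ) + ((0 : Fin (N+2)) : ℕ) = 1 := by simp
    rw [this, Fin.succAbove_zero]
    ring
  have hud : u d = -(ε * (A.submatrix Fin.succ (d.succAbove)).det) := by
    show A.adjugate d 0 = _
    rw [Matrix.adjugate_fin_succ_eq_det_submatrix]
    have : ((0 : Fin (N+2)) : ℕ) + (d : ℕ) = (e : ℕ) + 1 := by simp [hd, Fin.val_succ]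
    rw [this, Fin.succAbove_zero, hε, pow_add]
    ring
  -- assemble
  have E : A.det * C.det = B.det := by rw [← Matrix.det_mul, hAC]
  rw [hdetC, h1, h2, h3, hu0, hvd, hv0, hud] at E
  apply mul_left_cancel₀ hε0
  apply mul_left_cancel₀ hA
  linear_combination -E

end JF

section JR
open Matrix

theorem jacobiRing {R : Type*} [CommRing R] {N : ℕ}
    (A : Matrix (Fin (N+2)) (Fin (N+2)) R) (e : Fin (N+1)) :
    A.det * (A.submatrix (fun j : Fin N => j.succ.succ) (fun j => (e.succAbove j).succ)).det
      = (A.submatrix Fin.succ Fin.succ).det *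
          (A.submatrix ((1 : Fin (N+2)).succAbove) (e.succ.succAbove)).det
        - (A.submatrix Fin.succ (e.succ.succAbove)).det *
          (A.submatrix ((1 : Fin (N+2)).succAbove) Fin.succ).det := by
  classical
  have hinj : Function.Injective
      (algebraMap (MvPolynomial (Fin (N+2) × Fin (N+2)) ℤ)
        (FractionRing (MvPolynomial (Fin (N+2) × Fin (N+2)) ℤ))) :=
    IsFractionRing.injective _ _
  have EK : (Matrix.mvPolynomialX (Fin (N+2)) (Fin (N+2)) ℤ).det *
        ((Matrix.mvPolynomialX (Fin (N+2)) (Fin (N+2)) ℤ).submatrix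
          (fun j : Fin N => j.succ.succ) (fun j => (e.succAbove j).succ)).det
      = ((Matrix.mvPolynomialX (Fin (N+2)) (Fin (N+2)) ℤ).submatrix Fin.succ Fin.succ).det *
          ((Matrix.mvPolynomialX (Fin (N+2)) (Fin (N+2)) ℤ).submatrix
            ((1 : Fin (N+2)).succAbove) (e.succ.succAbove)).det
        - ((Matrix.mvPolynomialX (Fin (N+2)) (Fin (N+2)) ℤ).submatrix
            Fin.succ (e.succ.succAbove)).det *
          ((Matrix.mvPolynomialX (Fin (N+2)) (Fin (N+2)) ℤ).submatrix
            ((1 : Fin (N+2)).succAbove) Fin.succ).det := by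
    apply hinj
    have hdet : ((algebraMap (MvPolynomial (Fin (N+2) × Fin (N+2)) ℤ)
        (FractionRing (MvPolynomial (Fin (N+2) × Fin (N+2)) ℤ))).mapMatrix
          (Matrix.mvPolynomialX (Fin (N+2)) (Fin (N+2)) ℤ)).det ≠ 0 := by
      rw [← RingHom.map_det]
      intro h
      exact Matrix.det_mvPolynomialX_ne_zero (m := Fin (N+2)) (R := ℤ) (hinj (by simpa using h))
    have hJ := jacobiField ((algebraMap (MvPolynomial (Fin (N+2) × Fin (N+2)) ℤ)
        (FractionRing (MvPolynomial (Fin (N+2) × Fin (N+2)) ℤ))).mapMatrix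
          (Matrix.mvPolynomialX (Fin (N+2)) (Fin (N+2)) ℤ)) e hdet
    simp only [_root_.map_mul, _root_.map_sub, RingHom.map_det, RingHom.mapMatrix_apply,
      ← Matrix.submatrix_map] at hJ ⊢
    exact hJ
  have final := congrArg (MvPolynomial.aeval (R := ℤ) (S₁ := R)
      (fun p : (Fin (N+2)) × (Fin (N+2)) => A p.1 p.2)) EK
  have hXA : (Matrix.mvPolynomialX (Fin (N+2)) (Fin (N+2)) ℤ).map
      (MvPolynomial.aeval (R := ℤ) (S₁ := R)
        (fun p : (Fin (N+2)) × (Fin (N+2)) => A p.1 p.2)) = A := by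
    rw [← AlgHom.mapMatrix_apply]
    exact Matrix.mvPolynomialX_mapMatrix_aeval ℤ A
  simp only [_root_.map_mul, _root_.map_sub, AlgHom.map_det, AlgHom.mapMatrix_apply,
    ← Matrix.submatrix_map, hXA] at final
  exact final

end JR

/-- The identity behind the mutation at `f_{i,n-s-i+1}` after the sequence
`B_{s-k} → ⋯ → B_{s-1}`:
`det [X^{[n−i+1,n]} | Y^{[s+i,n]}]_{[s,n]} · det [X^{[n−i,n]} | Y^{[s+i+1,n]}]_{{s−k−1}∪[s+1,n]}
 = det [X^{[n−i,n]} | Y^{[s+i,n]}]_{{s−k−1}∪[s,n]} · det [X^{[n−i+1,n]} | Y^{[s+i+1,n]}]_{[s+1,n]}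
 + det [X^{[n−i,n]} | Y^{[s+i+1,n]}]_{[s,n]} · det [X^{[n−i+1,n]} | Y^{[s+i,n]}]_{{s−k−1}∪[s+1,n]}`. -/
theorem statement5 {F : Type*} [Field F] {n : ℕ} (X Y : Matrix (Fin n) (Fin n) F)
    (s k i : ℕ) (hs1 : 2 ≤ s) (hs2 : s ≤ n - 1) (hk : k ≤ s - 2)
    (hi1 : 1 ≤ i) (hi2 : i ≤ n - s) :
    detXY X Y (n - s + 1) i (fun t => s + t) (fun t => n - i + 1 + t) (fun t => s + i + t) *
      detXY X Y (n - s + 1) (i + 1) (fun t => if t = 0 then s - k - 1 else s + t)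
        (fun t => n - i + t) (fun t => s + i + 1 + t)
    = detXY X Y (n - s + 2) (i + 1) (fun t => if t = 0 then s - k - 1 else s + t - 1)
          (fun t => n - i + t) (fun t => s + i + t) *
        detXY X Y (n - s) i (fun t => s + 1 + t) (fun t => n - i + 1 + t)
          (fun t => s + i + 1 + t)
      + detXY X Y (n - s + 1) (i + 1) (fun t => s + t) (fun t => n - i + t)
          (fun t => s + i + 1 + t) *
        detXY X Y (n - s + 1) i (fun t => if t = 0 then s - k - 1 else s + t)
          (fun t => n - i + 1 + t) (fun t => s + i + t) := by
  classical
  have hN1 : 1 ≤ n - s := le_trans hi1 hi2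
  set N := n - s with hNdef
  have hn : n = s + N := by omega
  set e : Fin (N+1) := ⟨i, by omega⟩ with he
  set M : Matrix (Fin (N+2)) (Fin (N+2)) F := Matrix.of (fun a b : Fin (N+2) =>
    if (b : ℕ) < i + 1 then
      ent X (if (a:ℕ) = 0 then s - k - 1 else s + (a:ℕ) - 1) (n - i + (b:ℕ))
    else
      ent Y (if (a:ℕ) = 0 then s - k - 1 else s + (a:ℕ) - 1) (s + i + ((b:ℕ) - (i+1))))
    with hM
  have hee : ((e : Fin (N+1)) : ℕ) = i := rfl
  have hvalesucc : ((e.succ : Fin (N+2)) : ℕ) = i + 1 := rfl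
  have hval1 : ((1 : Fin (N+2)) : ℕ) = 1 := rfl
  have hsAe : ∀ b : Fin (N+1), ((e.succ.succAbove b : Fin (N+2)) : ℕ)
      = if (b:ℕ) < i+1 then (b:ℕ) else (b:ℕ)+1 := fun b => by
    rw [val_succAbove, hvalesucc]
  have hsA1 : ∀ a : Fin (N+1), (((1:Fin (N+2)).succAbove a : Fin (N+2)) : ℕ)
      = if (a:ℕ) < 1 then (a:ℕ) else (a:ℕ)+1 := fun a => by
    rw [val_succAbove, hval1]
  have hsAeS : ∀ b : Fin N, ((e.succAbove b : Fin (N+1)) : ℕ)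
      = if (b:ℕ) < i then (b:ℕ) else (b:ℕ)+1 := fun b => by
    rw [val_succAbove, hee]
  have hD3 : detXY X Y (N+2) (i+1) (fun t => if t = 0 then s - k - 1 else s + t - 1)
      (fun t => n - i + t) (fun t => s + i + t) = M.det := rfl
  have hD1 : detXY X Y (N+1) i (fun t => s + t) (fun t => n - i + 1 + t) (fun t => s + i + t)
      = (M.submatrix Fin.succ Fin.succ).det := by
    unfold detXY
    congr 1
    ext a b
    simp only [Matrix.of_apply, Matrix.submatrix_apply, hM, Fin.val_succ, hsAe, hsA1, hsAeS]
    have hbv := b.isLt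
    have hav := a.isLt
    split_ifs <;>
      first
        | exact congrArg₂ (ent X) (by omega) (by omega)
        | exact congrArg₂ (ent Y) (by omega) (by omega)
        | (exfalso; omega)
        | exact (by assumption : False).elim
  have hD2 : detXY X Y (N+1) (i+1) (fun t => if t = 0 then s - k - 1 else s + t)
      (fun t => n - i + t) (fun t => s + i + 1 + t)
      = (M.submatrix ((1 : Fin (N+2)).succAbove) (e.succ.succAbove)).det := by
    unfold detXY
    congr 1
    ext a b
    simp only [Matrix.of_apply, Matrix.submatrix_apply, hM, Fin.val_succ, hsAe, hsA1, hsAeS]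
    have hbv := b.isLt
    have hav := a.isLt
    split_ifs <;>
      first
        | exact congrArg₂ (ent X) (by omega) (by omega)
        | exact congrArg₂ (ent Y) (by omega) (by omega)
        | (exfalso; omega)
        | exact (by assumption : False).elim
  have hD4 : detXY X Y N i (fun t => s + 1 + t) (fun t => n - i + 1 + t)
      (fun t => s + i + 1 + t)
      = (M.submatrix (fun j : Fin N => j.succ.succ) (fun j => (e.succAbove j).succ)).det := by
    unfold detXY
    congr 1
    ext a b
    simp only [Matrix.of_apply, Matrix.submatrix_apply, hM, Fin.val_succ, hsAe, hsA1, hsAeS]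
    have hbv := b.isLt
    have hav := a.isLt
    split_ifs <;>
      first
        | exact congrArg₂ (ent X) (by omega) (by omega)
        | exact congrArg₂ (ent Y) (by omega) (by omega)
        | (exfalso; omega)
        | exact (by assumption : False).elim
  have hD5 : detXY X Y (N+1) (i+1) (fun t => s + t) (fun t => n - i + t)
      (fun t => s + i + 1 + t)
      = (M.submatrix Fin.succ (e.succ.succAbove)).det := by
    unfold detXY
    congr 1
    ext a b
    simp only [Matrix.of_apply, Matrix.submatrix_apply, hM, Fin.val_succ, hsAe, hsA1, hsAeS]
    have hbv := b.isLt
    have hav := a.isLt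
    split_ifs <;>
      first
        | exact congrArg₂ (ent X) (by omega) (by omega)
        | exact congrArg₂ (ent Y) (by omega) (by omega)
        | (exfalso; omega)
        | exact (by assumption : False).elim
  have hD6 : detXY X Y (N+1) i (fun t => if t = 0 then s - k - 1 else s + t)
      (fun t => n - i + 1 + t) (fun t => s + i + t)
      = (M.submatrix ((1 : Fin (N+2)).succAbove) Fin.succ).det := by
    unfold detXY
    congr 1
    ext a b
    simp only [Matrix.of_apply, Matrix.submatrix_apply, hM, Fin.val_succ, hsAe, hsA1, hsAeS]
    have hbv := b.isLt
    have hav := a.isLt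
    split_ifs <;>
      first
        | exact congrArg₂ (ent X) (by omega) (by omega)
        | exact congrArg₂ (ent Y) (by omega) (by omega)
        | (exfalso; omega)
        | exact (by assumption : False).elim
  have J := jacobiRing M e
  rw [hD1, hD2, hD3, hD4, hD5, hD6]
  linear_combination -J
end

section
/- Let X be an n×n matrix over a field and let s, k, i be integers with 2 ≤ s ≤ n−1, 0 ≤ k ≤ s−2 and 1 ≤ i ≤ s−1. Then det X^{[s−i+1,n−i+1]}_{[s,n]} · det X^{[s−i,n−i]}_{{s−k−1}∪[s+1,n]} = det X^{[s−i,n−i+1]}_{{s−k−1}∪[s,n]} · det X^{[s−i+1,n−i]}_{[s+1,n]} + det X^{[s−i,n−i]}_{[s,n]} · det X^{[s−i+1,n−i+1]}_{{s−k−1}∪[s+1,n]}. -/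
open Matrix
set_option linter.unusedSectionVars false

section TwoCol
variable {R : Type*} [CommRing R] {m : Type*} [DecidableEq m] [Fintype m]

lemma det_updateRow_zero' (M : Matrix m m R) (j : m) : (M.updateRow j 0).det = 0 := by
  have h := Matrix.det_updateRow_smul M j (0 : R) 0
  simpa using h

lemma det_updateRow_finset_sum' (M : Matrix m m R) (j : m) {ι : Type*} [DecidableEq ι]
    (s : Finset ι) (f : ι → m → R) :
    (M.updateRow j (∑ k ∈ s, f k)).det = ∑ k ∈ s, (M.updateRow j (f k)).det := by
  induction s using Finset.induction with
  | empty => simpa using det_updateRow_zero' M j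
  | insert _ _ h ih =>
      rw [Finset.sum_insert h, Finset.sum_insert h, Matrix.det_updateRow_add, ih]

lemma updateRow_comm' (M : Matrix m m R) {a b : m} (hab : a ≠ b) (u v : m → R) :
    (M.updateRow a u).updateRow b v = (M.updateRow b v).updateRow a u := by
  ext i j
  rcases eq_or_ne i a with rfl | hia <;> rcases eq_or_ne i b with rfl | hib <;>
    simp_all [Matrix.updateRow_apply]

lemma updateColumn_comm' (M : Matrix m m R) {a b : m} (hab : a ≠ b) (u v : m → R) :
    (M.updateCol a u).updateCol b v = (M.updateCol b v).updateCol a u := by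
  ext i j
  rcases eq_or_ne j a with rfl | hja <;> rcases eq_or_ne j b with rfl | hjb <;>
    simp_all [Matrix.updateCol_apply]

lemma one_row' (x : m) : (1 : Matrix m m R) x = Pi.single x 1 := by
  funext j; simp [Matrix.one_apply, Pi.single_apply, eq_comm]

lemma row_of_update2 (a b : m) (u v : m → R) (i : m) :
    (((1 : Matrix m m R).updateRow a u).updateRow b v) i
      = if i = b then v else if i = a then u else Pi.single i 1 := by
  rcases eq_or_ne i b with rfl | hib
  · simp
  · rcases eq_or_ne i a with rfl | hia
    · simp [Matrix.updateRow_apply, hib]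
    · simp [Matrix.updateRow_apply, hib, hia, one_row']

lemma det_single_rows (a b : m) (hab : a ≠ b) (k l : m) :
    (((1 : Matrix m m R).updateRow a (Pi.single l 1)).updateRow b (Pi.single k 1)).det
      = (if k = b then 1 else 0) * (if l = a then 1 else 0)
        - (if k = a then 1 else 0) * (if l = b then 1 else 0) := by
  set M := ((1 : Matrix m m R).updateRow a (Pi.single l 1)).updateRow b (Pi.single k 1) with hM
  have hrow : ∀ i : m, M i = if i = b then (Pi.single k 1 : m → R)
      else if i = a then Pi.single l 1 else Pi.single i 1 := fun i => row_of_update2 a b _ _ i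
  by_cases hkb : k = b
  · by_cases hla : l = a
    · have h1 : M = 1 := by
        funext i
        rw [hrow i, one_row' i]
        rcases eq_or_ne i b with rfl | hib
        · rw [if_pos rfl, hkb]
        · rcases eq_or_ne i a with rfl | hia
          · rw [if_neg hib, if_pos rfl, hla]
          · rw [if_neg hib, if_neg hia]
      rw [h1]
      simp [hkb, hla, hab, Ne.symm hab]
    · have hz : M.det = 0 := by
        rcases eq_or_ne l b with hlb | hlb
        · refine Matrix.det_zero_of_row_eq hab ?_
          rw [hrow a, hrow b, if_neg hab, if_pos rfl, if_pos rfl, hkb, hlb]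
        · refine Matrix.det_zero_of_row_eq (show a ≠ l from fun h => hla h.symm) ?_
          rw [hrow a, hrow l, if_neg hab, if_pos rfl, if_neg hlb, if_neg hla]
      rw [hz, hkb]
      simp [hla, Ne.symm hab]
  · by_cases hka : k = a
    · by_cases hlb : l = b
      · have h1 : M = (1 : Matrix m m R).submatrix (Equiv.swap a b) id := by
          funext i
          have hsub : ((1 : Matrix m m R).submatrix (Equiv.swap a b) id) i
              = Pi.single (Equiv.swap a b i) 1 := by
            funext j
            simp [Matrix.submatrix_apply, Matrix.one_apply, Pi.single_apply, eq_comm]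
          rw [hrow i, hsub]
          rcases eq_or_ne i b with rfl | hib
          · rw [if_pos rfl, hka, Equiv.swap_apply_right]
          · rcases eq_or_ne i a with rfl | hia
            · rw [if_neg hib, if_pos rfl, hlb, Equiv.swap_apply_left]
            · rw [if_neg hib, if_neg hia, Equiv.swap_apply_of_ne_of_ne hia hib]
        rw [h1, Matrix.det_permute, Equiv.Perm.sign_swap hab]
        simp [hkb, hka, hlb, Ne.symm hab, hab]
      · have hz : M.det = 0 := by
          rcases eq_or_ne l a with hla | hla
          · refine Matrix.det_zero_of_row_eq hab ?_
            rw [hrow a, hrow b, if_neg hab, if_pos rfl, if_pos rfl, hka, hla]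
          · refine Matrix.det_zero_of_row_eq (show a ≠ l from fun h => hla h.symm) ?_
            rw [hrow a, hrow l, if_neg hab, if_pos rfl, if_neg hlb, if_neg hla]
        rw [hz, hka]
        simp [hkb, hlb, hab, Ne.symm hab]
    · have hz : M.det = 0 := by
        refine Matrix.det_zero_of_row_eq (show b ≠ k from fun h => hkb h.symm) ?_
        rw [hrow b, hrow k, if_pos rfl, if_neg (fun h => hkb h), if_neg (fun h => hka h)]
      rw [hz]
      simp [hkb, hka]

lemma det_one_update_two_rows (a b : m) (hab : a ≠ b) (u v : m → R) :
    (((1 : Matrix m m R).updateRow a u).updateRow b v).det = u a * v b - u b * v a := by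
  have hv : v = ∑ k : m, v k • (Pi.single k 1 : m → R) := by
    funext j; simp [Pi.single_apply]
  have hu : u = ∑ l : m, u l • (Pi.single l 1 : m → R) := by
    funext j; simp [Pi.single_apply]
  calc (((1 : Matrix m m R).updateRow a u).updateRow b v).det
      = ∑ k : m, v k * (((1 : Matrix m m R).updateRow a u).updateRow b
          (Pi.single k 1 : m → R)).det := by
        conv_lhs => rw [hv]
        rw [det_updateRow_finset_sum']
        exact Finset.sum_congr rfl fun k _ => Matrix.det_updateRow_smul _ _ _ _
    _ = ∑ k : m, v k * ∑ l : m, u l *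
          (((1 : Matrix m m R).updateRow a (Pi.single l 1 : m → R)).updateRow b
            (Pi.single k 1 : m → R)).det := by
        refine Finset.sum_congr rfl fun k _ => ?_
        congr 1
        rw [updateRow_comm' _ hab]
        conv_lhs => rw [hu]
        rw [det_updateRow_finset_sum']
        refine Finset.sum_congr rfl fun l _ => ?_
        rw [Matrix.det_updateRow_smul, updateRow_comm' _ (Ne.symm hab)]
    _ = u a * v b - u b * v a := by
        simp only [det_single_rows a b hab]
        simp [Finset.mul_sum, mul_sub, Finset.sum_sub_distrib, mul_ite, ite_mul,
          Finset.sum_ite_eq', mul_comm]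

lemma det_one_update_two_cols (a b : m) (hab : a ≠ b) (u v : m → R) :
    (((1 : Matrix m m R).updateCol a u).updateCol b v).det = u a * v b - u b * v a := by
  have h1 : (((1 : Matrix m m R).updateCol a u).updateCol b v)
      = ((((1 : Matrix m m R).updateRow a u).updateRow b v))ᵀ := by
    rw [← Matrix.updateCol_transpose, ← Matrix.updateCol_transpose, Matrix.transpose_one]
  rw [h1, Matrix.det_transpose, det_one_update_two_rows a b hab]

end TwoCol

section Jacobi

lemma jacobi_aux {R : Type*} [CommRing R] [IsDomain R] {p : ℕ}
    (M : Matrix (Fin (p+2)) (Fin (p+2)) R) (hd : M.det ≠ 0) :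
    adjugate M 0 0 * adjugate M (Fin.last (p+1)) 1
      - adjugate M (Fin.last (p+1)) 0 * adjugate M 0 1
    = M.det * ((-1 : R)^p *
        (M.submatrix (fun j : Fin p => j.succ.succ) (fun j : Fin p => j.succ.castSucc)).det) := by
  set L : Fin (p+2) := Fin.last (p+1) with hLdef
  have h0L : (0 : Fin (p+2)) ≠ L := by
    simp [hLdef, Fin.ext_iff]
  set P : Matrix (Fin (p+2)) (Fin (p+2)) R :=
    ((1 : Matrix (Fin (p+2)) (Fin (p+2)) R).updateCol 0 (fun i => adjugate M i 0)).updateCol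
      L (fun i => adjugate M i 1) with hPdef
  set N : Matrix (Fin (p+2)) (Fin (p+2)) R :=
    (M.updateCol 0 (Pi.single 0 1)).updateCol L (Pi.single 1 1) with hNdef
  have hP : ∀ l j : Fin (p+2), P l j = if j = L then adjugate M l 1
      else if j = 0 then adjugate M l 0 else (1 : Matrix (Fin (p+2)) (Fin (p+2)) R) l j := by
    intro l j
    rw [hPdef, Matrix.updateCol_apply, Matrix.updateCol_apply]
  have hN : ∀ i j : Fin (p+2), N i j = if j = L then (Pi.single 1 1 : Fin (p+2) → R) i
      else if j = 0 then (Pi.single 0 1 : Fin (p+2) → R) i else M i j := by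
    intro i j
    rw [hNdef, Matrix.updateCol_apply, Matrix.updateCol_apply]
  -- Step 1 : M * P
  have hMP : M * P = (M.updateCol 0 (M.det • (Pi.single 0 1 : Fin (p+2) → R))).updateCol L
      (M.det • (Pi.single 1 1 : Fin (p+2) → R)) := by
    ext i j
    rw [Matrix.mul_apply, Matrix.updateCol_apply, Matrix.updateCol_apply]
    simp_rw [hP]
    rcases eq_or_ne j L with h | h
    · simp only [h, if_true, eq_self_iff_true, if_pos rfl]
      have h2 : ∑ l, M i l * adjugate M l 1 = (M * adjugate M) i 1 := (Matrix.mul_apply).symm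
      rw [h2, Matrix.mul_adjugate]
      simp [Matrix.one_apply, Pi.single_apply, Pi.smul_apply, smul_eq_mul]
    · rcases eq_or_ne j 0 with h0 | h0
      · simp only [h, h0, if_neg h0L, if_false, if_true, eq_self_iff_true, if_pos rfl]
        have h2 : ∑ l, M i l * adjugate M l 0 = (M * adjugate M) i 0 := (Matrix.mul_apply).symm
        rw [h2, Matrix.mul_adjugate]
        simp [Matrix.one_apply, Pi.single_apply, Pi.smul_apply, smul_eq_mul]
      · simp only [if_neg h, if_neg h0]
        simp [Matrix.one_apply, mul_ite, Finset.sum_ite_eq']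
  -- Step 2 : determinants
  have hdetMP : M.det * P.det = M.det * (M.det * N.det) := by
    rw [← Matrix.det_mul, hMP, Matrix.det_updateCol_smul,
      updateColumn_comm' _ h0L, Matrix.det_updateCol_smul, updateColumn_comm' _ (Ne.symm h0L),
      ← hNdef]
  -- Step 3 : det P
  have hdetP : P.det = adjugate M 0 0 * adjugate M L 1 - adjugate M L 0 * adjugate M 0 1 := by
    rw [hPdef, det_one_update_two_cols 0 L h0L]
  -- Step 4 : det N
  have hdetN : N.det = (-1 : R)^p *
      (M.submatrix (fun j : Fin p => j.succ.succ) (fun j : Fin p => j.succ.castSucc)).det := by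
    have hcol0 : ∀ i, N i 0 = (Pi.single 0 1 : Fin (p+2) → R) i := fun i => by
      rw [hN, if_neg h0L, if_pos rfl]
    rw [Matrix.det_succ_column_zero]
    rw [Fintype.sum_eq_single (0 : Fin (p+2)) (fun i hi => by
      rw [hcol0 i, Pi.single_apply, if_neg hi]; ring)]
    rw [hcol0 0, Pi.single_apply, if_pos rfl]
    simp only [Fin.val_zero, pow_zero, one_mul, mul_one, Fin.succAbove_zero]
    -- expand along the last column of the (p+1)×(p+1) matrix
    rw [Matrix.det_succ_column _ (Fin.last p)]
    have hlastsucc : (Fin.last p).succ = L := by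
      rw [hLdef]; ext; simp
    have hcolL : ∀ i : Fin (p+1), (N.submatrix Fin.succ Fin.succ) i (Fin.last p)
        = (Pi.single 1 1 : Fin (p+2) → R) i.succ := fun i => by
      rw [Matrix.submatrix_apply, hlastsucc, hN, if_pos rfl]
    rw [Fintype.sum_eq_single (0 : Fin (p+1)) (fun i hi => by
      rw [hcolL i, Pi.single_apply, if_neg (by
        simp only [Fin.ext_iff, Fin.val_succ, Fin.val_one]
        intro h
        exact hi (Fin.ext (by simp only [Fin.val_zero]; omega)))]
      ring)]
    rw [hcolL 0, Pi.single_apply, if_pos (by ext; simp)]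
    simp only [Fin.val_zero, zero_add, Fin.val_last, mul_one, Fin.succAbove_zero,
      Fin.succAbove_last]
    have hsubeq : (N.submatrix Fin.succ Fin.succ).submatrix Fin.succ Fin.castSucc
        = M.submatrix (fun j : Fin p => j.succ.succ) (fun j : Fin p => j.succ.castSucc) := by
      ext a b
      rw [Matrix.submatrix_apply, Matrix.submatrix_apply, Matrix.submatrix_apply]
      have hne0 : (b.castSucc.succ : Fin (p+2)) ≠ 0 := Fin.succ_ne_zero _
      have hneL : (b.castSucc.succ : Fin (p+2)) ≠ L := by
        rw [hLdef]; simp [Fin.ext_iff]; omega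
      have hbb : (b.castSucc.succ : Fin (p+2)) = b.succ.castSucc := by
        ext; simp
      rw [hN, if_neg hneL, if_neg hne0, hbb]
    rw [hsubeq]
  -- Conclude
  have hc := mul_left_cancel₀ hd hdetMP
  rw [hdetP, hdetN] at hc
  rw [hc]

end Jacobi

lemma jacobi2 {R : Type*} [CommRing R] {p : ℕ} (M : Matrix (Fin (p+2)) (Fin (p+2)) R) :
    adjugate M 0 0 * adjugate M (Fin.last (p+1)) 1
      - adjugate M (Fin.last (p+1)) 0 * adjugate M 0 1
    = M.det * ((-1 : R)^p *
        (M.submatrix (fun j : Fin p => j.succ.succ) (fun j : Fin p => j.succ.castSucc)).det) := by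
  set S := MvPolynomial (Fin (p+2) × Fin (p+2)) ℤ with hS
  let G : Matrix (Fin (p+2)) (Fin (p+2)) S := Matrix.of fun i j => MvPolynomial.X (i, j)
  have hG : G.det ≠ 0 := by
    intro h
    let ψ : S →+* ℤ := MvPolynomial.eval₂Hom (RingHom.id ℤ)
      (fun ij : Fin (p+2) × Fin (p+2) => if ij.1 = ij.2 then (1 : ℤ) else 0)
    have h2 : ψ G.det = 0 := by rw [h, map_zero]
    rw [RingHom.map_det] at h2
    have h3 : ψ.mapMatrix G = (1 : Matrix (Fin (p+2)) (Fin (p+2)) ℤ) := by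
      ext i j
      rw [RingHom.mapMatrix_apply, Matrix.map_apply, Matrix.one_apply]
      exact MvPolynomial.eval₂Hom_X' _ _ (i, j)
    rw [h3, Matrix.det_one] at h2
    exact one_ne_zero h2
  have hgen := jacobi_aux G hG
  let φ : S →+* R := MvPolynomial.eval₂Hom (Int.castRingHom R) (fun ij => M ij.1 ij.2)
  have hGM : φ.mapMatrix G = M := by
    ext i j
    rw [RingHom.mapMatrix_apply, Matrix.map_apply]
    exact MvPolynomial.eval₂Hom_X' _ _ (i, j)
  have h2 := congrArg φ hgen
  simp only [_root_.map_sub, _root_.map_mul, _root_.map_pow, _root_.map_neg, _root_.map_one] at h2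
  rw [RingHom.map_det, RingHom.map_det] at h2
  have hadj : ∀ i j, φ (adjugate G i j) = adjugate M i j := by
    intro i j
    rw [← hGM, ← RingHom.map_adjugate]
    rfl
  have hsub : φ.mapMatrix (G.submatrix (fun j : Fin p => j.succ.succ)
      (fun j : Fin p => j.succ.castSucc)) = M.submatrix (fun j : Fin p => j.succ.succ)
      (fun j : Fin p => j.succ.castSucc) := by
    rw [← hGM]
    rfl
  rw [hadj, hadj, hadj, hadj, hGM, hsub] at h2
  exact h2

lemma key_lemma {R : Type*} [CommRing R] {p : ℕ} (M : Matrix (Fin (p+2)) (Fin (p+2)) R) :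
    (M.submatrix Fin.succ Fin.succ).det *
      (M.submatrix (fun t : Fin (p+1) => if t = 0 then (0 : Fin (p+2)) else t.succ)
        Fin.castSucc).det
    = M.det * (M.submatrix (fun j : Fin p => j.succ.succ) (fun j : Fin p => j.succ.castSucc)).det
      + (M.submatrix Fin.succ Fin.castSucc).det *
        (M.submatrix (fun t : Fin (p+1) => if t = 0 then (0 : Fin (p+2)) else t.succ)
          Fin.succ).det := by
  have hj := jacobi2 M
  have hf1 : (Fin.succAbove (1 : Fin (p+2)))
      = fun t : Fin (p+1) => if t = 0 then (0 : Fin (p+2)) else t.succ := by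
    funext a
    rcases eq_or_ne a 0 with rfl | ha
    · simp [Fin.succAbove]
    · simp only [if_neg ha]
      rw [Fin.succAbove]
      rw [if_neg]
      simp only [Fin.lt_def, Fin.coe_castSucc, Fin.val_one, not_lt]
      rcases Nat.pos_of_ne_zero (fun h => ha (Fin.ext h)) with h
      omega
  have h0 : Fin.succAbove (0 : Fin (p+2)) = Fin.succ := Fin.succAbove_zero
  have hlast : Fin.succAbove (Fin.last (p+1)) = Fin.castSucc := Fin.succAbove_last
  rw [Matrix.adjugate_fin_succ_eq_det_submatrix, Matrix.adjugate_fin_succ_eq_det_submatrix,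
    Matrix.adjugate_fin_succ_eq_det_submatrix, Matrix.adjugate_fin_succ_eq_det_submatrix] at hj
  rw [h0, hlast, hf1] at hj
  simp only [Fin.val_zero, Fin.val_one, Fin.val_last, Nat.add_zero, Nat.zero_add, pow_zero,
    pow_one, one_mul] at hj
  have ht : (-1 : R)^p * (-1 : R)^p = 1 := by
    rw [← pow_add, ← two_mul, pow_mul]
    norm_num
  set A00 := (M.submatrix Fin.succ Fin.succ).det
  set A1L := (M.submatrix (fun t : Fin (p+1) => if t = 0 then (0 : Fin (p+2)) else t.succ)
    Fin.castSucc).det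
  set A0L := (M.submatrix Fin.succ Fin.castSucc).det
  set A10 := (M.submatrix (fun t : Fin (p+1) => if t = 0 then (0 : Fin (p+2)) else t.succ)
    Fin.succ).det
  set C := (M.submatrix (fun j : Fin p => j.succ.succ) (fun j : Fin p => j.succ.castSucc)).det
  linear_combination ((-1 : R)^p) * hj + (M.det * C + A0L * A10 - A00 * A1L) * ht


/-- The identity behind the mutation at `g_{s,s-i+1}` after the sequence
`B_{s-k} → ⋯ → B_{s-1}`:
`det X^{[s−i+1,n−i+1]}_{[s,n]} · det X^{[s−i,n−i]}_{{s−k−1}∪[s+1,n]}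
 = det X^{[s−i,n−i+1]}_{{s−k−1}∪[s,n]} · det X^{[s−i+1,n−i]}_{[s+1,n]}
 + det X^{[s−i,n−i]}_{[s,n]} · det X^{[s−i+1,n−i+1]}_{{s−k−1}∪[s+1,n]}`. -/
theorem statement6 {F : Type*} [Field F] {n : ℕ} (X : Matrix (Fin n) (Fin n) F)
    (s k i : ℕ) (hs1 : 2 ≤ s) (hs2 : s ≤ n - 1) (hk : k ≤ s - 2)
    (hi1 : 1 ≤ i) (hi2 : i ≤ s - 1) :
    subdet X (n - s + 1) (fun t => s + t) (fun t => s - i + 1 + t) *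
      subdet X (n - s + 1) (fun t => if t = 0 then s - k - 1 else s + t) (fun t => s - i + t)
    = subdet X (n - s + 2) (fun t => if t = 0 then s - k - 1 else s + t - 1)
          (fun t => s - i + t) *
        subdet X (n - s) (fun t => s + 1 + t) (fun t => s - i + 1 + t)
      + subdet X (n - s + 1) (fun t => s + t) (fun t => s - i + t) *
          subdet X (n - s + 1) (fun t => if t = 0 then s - k - 1 else s + t)
            (fun t => s - i + 1 + t) := by
  set M : Matrix (Fin (n - s + 2)) (Fin (n - s + 2)) F :=
    Matrix.of fun a b : Fin (n - s + 2) =>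
      ent X (if (a : ℕ) = 0 then s - k - 1 else s + (a : ℕ) - 1) (s - i + (b : ℕ)) with hMdef
  have hkey := key_lemma (p := n - s) M
  have f1val : ∀ a : Fin (n - s + 1),
      (((if a = 0 then (0 : Fin (n - s + 2)) else a.succ) : Fin (n - s + 2)) : ℕ)
        = if (a : ℕ) = 0 then 0 else (a : ℕ) + 1 := by
    intro a
    rcases eq_or_ne a 0 with rfl | ha
    · simp
    · have ha' : (a : ℕ) ≠ 0 := fun h => ha (Fin.ext h)
      rw [if_neg ha, Fin.val_succ, if_neg ha']
  have h1 : subdet X (n - s + 1) (fun t => s + t) (fun t => s - i + 1 + t)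
      = (M.submatrix Fin.succ Fin.succ).det := by
    rw [subdet]
    congr 1
    ext a b
    simp only [Matrix.of_apply, Matrix.submatrix_apply, hMdef, Fin.val_succ]
    rw [if_neg (by omega)]
    congr 1 <;> omega
  have h2 : subdet X (n - s + 1) (fun t => if t = 0 then s - k - 1 else s + t)
        (fun t => s - i + t)
      = (M.submatrix (fun t : Fin (n - s + 1) => if t = 0 then (0 : Fin (n - s + 2)) else t.succ)
          Fin.castSucc).det := by
    rw [subdet]
    congr 1
    ext a b
    simp only [Matrix.of_apply, Matrix.submatrix_apply, hMdef, Fin.coe_castSucc, f1val a]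
    rcases eq_or_ne (a : ℕ) 0 with ha | ha
    · simp [ha]
    · simp only [if_neg ha]
      congr 1 <;> omega
  have h3 : subdet X (n - s + 2) (fun t => if t = 0 then s - k - 1 else s + t - 1)
        (fun t => s - i + t) = M.det := by
    rw [subdet]
  have h4 : subdet X (n - s) (fun t => s + 1 + t) (fun t => s - i + 1 + t)
      = (M.submatrix (fun j : Fin (n - s) => j.succ.succ)
          (fun j : Fin (n - s) => j.succ.castSucc)).det := by
    rw [subdet]
    congr 1
    ext a b
    simp only [Matrix.of_apply, Matrix.submatrix_apply, hMdef, Fin.val_succ, Fin.coe_castSucc]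
    rw [if_neg (by omega)]
    congr 1 <;> omega
  have h5 : subdet X (n - s + 1) (fun t => s + t) (fun t => s - i + t)
      = (M.submatrix Fin.succ Fin.castSucc).det := by
    rw [subdet]
    congr 1
  have h6 : subdet X (n - s + 1) (fun t => if t = 0 then s - k - 1 else s + t)
        (fun t => s - i + 1 + t)
      = (M.submatrix (fun t : Fin (n - s + 1) => if t = 0 then (0 : Fin (n - s + 2)) else t.succ)
          Fin.succ).det := by
    rw [subdet]
    congr 1
    ext a b
    simp only [Matrix.of_apply, Matrix.submatrix_apply, hMdef, Fin.val_succ, f1val a]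
    rcases eq_or_ne (a : ℕ) 0 with ha | ha
    · simp only [ha, if_pos rfl]
      norm_num
      congr 1
      omega
    · simp only [if_neg ha]
      congr 1 <;> omega
  rw [h1, h2, h3, h4, h5, h6]
  exact hkey
end

section
/- Let Y be an n×n matrix over a field and let s, t, i be integers with s ≥ 2, t ≥ 2, i ≥ 1 and s+t+i ≤ n. Then det Y^{[n−t−i,n]}_{[s−1,s+t−2]∪[s+t,s+t+i]} · det Y^{[n−t−i+1,n]}_{[s−1,s+t−3]∪[s+t−1,s+t−1+i]} = det Y^{[n−t−i+1,n]}_{[s−1,s+t−2]∪[s+t,s+t+i−1]} · det Y^{[n−t−i,n]}_{[s−1,s+t−3]∪[s+t−1,s+t+i]} + det Y^{[n−t−i+1,n]}_{[s−1,s+t−3]∪[s+t,s+t+i]} · det Y^{[n−t−i,n]}_{[s−1,s+t+i−1]}. -/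
section helpers
open Matrix
variable {F : Type*} [Field F]

lemma dj_cramer_rows {N : ℕ} (V : Matrix (Fin N) (Fin N) F) (u : Fin N → F) :
    ∑ k, (V.updateRow k u).det • V k = V.det • u := by
  have h := Matrix.mulVec_cramer Vᵀ u
  funext j
  have hj := congrFun h j
  simp only [Matrix.mulVec, dotProduct, Matrix.transpose_apply,
    Matrix.cramer_apply, Pi.smul_apply, smul_eq_mul, Matrix.det_transpose] at hj ⊢
  rw [Finset.sum_apply, ← hj]
  apply Finset.sum_congr rfl
  intro k _
  rw [Matrix.updateCol_transpose, Matrix.det_transpose]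
  simp [mul_comm]

lemma dj_det_updateRow_linear {N : ℕ} (U : Matrix (Fin N) (Fin N) F) (j : Fin N)
    {α : Type*} (s : Finset α) (c : α → F) (v : α → Fin N → F) :
    (U.updateRow j (∑ a ∈ s, c a • v a)).det = ∑ a ∈ s, c a * (U.updateRow j (v a)).det := by
  classical
  induction s using Finset.induction_on with
  | empty =>
      simp only [Finset.sum_empty]
      have h0 : (0 : Fin N → F) = (0 : F) • (0 : Fin N → F) := by simp
      rw [h0, Matrix.det_updateRow_smul]; simp
  | insert a s' hk ih =>
      rw [Finset.sum_insert hk, Matrix.det_updateRow_add, Matrix.det_updateRow_smul,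
        Finset.sum_insert hk, ih]

lemma dj_exchange {N : ℕ} (V U : Matrix (Fin N) (Fin N) F) (j : Fin N) (u : Fin N → F) :
    V.det * (U.updateRow j u).det
      = ∑ k, (V.updateRow k u).det * (U.updateRow j (V k)).det := by
  rw [← dj_det_updateRow_linear U j Finset.univ (fun k => (V.updateRow k u).det) (fun k => V k)]
  rw [dj_cramer_rows, Matrix.det_updateRow_smul]

lemma dj_updateRow_comm {N : ℕ} (M : Matrix (Fin N) (Fin N) F) {j1 j2 : Fin N} (h : j1 ≠ j2)
    (p q : Fin N → F) :
    (M.updateRow j1 p).updateRow j2 q = (M.updateRow j2 q).updateRow j1 p := by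
  funext k l
  rcases eq_or_ne k j1 with rfl | h1
  · rw [Matrix.updateRow_ne h, Matrix.updateRow_self, Matrix.updateRow_self]
  · rcases eq_or_ne k j2 with rfl | h2
    · rw [Matrix.updateRow_self, Matrix.updateRow_ne h1, Matrix.updateRow_self]
    · rw [Matrix.updateRow_ne h2, Matrix.updateRow_ne h1, Matrix.updateRow_ne h1,
        Matrix.updateRow_ne h2]

lemma dj_updateRow_twice {N : ℕ} (M : Matrix (Fin N) (Fin N) F) (j : Fin N)
    (p q : Fin N → F) :
    (M.updateRow j p).updateRow j q = M.updateRow j q := by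
  funext k l
  rcases eq_or_ne k j with rfl | h1
  · rw [Matrix.updateRow_self, Matrix.updateRow_self]
  · rw [Matrix.updateRow_ne h1, Matrix.updateRow_ne h1, Matrix.updateRow_ne h1]

lemma dj_slotT_swap {N : ℕ} (M : Matrix (Fin N) (Fin N) F) {j1 j2 : Fin N} (h : j1 ≠ j2)
    (p q : Fin N → F) :
    ((M.updateRow j1 q).updateRow j2 p).det = -((M.updateRow j1 p).updateRow j2 q).det := by
  have key : (M.updateRow j1 q).updateRow j2 p
      = ((M.updateRow j1 p).updateRow j2 q).submatrix (Equiv.swap j1 j2) id := by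
    funext k l
    rcases eq_or_ne k j1 with rfl | h1
    · rw [Matrix.submatrix_apply, Equiv.swap_apply_left, id, Matrix.updateRow_ne h,
        Matrix.updateRow_self, Matrix.updateRow_self]
    · rcases eq_or_ne k j2 with rfl | h2
      · rw [Matrix.submatrix_apply, Equiv.swap_apply_right, id, Matrix.updateRow_self,
          Matrix.updateRow_ne h, Matrix.updateRow_self]
      · rw [Matrix.submatrix_apply, Equiv.swap_apply_of_ne_of_ne h1 h2, id,
          Matrix.updateRow_ne h2, Matrix.updateRow_ne h1, Matrix.updateRow_ne h2,
          Matrix.updateRow_ne h1]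
  rw [key, Matrix.det_permute, Equiv.Perm.sign_swap h]
  simp

lemma dj_slotPlucker {N : ℕ} (M : Matrix (Fin N) (Fin N) F) {j1 j2 : Fin N} (h : j1 ≠ j2)
    (x y z w : Fin N → F) :
    ((M.updateRow j1 z).updateRow j2 w).det * ((M.updateRow j1 x).updateRow j2 y).det
      = ((M.updateRow j1 x).updateRow j2 w).det * ((M.updateRow j1 z).updateRow j2 y).det
        + ((M.updateRow j1 z).updateRow j2 x).det * ((M.updateRow j1 w).updateRow j2 y).det := by
  classical
  set V : Matrix (Fin N) (Fin N) F := (M.updateRow j1 z).updateRow j2 w with hV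
  set U : Matrix (Fin N) (Fin N) F := M.updateRow j2 y with hU
  have He := dj_exchange V U j1 x
  have hUx : U.updateRow j1 x = (M.updateRow j1 x).updateRow j2 y :=
    dj_updateRow_comm M h.symm y x
  rw [hUx] at He
  have hsplit : ∑ k, (V.updateRow k x).det * (U.updateRow j1 (V k)).det
      = ∑ k ∈ ({j1, j2} : Finset (Fin N)), (V.updateRow k x).det * (U.updateRow j1 (V k)).det := by
    symm
    apply Finset.sum_subset (Finset.subset_univ _)
    intro k _ hk
    simp only [Finset.mem_insert, Finset.mem_singleton, not_or] at hk
    obtain ⟨hk1, hk2⟩ := hk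
    have hVk : V k = M k := by
      rw [hV, Matrix.updateRow_ne hk2, Matrix.updateRow_ne hk1]
    have hz : (U.updateRow j1 (V k)).det = 0 := by
      apply Matrix.det_zero_of_row_eq hk1
      rw [Matrix.updateRow_ne hk1, Matrix.updateRow_self, hU, Matrix.updateRow_ne hk2, hVk]
    rw [hz, mul_zero]
  rw [hsplit, Finset.sum_insert (by simp [h]), Finset.sum_singleton] at He
  have e1 : V.updateRow j1 x = (M.updateRow j1 x).updateRow j2 w := by
    rw [hV, dj_updateRow_comm M h z w, dj_updateRow_twice, ← dj_updateRow_comm M h x w]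
  have e2 : V j1 = z := by rw [hV, Matrix.updateRow_ne h, Matrix.updateRow_self]
  have e3 : U.updateRow j1 z = (M.updateRow j1 z).updateRow j2 y :=
    dj_updateRow_comm M h.symm y z
  have e4 : V.updateRow j2 x = (M.updateRow j1 z).updateRow j2 x := by
    rw [hV, dj_updateRow_twice]
  have e5 : V j2 = w := by rw [hV, Matrix.updateRow_self]
  have e6 : U.updateRow j1 w = (M.updateRow j1 w).updateRow j2 y :=
    dj_updateRow_comm M h.symm y w
  rw [e1, e2, e3, e4, e5, e6] at He
  exact He

lemma dj_det_rotate {N : ℕ} (A B : Matrix (Fin N) (Fin N) F) (p : ℕ) (hp : p < N)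
    (h1 : ∀ k : Fin N, (k : ℕ) < p → B k = A k)
    (h2 : ∀ k q : Fin N, (k : ℕ) = p → (q : ℕ) = N - 1 → B k = A q)
    (h3 : ∀ k q : Fin N, p < (k : ℕ) → (q : ℕ) = (k : ℕ) - 1 → B k = A q) :
    B.det = (-1) ^ (N - 1 - p) * A.det := by
  rcases N with _ | N'
  · omega
  set c : Fin (N' + 1) := ⟨N' - p, by omega⟩ with hc
  have hcv : (c : ℕ) = N' - p := rfl
  set σ : Equiv.Perm (Fin (N' + 1)) := Fin.revPerm * (Fin.cycleRange c * Fin.revPerm) with hσ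
  have happ : ∀ k, σ k = Fin.rev (Fin.cycleRange c (Fin.rev k)) := fun k => rfl
  have hBA : B = A.submatrix σ id := by
    funext k l
    rw [Matrix.submatrix_apply, id, happ]
    rcases lt_trichotomy ((k : ℕ)) p with hk | hk | hk
    · have hgt : c < Fin.rev k := by
        rw [Fin.lt_def, Fin.val_rev, hcv]; omega
      rw [Fin.cycleRange_of_gt hgt, Fin.rev_rev]
      exact congrFun (h1 k hk) l
    · have hrv : Fin.rev k = c := by
        rw [Fin.ext_iff, Fin.val_rev, hcv]; omega
      rw [hrv, Fin.cycleRange_self]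
      refine congrFun (h2 k _ hk ?_) l
      rw [Fin.val_rev]; simp
    · have hlt : Fin.rev k < c := by
        rw [Fin.lt_def, Fin.val_rev, hcv]; omega
      rw [Fin.cycleRange_of_lt hlt]
      refine congrFun (h3 k _ hk ?_) l
      have hne : Fin.rev k ≠ Fin.last N' := by
        rw [Ne, Fin.ext_iff, Fin.val_rev, Fin.val_last]; omega
      rw [Fin.val_rev, Fin.val_add_one, if_neg hne, Fin.val_rev]
      omega
  have hsign : Equiv.Perm.sign σ = (-1 : ℤˣ) ^ (N' - p) := by
    rw [hσ, Equiv.Perm.sign_mul, Equiv.Perm.sign_mul, Fin.sign_cycleRange]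
    rcases Int.units_eq_one_or (Equiv.Perm.sign (Fin.revPerm : Equiv.Perm (Fin (N' + 1))))
      with hu | hu <;> rw [hu, hcv] <;> simp [mul_comm, mul_assoc, mul_left_comm]
  rw [hBA, Matrix.det_permute, hsign]
  have hE : N' + 1 - 1 - p = N' - p := by omega
  rw [hE]
  push_cast
  ring

lemma dj_det_e1_row {N : ℕ} (A : Matrix (Fin (N + 1)) (Fin (N + 1)) F) (r : Fin (N + 1))
    (hr : ∀ l, A r l = if l = 0 then 1 else 0) :
    A.det = (-1) ^ (r : ℕ) * (A.submatrix r.succAbove Fin.succ).det := by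
  rw [Matrix.det_succ_row A r, Finset.sum_eq_single 0]
  · rw [hr, if_pos rfl, Fin.succAbove_zero]
    simp
  · intro b _ hb
    rw [hr, if_neg hb, mul_zero, zero_mul]
  · intro habs; exact absurd (Finset.mem_univ 0) habs

end helpers

def MM {F : Type*} [Field F] {n : ℕ} (Y : Matrix (Fin n) (Fin n) F) (s t i : ℕ) :
    Matrix (Fin (t + i + 1)) (Fin (t + i + 1)) F :=
  Matrix.of fun k l => ent Y (if (k : ℕ) < t then s - 1 + (k : ℕ) else s + (k : ℕ))
    (n - t - i + (l : ℕ))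

def rowv {F : Type*} [Field F] {n : ℕ} (Y : Matrix (Fin n) (Fin n) F) (t i a : ℕ) :
    Fin (t + i + 1) → F :=
  fun l => ent Y a (n - t - i + (l : ℕ))

def rowe (F : Type*) [Field F] (t i : ℕ) : Fin (t + i + 1) → F :=
  fun l => if l = 0 then (1 : F) else 0

def jj1 (t i : ℕ) : Fin (t + i + 1) := ⟨t - 1, by omega⟩
def jj2 (t i : ℕ) : Fin (t + i + 1) := ⟨t + i, by omega⟩

/-- Desnanot–Jacobi identity behind the mutation at `h_{s,n-i}^{(t-1)}` in the sequence
`V_{s,t}`: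
`det Y^{[n−t−i,n]}_{[s−1,s+t−2]∪[s+t,s+t+i]} · det Y^{[n−t−i+1,n]}_{[s−1,s+t−3]∪[s+t−1,s+t−1+i]}
 = det Y^{[n−t−i+1,n]}_{[s−1,s+t−2]∪[s+t,s+t+i−1]} · det Y^{[n−t−i,n]}_{[s−1,s+t−3]∪[s+t−1,s+t+i]}
 + det Y^{[n−t−i+1,n]}_{[s−1,s+t−3]∪[s+t,s+t+i]} · det Y^{[n−t−i,n]}_{[s−1,s+t+i−1]}`. -/
theorem statement8 {F : Type*} [Field F] {n : ℕ} (Y : Matrix (Fin n) (Fin n) F)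
    (s t i : ℕ) (hs : 2 ≤ s) (ht : 2 ≤ t) (hi : 1 ≤ i) (h : s + t + i ≤ n) :
    subdet Y (t + i + 1) (fun u => if u < t then s - 1 + u else s + u)
        (fun u => n - t - i + u) *
      subdet Y (t + i) (fun u => if u < t - 1 then s - 1 + u else s + u)
        (fun u => n - t - i + 1 + u)
    = subdet Y (t + i) (fun u => if u < t then s - 1 + u else s + u)
          (fun u => n - t - i + 1 + u) *
        subdet Y (t + i + 1) (fun u => if u < t - 1 then s - 1 + u else s + u)
          (fun u => n - t - i + u)
      + subdet Y (t + i) (fun u => if u < t - 1 then s - 1 + u else s + u + 1)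
          (fun u => n - t - i + 1 + u) *
        subdet Y (t + i + 1) (fun u => s - 1 + u) (fun u => n - t - i + u) := by
  classical
  have hj1v : ((jj1 t i : Fin (t + i + 1)) : ℕ) = t - 1 := rfl
  have hj2v : ((jj2 t i : Fin (t + i + 1)) : ℕ) = t + i := rfl
  have hne : jj1 t i ≠ jj2 t i := by
    rw [Ne, Fin.ext_iff, hj1v, hj2v]; omega
  have hsa : ∀ k : Fin (t + i),
      ((k : ℕ) < t - 1 ∧ (((jj1 t i).succAbove k : Fin (t + i + 1)) : ℕ) = (k : ℕ)) ∨
      (t - 1 ≤ (k : ℕ) ∧ (((jj1 t i).succAbove k : Fin (t + i + 1)) : ℕ) = (k : ℕ) + 1) := by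
    intro k
    rcases lt_or_ge ((k : ℕ)) (t - 1) with hk | hk
    · left
      refine ⟨hk, ?_⟩
      rw [Fin.succAbove_of_castSucc_lt _ _ (by rw [Fin.lt_def, Fin.coe_castSucc]; exact hk),
        Fin.coe_castSucc]
    · right
      refine ⟨hk, ?_⟩
      rw [Fin.succAbove_of_le_castSucc _ _ (by rw [Fin.le_def, Fin.coe_castSucc]; exact hk),
        Fin.val_succ]
  set A' := MM Y s t i with hA'
  set aε := rowe F t i with haε
  set aα := rowv Y t i (s + t - 2) with haα
  set aβ := rowv Y t i (s + t - 1) with haβ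
  set aμ := rowv Y t i (s + t + i) with haμ
  have hDb : subdet Y (t + i + 1) (fun u => if u < t then s - 1 + u else s + u)
      (fun u => n - t - i + u)
      = ((A'.updateRow (jj1 t i) aα).updateRow (jj2 t i) aμ).det := by
    unfold subdet
    congr 1
    funext k l
    have hkb := k.isLt
    simp only [hA', haα, haμ, Matrix.of_apply, Matrix.updateRow_apply, MM, rowv]
    by_cases h2 : k = jj2 t i
    · have h2v : (k : ℕ) = t + i := by rw [h2, hj2v]
      rw [if_pos h2]
      all_goals first
          | exact congrArg₂ (ent Y) (by omega) (by omega)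
          | split_ifs <;> exact congrArg₂ (ent Y) (by omega) (by omega)
    · have h2v : (k : ℕ) ≠ t + i := fun hh => h2 (Fin.ext hh)
      rw [if_neg h2]
      by_cases h1 : k = jj1 t i
      · have h1v : (k : ℕ) = t - 1 := by rw [h1, hj1v]
        rw [if_pos h1]
        all_goals first
          | exact congrArg₂ (ent Y) (by omega) (by omega)
          | split_ifs <;> exact congrArg₂ (ent Y) (by omega) (by omega)
      · have h1v : (k : ℕ) ≠ t - 1 := fun hh => h1 (Fin.ext hh)
        rw [if_neg h1]
        all_goals first
          | exact congrArg₂ (ent Y) (by omega) (by omega)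
          | split_ifs <;> exact congrArg₂ (ent Y) (by omega) (by omega)
  have hDa : subdet Y (t + i + 1) (fun u => if u < t - 1 then s - 1 + u else s + u)
      (fun u => n - t - i + u)
      = ((A'.updateRow (jj1 t i) aβ).updateRow (jj2 t i) aμ).det := by
    unfold subdet
    congr 1
    funext k l
    have hkb := k.isLt
    simp only [hA', haβ, haμ, Matrix.of_apply, Matrix.updateRow_apply, MM, rowv]
    by_cases h2 : k = jj2 t i
    · have h2v : (k : ℕ) = t + i := by rw [h2, hj2v]
      rw [if_pos h2]
      all_goals first
          | exact congrArg₂ (ent Y) (by omega) (by omega)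
          | split_ifs <;> exact congrArg₂ (ent Y) (by omega) (by omega)
    · have h2v : (k : ℕ) ≠ t + i := fun hh => h2 (Fin.ext hh)
      rw [if_neg h2]
      by_cases h1 : k = jj1 t i
      · have h1v : (k : ℕ) = t - 1 := by rw [h1, hj1v]
        rw [if_pos h1]
        all_goals first
          | exact congrArg₂ (ent Y) (by omega) (by omega)
          | split_ifs <;> exact congrArg₂ (ent Y) (by omega) (by omega)
      · have h1v : (k : ℕ) ≠ t - 1 := fun hh => h1 (Fin.ext hh)
        rw [if_neg h1]
        all_goals first
          | exact congrArg₂ (ent Y) (by omega) (by omega)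
          | split_ifs <;> exact congrArg₂ (ent Y) (by omega) (by omega)
  have hDc : subdet Y (t + i + 1) (fun u => s - 1 + u) (fun u => n - t - i + u)
      = (-1) ^ i * ((A'.updateRow (jj1 t i) aα).updateRow (jj2 t i) aβ).det := by
    have key := dj_det_rotate (F := F)
      ((A'.updateRow (jj1 t i) aα).updateRow (jj2 t i) aβ)
      (Matrix.of fun a b : Fin (t + i + 1) => ent Y (s - 1 + (a : ℕ)) (n - t - i + (b : ℕ)))
      t (by omega) ?_ ?_ ?_
    · have he : t + i + 1 - 1 - t = i := by omega
      rw [he] at key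
      unfold subdet
      exact key
    · intro k hk
      funext l
      have hkb := k.isLt
      simp only [hA', haα, haβ, Matrix.of_apply, Matrix.updateRow_apply, MM, rowv]
      by_cases h2 : k = jj2 t i
      · have h2v : (k : ℕ) = t + i := by rw [h2, hj2v]
        rw [if_pos h2]
        all_goals first
          | exact congrArg₂ (ent Y) (by omega) (by omega)
          | split_ifs <;> exact congrArg₂ (ent Y) (by omega) (by omega)
      · rw [if_neg h2]
        by_cases h1 : k = jj1 t i
        · have h1v : (k : ℕ) = t - 1 := by rw [h1, hj1v]
          rw [if_pos h1]
          all_goals first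
          | exact congrArg₂ (ent Y) (by omega) (by omega)
          | split_ifs <;> exact congrArg₂ (ent Y) (by omega) (by omega)
        · have h1v : (k : ℕ) ≠ t - 1 := fun hh => h1 (Fin.ext hh)
          rw [if_neg h1]
          all_goals first
          | exact congrArg₂ (ent Y) (by omega) (by omega)
          | split_ifs <;> exact congrArg₂ (ent Y) (by omega) (by omega)
    · intro k q hk hq
      funext l
      have hkb := k.isLt
      simp only [hA', haα, haβ, Matrix.of_apply, Matrix.updateRow_apply, MM, rowv]
      by_cases h2 : q = jj2 t i
      · have h2v : (q : ℕ) = t + i := by rw [h2, hj2v]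
        rw [if_pos h2]
        all_goals first
          | exact congrArg₂ (ent Y) (by omega) (by omega)
          | split_ifs <;> exact congrArg₂ (ent Y) (by omega) (by omega)
      · have h2v : (q : ℕ) ≠ t + i := fun hh => h2 (Fin.ext hh)
        rw [if_neg h2]
        by_cases h1 : q = jj1 t i
        · have h1v : (q : ℕ) = t - 1 := by rw [h1, hj1v]
          rw [if_pos h1]
          all_goals first
          | exact congrArg₂ (ent Y) (by omega) (by omega)
          | split_ifs <;> exact congrArg₂ (ent Y) (by omega) (by omega)
        · have h1v : (q : ℕ) ≠ t - 1 := fun hh => h1 (Fin.ext hh)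
          rw [if_neg h1]
          all_goals first
          | exact congrArg₂ (ent Y) (by omega) (by omega)
          | split_ifs <;> exact congrArg₂ (ent Y) (by omega) (by omega)
    · intro k q hk hq
      funext l
      have hkb := k.isLt
      have hqb := q.isLt
      simp only [hA', haα, haβ, Matrix.of_apply, Matrix.updateRow_apply, MM, rowv]
      by_cases h2 : q = jj2 t i
      · have h2v : (q : ℕ) = t + i := by rw [h2, hj2v]
        rw [if_pos h2]
        all_goals first
          | exact congrArg₂ (ent Y) (by omega) (by omega)
          | split_ifs <;> exact congrArg₂ (ent Y) (by omega) (by omega)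
      · have h2v : (q : ℕ) ≠ t + i := fun hh => h2 (Fin.ext hh)
        rw [if_neg h2]
        by_cases h1 : q = jj1 t i
        · have h1v : (q : ℕ) = t - 1 := by rw [h1, hj1v]
          rw [if_pos h1]
          all_goals first
          | exact congrArg₂ (ent Y) (by omega) (by omega)
          | split_ifs <;> exact congrArg₂ (ent Y) (by omega) (by omega)
        · have h1v : (q : ℕ) ≠ t - 1 := fun hh => h1 (Fin.ext hh)
          rw [if_neg h1]
          all_goals first
          | exact congrArg₂ (ent Y) (by omega) (by omega)
          | split_ifs <;> exact congrArg₂ (ent Y) (by omega) (by omega)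
  -- lifted ε-row determinants
  have hrε : ∀ (qv : Fin (t + i + 1) → F) (l : Fin (t + i + 1)),
      ((A'.updateRow (jj1 t i) aε).updateRow (jj2 t i) qv) (jj1 t i) l
        = if l = 0 then 1 else 0 := by
    intro qv l
    rw [Matrix.updateRow_ne hne, Matrix.updateRow_self, haε]
    rfl
  have hEβ : ((A'.updateRow (jj1 t i) aε).updateRow (jj2 t i) aβ).det
      = (-1) ^ (t - 1) *
        (((A'.updateRow (jj1 t i) aε).updateRow (jj2 t i) aβ).submatrix
          (jj1 t i).succAbove Fin.succ).det := by
    have key := dj_det_e1_row (N := t + i)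
      ((A'.updateRow (jj1 t i) aε).updateRow (jj2 t i) aβ) (jj1 t i) (hrε aβ)
    rw [hj1v] at key
    exact key
  have hEα : ((A'.updateRow (jj1 t i) aε).updateRow (jj2 t i) aα).det
      = (-1) ^ (t - 1) *
        (((A'.updateRow (jj1 t i) aε).updateRow (jj2 t i) aα).submatrix
          (jj1 t i).succAbove Fin.succ).det := by
    have key := dj_det_e1_row (N := t + i)
      ((A'.updateRow (jj1 t i) aε).updateRow (jj2 t i) aα) (jj1 t i) (hrε aα)
    rw [hj1v] at key
    exact key
  have hEμ : ((A'.updateRow (jj1 t i) aε).updateRow (jj2 t i) aμ).det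
      = (-1) ^ (t - 1) *
        (((A'.updateRow (jj1 t i) aε).updateRow (jj2 t i) aμ).submatrix
          (jj1 t i).succAbove Fin.succ).det := by
    have key := dj_det_e1_row (N := t + i)
      ((A'.updateRow (jj1 t i) aε).updateRow (jj2 t i) aμ) (jj1 t i) (hrε aμ)
    rw [hj1v] at key
    exact key
  -- minors vs subdets
  have hmβ : subdet Y (t + i) (fun u => if u < t - 1 then s - 1 + u else s + u)
      (fun u => n - t - i + 1 + u)
      = (-1) ^ i * (((A'.updateRow (jj1 t i) aε).updateRow (jj2 t i) aβ).submatrix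
          (jj1 t i).succAbove Fin.succ).det := by
    have key := dj_det_rotate (F := F)
      (((A'.updateRow (jj1 t i) aε).updateRow (jj2 t i) aβ).submatrix
        (jj1 t i).succAbove Fin.succ)
      (Matrix.of fun a b : Fin (t + i) =>
        ent Y (if (a : ℕ) < t - 1 then s - 1 + (a : ℕ) else s + (a : ℕ))
          (n - t - i + 1 + (b : ℕ)))
      (t - 1) (by omega) ?_ ?_ ?_
    · have he : t + i - 1 - (t - 1) = i := by omega
      rw [he] at key
      unfold subdet
      exact key
    · intro k hk
      funext l
      have hkb := k.isLt
      have hsq := hsa k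
      simp only [hA', haβ, Matrix.of_apply, Matrix.submatrix_apply,
        Matrix.updateRow_apply, MM, rowv, Fin.val_succ]
      rw [if_neg (Fin.succAbove_ne (jj1 t i) k)]
      by_cases h2 : (jj1 t i).succAbove k = jj2 t i
      · have h2v : (((jj1 t i).succAbove k : Fin (t + i + 1)) : ℕ) = t + i := by rw [h2, hj2v]
        rw [if_pos h2]
        all_goals first
          | exact congrArg₂ (ent Y) (by omega) (by omega)
          | split_ifs <;> exact congrArg₂ (ent Y) (by omega) (by omega)
      · have h2v : (((jj1 t i).succAbove k : Fin (t + i + 1)) : ℕ) ≠ t + i :=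
          fun hh => h2 (Fin.ext hh)
        rw [if_neg h2]
        all_goals first
          | exact congrArg₂ (ent Y) (by omega) (by omega)
          | split_ifs <;> exact congrArg₂ (ent Y) (by omega) (by omega)
    · intro k q hk hq
      funext l
      have hkb := k.isLt
      have hqb := q.isLt
      have hsq := hsa q
      simp only [hA', haβ, Matrix.of_apply, Matrix.submatrix_apply,
        Matrix.updateRow_apply, MM, rowv, Fin.val_succ]
      rw [if_neg (Fin.succAbove_ne (jj1 t i) q)]
      by_cases h2 : (jj1 t i).succAbove q = jj2 t i
      · have h2v : (((jj1 t i).succAbove q : Fin (t + i + 1)) : ℕ) = t + i := by rw [h2, hj2v]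
        rw [if_pos h2]
        all_goals first
          | exact congrArg₂ (ent Y) (by omega) (by omega)
          | split_ifs <;> exact congrArg₂ (ent Y) (by omega) (by omega)
      · have h2v : (((jj1 t i).succAbove q : Fin (t + i + 1)) : ℕ) ≠ t + i :=
          fun hh => h2 (Fin.ext hh)
        rw [if_neg h2]
        all_goals first
          | exact congrArg₂ (ent Y) (by omega) (by omega)
          | split_ifs <;> exact congrArg₂ (ent Y) (by omega) (by omega)
    · intro k q hk hq
      funext l
      have hkb := k.isLt
      have hqb := q.isLt
      have hsq := hsa q
      simp only [hA', haβ, Matrix.of_apply, Matrix.submatrix_apply,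
        Matrix.updateRow_apply, MM, rowv, Fin.val_succ]
      rw [if_neg (Fin.succAbove_ne (jj1 t i) q)]
      by_cases h2 : (jj1 t i).succAbove q = jj2 t i
      · have h2v : (((jj1 t i).succAbove q : Fin (t + i + 1)) : ℕ) = t + i := by rw [h2, hj2v]
        rw [if_pos h2]
        all_goals first
          | exact congrArg₂ (ent Y) (by omega) (by omega)
          | split_ifs <;> exact congrArg₂ (ent Y) (by omega) (by omega)
      · have h2v : (((jj1 t i).succAbove q : Fin (t + i + 1)) : ℕ) ≠ t + i :=
          fun hh => h2 (Fin.ext hh)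
        rw [if_neg h2]
        all_goals first
          | exact congrArg₂ (ent Y) (by omega) (by omega)
          | split_ifs <;> exact congrArg₂ (ent Y) (by omega) (by omega)
  have hmα : subdet Y (t + i) (fun u => if u < t then s - 1 + u else s + u)
      (fun u => n - t - i + 1 + u)
      = (-1) ^ i * (((A'.updateRow (jj1 t i) aε).updateRow (jj2 t i) aα).submatrix
          (jj1 t i).succAbove Fin.succ).det := by
    have key := dj_det_rotate (F := F)
      (((A'.updateRow (jj1 t i) aε).updateRow (jj2 t i) aα).submatrix
        (jj1 t i).succAbove Fin.succ)
      (Matrix.of fun a b : Fin (t + i) =>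
        ent Y (if (a : ℕ) < t then s - 1 + (a : ℕ) else s + (a : ℕ))
          (n - t - i + 1 + (b : ℕ)))
      (t - 1) (by omega) ?_ ?_ ?_
    · have he : t + i - 1 - (t - 1) = i := by omega
      rw [he] at key
      unfold subdet
      exact key
    · intro k hk
      funext l
      have hkb := k.isLt
      have hsq := hsa k
      simp only [hA', haα, Matrix.of_apply, Matrix.submatrix_apply,
        Matrix.updateRow_apply, MM, rowv, Fin.val_succ]
      rw [if_neg (Fin.succAbove_ne (jj1 t i) k)]
      by_cases h2 : (jj1 t i).succAbove k = jj2 t i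
      · have h2v : (((jj1 t i).succAbove k : Fin (t + i + 1)) : ℕ) = t + i := by rw [h2, hj2v]
        rw [if_pos h2]
        all_goals first
          | exact congrArg₂ (ent Y) (by omega) (by omega)
          | split_ifs <;> exact congrArg₂ (ent Y) (by omega) (by omega)
      · have h2v : (((jj1 t i).succAbove k : Fin (t + i + 1)) : ℕ) ≠ t + i :=
          fun hh => h2 (Fin.ext hh)
        rw [if_neg h2]
        all_goals first
          | exact congrArg₂ (ent Y) (by omega) (by omega)
          | split_ifs <;> exact congrArg₂ (ent Y) (by omega) (by omega)
    · intro k q hk hq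
      funext l
      have hkb := k.isLt
      have hqb := q.isLt
      have hsq := hsa q
      simp only [hA', haα, Matrix.of_apply, Matrix.submatrix_apply,
        Matrix.updateRow_apply, MM, rowv, Fin.val_succ]
      rw [if_neg (Fin.succAbove_ne (jj1 t i) q)]
      by_cases h2 : (jj1 t i).succAbove q = jj2 t i
      · have h2v : (((jj1 t i).succAbove q : Fin (t + i + 1)) : ℕ) = t + i := by rw [h2, hj2v]
        rw [if_pos h2]
        all_goals first
          | exact congrArg₂ (ent Y) (by omega) (by omega)
          | split_ifs <;> exact congrArg₂ (ent Y) (by omega) (by omega)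
      · have h2v : (((jj1 t i).succAbove q : Fin (t + i + 1)) : ℕ) ≠ t + i :=
          fun hh => h2 (Fin.ext hh)
        rw [if_neg h2]
        all_goals first
          | exact congrArg₂ (ent Y) (by omega) (by omega)
          | split_ifs <;> exact congrArg₂ (ent Y) (by omega) (by omega)
    · intro k q hk hq
      funext l
      have hkb := k.isLt
      have hqb := q.isLt
      have hsq := hsa q
      simp only [hA', haα, Matrix.of_apply, Matrix.submatrix_apply,
        Matrix.updateRow_apply, MM, rowv, Fin.val_succ]
      rw [if_neg (Fin.succAbove_ne (jj1 t i) q)]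
      by_cases h2 : (jj1 t i).succAbove q = jj2 t i
      · have h2v : (((jj1 t i).succAbove q : Fin (t + i + 1)) : ℕ) = t + i := by rw [h2, hj2v]
        rw [if_pos h2]
        all_goals first
          | exact congrArg₂ (ent Y) (by omega) (by omega)
          | split_ifs <;> exact congrArg₂ (ent Y) (by omega) (by omega)
      · have h2v : (((jj1 t i).succAbove q : Fin (t + i + 1)) : ℕ) ≠ t + i :=
          fun hh => h2 (Fin.ext hh)
        rw [if_neg h2]
        all_goals first
          | exact congrArg₂ (ent Y) (by omega) (by omega)
          | split_ifs <;> exact congrArg₂ (ent Y) (by omega) (by omega)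
  have hmμ : subdet Y (t + i) (fun u => if u < t - 1 then s - 1 + u else s + u + 1)
      (fun u => n - t - i + 1 + u)
      = (((A'.updateRow (jj1 t i) aε).updateRow (jj2 t i) aμ).submatrix
          (jj1 t i).succAbove Fin.succ).det := by
    unfold subdet
    congr 1
    funext k l
    have hkb := k.isLt
    have hsq := hsa k
    simp only [hA', haμ, Matrix.of_apply, Matrix.submatrix_apply,
      Matrix.updateRow_apply, MM, rowv, Fin.val_succ]
    rw [if_neg (Fin.succAbove_ne (jj1 t i) k)]
    by_cases h2 : (jj1 t i).succAbove k = jj2 t i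
    · have h2v : (((jj1 t i).succAbove k : Fin (t + i + 1)) : ℕ) = t + i := by rw [h2, hj2v]
      rw [if_pos h2]
      all_goals first
          | exact congrArg₂ (ent Y) (by omega) (by omega)
          | split_ifs <;> exact congrArg₂ (ent Y) (by omega) (by omega)
    · have h2v : (((jj1 t i).succAbove k : Fin (t + i + 1)) : ℕ) ≠ t + i :=
        fun hh => h2 (Fin.ext hh)
      rw [if_neg h2]
      all_goals first
          | exact congrArg₂ (ent Y) (by omega) (by omega)
          | split_ifs <;> exact congrArg₂ (ent Y) (by omega) (by omega)
  -- the Plücker relation and conclusion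
  have hPl := dj_slotPlucker A' hne aε aβ aα aμ
  rw [dj_slotT_swap A' hne aε aα, dj_slotT_swap A' hne aβ aμ] at hPl
  rw [hEβ, hEα, hEμ] at hPl
  have hQ : ((-1 : F)) ^ (t - 1) ≠ 0 := pow_ne_zero _ (by norm_num)
  have hPl' : ((A'.updateRow (jj1 t i) aα).updateRow (jj2 t i) aμ).det *
        (((A'.updateRow (jj1 t i) aε).updateRow (jj2 t i) aβ).submatrix
          (jj1 t i).succAbove Fin.succ).det
      = (((A'.updateRow (jj1 t i) aε).updateRow (jj2 t i) aμ).submatrix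
          (jj1 t i).succAbove Fin.succ).det *
          ((A'.updateRow (jj1 t i) aα).updateRow (jj2 t i) aβ).det
        + (((A'.updateRow (jj1 t i) aε).updateRow (jj2 t i) aα).submatrix
          (jj1 t i).succAbove Fin.succ).det *
          ((A'.updateRow (jj1 t i) aβ).updateRow (jj2 t i) aμ).det := by
    apply mul_left_cancel₀ hQ
    linear_combination hPl
  rw [hDb, hDa, hDc, hmβ, hmα, hmμ]
  linear_combination ((-1 : F) ^ i) * hPl'
end

section
/- Let Y be an n×n matrix over a field and let s, t, k, i be integers with s ≥ 2, t ≥ 2, k ≥ 1, i ≥ 1 and s+t+i+k ≤ n. Then det Y^{[n−t−i,n]}_{[s−1,s+t−2]∪[s+t+k,s+t+i+k]} · det Y^{[n−t−i+1,n]}_{[s−1,s+t−3]∪[s+t−1+k,s+t−1+i+k]} = det Y^{[n−t−i,n]}_{[s−1,s+t−2]∪[s+t+k−1,s+t+i+k−1]} · det Y^{[n−t−i+1,n]}_{[s−1,s+t−3]∪[s+t+k,s+t+i+k]} + det Y^{[n−t−i+1,n]}_{[s−1,s+t−2]∪[s+t+k,s+t+i+k−1]} · det Y^{[n−t−i,n]}_{[s−1,s+t−3]∪[s+t−1+k,s+t+i+k]}.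 -/
namespace Plk

lemma sval {n : ℕ} (p : Fin (n+1)) (j : Fin n) :
    (p.succAbove j).val = if j.val < p.val then j.val else j.val + 1 := by
  rcases lt_or_ge (Fin.castSucc j) p with h | h
  · rw [Fin.succAbove_of_castSucc_lt _ _ h, Fin.coe_castSucc,
      if_pos (by simpa [Fin.lt_def] using h)]
  · rw [Fin.succAbove_of_le_castSucc _ _ h, Fin.val_succ,
      if_neg (by simp [Fin.le_def] at h; omega)]

/-- increasing enumeration of the complement of `{y, z}` (for `y < z`). -/
def del2 {m : ℕ} (y z : Fin (m+2)) (h : y.val < z.val) : Fin m → Fin (m+2) :=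
  fun j => z.succAbove ((⟨y.val, by have := z.isLt; omega⟩ : Fin (m+1)).succAbove j)

lemma del2_val {m : ℕ} (y z : Fin (m+2)) (h : y.val < z.val) (j : Fin m) :
    (del2 y z h j).val =
      if j.val < y.val then j.val else if j.val + 1 < z.val then j.val + 1 else j.val + 2 := by
  unfold del2
  rw [sval, sval]
  simp only [Fin.val_mk]
  split_ifs <;> omega

end Plk

namespace Plk

variable {F : Type*} [Field F]

lemma plucker3_aux {m : ℕ} (A : Matrix (Fin (m+3)) (Fin (m+2)) F)
    (a b c : Fin (m+3)) (hab : a.val < b.val) (hbc : b.val < c.val) :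
    (A.submatrix b.succAbove id).det *
        (A.submatrix (del2 (m := m+1) a c (hab.trans hbc)) Fin.succ).det
      = (A.submatrix c.succAbove id).det *
          (A.submatrix (del2 (m := m+1) a b hab) Fin.succ).det
        + (A.submatrix a.succAbove id).det *
            (A.submatrix (del2 (m := m+1) b c hbc) Fin.succ).det := by
  have hc3 := c.isLt
  -- the increasing enumeration (on values) of the complement of `{a, b, c}`
  set dv : ℕ → ℕ := fun j => if j < a.val then j else if j + 1 < b.val then j + 1
      else if j + 2 < c.val then j + 2 else j + 3 with hdvdef
  have hdvlt : ∀ j : ℕ, j < m → dv j < m + 3 := by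
    intro j hj; simp only [hdvdef]; split_ifs <;> omega
  set d3 : Fin m → Fin (m+3) := fun j => ⟨dv j.val, hdvlt _ j.isLt⟩ with hd3def
  -- the matrix with first row `v`, remaining rows those of `A` outside `{a,b,c}`, columns ≥ 1
  set N : (Fin (m+1) → F) → Matrix (Fin (m+1)) (Fin (m+1)) F := fun v =>
    Matrix.of fun r j => if hr : r.val = 0 then v j
      else A (d3 ⟨r.val - 1, by have := r.isLt; omega⟩) j.succ with hNdef
  have colrel : ∀ l : Fin (m+2), ∑ x : Fin (m+3),
      (-1:F)^(x:ℕ) * A x l * (A.submatrix x.succAbove id).det = 0 := by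
    intro l
    set C : Matrix (Fin (m+3)) (Fin (m+3)) F :=
      Matrix.of fun r j => if j.val = 0 then A r l
        else A r ⟨j.val - 1, by have := j.isLt; omega⟩ with hCdef
    have hC0 : C.det = 0 := by
      apply Matrix.det_zero_of_column_eq (i := (0 : Fin (m+3))) (j := l.succ)
        (Fin.succ_ne_zero l).symm
      intro r
      simp only [hCdef, Matrix.of_apply, Fin.val_zero, Fin.val_succ]
      rw [if_pos trivial, if_neg (Nat.succ_ne_zero _)]
      exact congrArg (A r) (Fin.ext (by simp))
    have hexp : (0:F) = ∑ x : Fin (m+3),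
        (-1:F)^(x:ℕ) * A x l * (A.submatrix x.succAbove id).det := by
      rw [← hC0, Matrix.det_succ_column_zero]
      apply Finset.sum_congr rfl
      intro x _
      have h1 : C x 0 = A x l := by
        simp only [hCdef, Matrix.of_apply, Fin.val_zero]
        rw [if_pos trivial]
      have h2 : C.submatrix x.succAbove Fin.succ = A.submatrix x.succAbove id := by
        ext r j
        simp only [hCdef, Matrix.submatrix_apply, Matrix.of_apply, Fin.val_succ, id]
        rw [if_neg (Nat.succ_ne_zero _)]
        exact congrArg (A (x.succAbove r)) (Fin.ext (by simp))
      rw [h1, h2]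
    exact hexp.symm
  -- the minors of `N v` along row 0 do not depend on `v`
  have hNsub : ∀ (v w : Fin (m+1) → F) (j : Fin (m+1)),
      (N v).submatrix Fin.succ j.succAbove = (N w).submatrix Fin.succ j.succAbove := by
    intro v w j
    ext r q
    simp only [hNdef, Matrix.submatrix_apply, Matrix.of_apply]
    rw [dif_neg (by simp), dif_neg (by simp)]
  -- Laplace expansion of `det (N v)` along row 0
  have hNdet : ∀ v : Fin (m+1) → F, (N v).det
      = ∑ j : Fin (m+1), (-1:F)^(j:ℕ) * v j
          * ((N (fun _ => 0)).submatrix Fin.succ j.succAbove).det := by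
    intro v
    rw [Matrix.det_succ_row_zero]
    apply Finset.sum_congr rfl
    intro j _
    rw [hNsub v (fun _ => 0) j]
    have : (N v) 0 j = v j := by
      simp only [hNdef, Matrix.of_apply, Fin.val_zero]
      exact dif_pos rfl
    rw [this]
  -- the master relation
  have main0 : ∑ x : Fin (m+3), (-1:F)^(x:ℕ) * (A.submatrix x.succAbove id).det
      * (N (fun j => A x j.succ)).det = 0 := by
    calc ∑ x : Fin (m+3), (-1:F)^(x:ℕ) * (A.submatrix x.succAbove id).det
          * (N (fun j => A x j.succ)).det
        = ∑ x : Fin (m+3), ∑ j : Fin (m+1), ((-1:F)^(j:ℕ)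
            * ((N (fun _ => 0)).submatrix Fin.succ j.succAbove).det)
            * ((-1:F)^(x:ℕ) * A x j.succ * (A.submatrix x.succAbove id).det) := by
          apply Finset.sum_congr rfl
          intro x _
          rw [hNdet, Finset.mul_sum]
          apply Finset.sum_congr rfl
          intro j _
          ring
      _ = ∑ j : Fin (m+1), ((-1:F)^(j:ℕ)
            * ((N (fun _ => 0)).submatrix Fin.succ j.succAbove).det)
            * ∑ x : Fin (m+3), ((-1:F)^(x:ℕ) * A x j.succ
              * (A.submatrix x.succAbove id).det) := by
          rw [Finset.sum_comm]
          apply Finset.sum_congr rfl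
          intro j _
          rw [← Finset.mul_sum]
      _ = 0 := by
          apply Finset.sum_eq_zero
          intro j _
          rw [colrel j.succ, mul_zero]
  -- evaluating `det (N (row x of A))` for `x ∈ {a, b, c}`
  have key : ∀ (x : Fin (m+3)) (w : Fin (m+1) → Fin (m+3)) (p : Fin (m+1)),
      w p = x →
      (∀ r : Fin (m+1), r.val < p.val → (w r).val = dv r.val) →
      (∀ r : Fin (m+1), p.val < r.val → (w r).val = dv (r.val - 1)) →
      (N (fun j => A x j.succ)).det
        = (-1:F)^(p.val) * (A.submatrix w Fin.succ).det := by
    intro x w p hp hlt hgt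
    have hmat : (N (fun j => A x j.succ)).submatrix (p.cycleRange) id
        = A.submatrix w Fin.succ := by
      ext r q
      simp only [Matrix.submatrix_apply, hNdef, Matrix.of_apply, id]
      rcases lt_trichotomy r p with hr | hr | hr
      · have hv : ((p.cycleRange r) : ℕ) = r.val + 1 := Fin.coe_cycleRange_of_lt hr
        rw [dif_neg (by omega)]
        refine congrArg₂ A (Fin.ext ?_) rfl
        show dv ((p.cycleRange r : ℕ) - 1) = (w r).val
        rw [hv, Nat.add_sub_cancel, hlt r (Fin.lt_def.mp hr)]
      · subst hr
        rw [Fin.cycleRange_self]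
        rw [dif_pos (by simp)]
        rw [hp]
      · have hv : ((p.cycleRange r) : ℕ) = r.val := by rw [Fin.cycleRange_of_gt hr]
        rw [dif_neg (by omega)]
        refine congrArg₂ A (Fin.ext ?_) rfl
        show dv ((p.cycleRange r : ℕ) - 1) = (w r).val
        rw [hv, hgt r (Fin.lt_def.mp hr)]
    have hperm := Matrix.det_permute (p.cycleRange) (N (fun j => A x j.succ))
    rw [hmat, Fin.sign_cycleRange] at hperm
    have hsq : ((-1:F)^p.val) * ((-1:F)^p.val) = 1 := by
      rw [← pow_add]
      exact Even.neg_one_pow ⟨p.val, by ring⟩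
    calc (N (fun j => A x j.succ)).det
        = ((-1:F)^p.val) * (((-1:F)^p.val) * (N (fun j => A x j.succ)).det) := by
          rw [← mul_assoc, hsq, one_mul]
      _ = (-1:F)^(p.val) * (A.submatrix w Fin.succ).det := by
          rw [hperm]
          norm_num
  -- terms for `x ∉ {a, b, c}` vanish
  have hzero : ∀ x : Fin (m+3), x ∉ ({a, b, c} : Finset (Fin (m+3))) →
      (-1:F)^(x:ℕ) * (A.submatrix x.succAbove id).det
        * (N (fun j => A x j.succ)).det = 0 := by
    intro x hx
    simp only [Finset.mem_insert, Finset.mem_singleton] at hx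
    push_neg at hx
    have hxa : x.val ≠ a.val := fun h => hx.1 (Fin.ext h)
    have hxb : x.val ≠ b.val := fun h => hx.2.1 (Fin.ext h)
    have hxc : x.val ≠ c.val := fun h => hx.2.2 (Fin.ext h)
    have hx3 := x.isLt
    have hpm : (if x.val < a.val then x.val else if x.val < b.val then x.val - 1
        else if x.val < c.val then x.val - 2 else x.val - 3) < m := by
      split_ifs <;> omega
    have hdvx : dv (if x.val < a.val then x.val else if x.val < b.val then x.val - 1
        else if x.val < c.val then x.val - 2 else x.val - 3) = x.val := by
      simp only [hdvdef]
      split_ifs <;> omega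
    have hNz : (N (fun j => A x j.succ)).det = 0 := by
      apply Matrix.det_zero_of_row_eq (i := (0 : Fin (m+1))) (j := Fin.succ ⟨_, hpm⟩)
        (Fin.succ_ne_zero _).symm
      have l0 : ∀ q, (N (fun j => A x j.succ)) 0 q = A x q.succ := by
        intro q
        simp only [hNdef, Matrix.of_apply, Fin.val_zero]
        exact dif_pos rfl
      have l1 : ∀ q, (N (fun j => A x j.succ)) (Fin.succ ⟨_, hpm⟩) q = A x q.succ := by
        intro q
        simp only [hNdef, Matrix.of_apply, Fin.val_succ]
        rw [dif_neg (Nat.succ_ne_zero _)]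
        refine congrArg₂ A (Fin.ext ?_) rfl
        show dv ((⟨_, hpm⟩ : Fin m).val + 1 - 1) = x.val
        rw [Nat.add_sub_cancel]
        exact hdvx
      funext q
      rw [l0 q, l1 q]
    rw [hNz, mul_zero]
  -- the three surviving terms
  have pa : a.val < m+1 := by omega
  have pb : b.val - 1 < m+1 := by omega
  have pc : c.val - 2 < m+1 := by omega
  have ka : (N (fun j => A a j.succ)).det
      = (-1:F)^(a.val) * (A.submatrix (del2 (m := m+1) b c hbc) Fin.succ).det := by
    refine key a _ ⟨a.val, pa⟩ ?_ ?_ ?_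
    · apply Fin.ext
      rw [del2_val]
      simp only [Fin.val_mk]
      split_ifs <;> omega
    · intro r hr
      simp only [Fin.val_mk] at hr
      rw [del2_val]
      simp only [hdvdef]
      split_ifs <;> omega
    · intro r hr
      simp only [Fin.val_mk] at hr
      rw [del2_val]
      simp only [hdvdef]
      split_ifs <;> omega
  have kb : (N (fun j => A b j.succ)).det
      = (-1:F)^(b.val - 1)
          * (A.submatrix (del2 (m := m+1) a c (hab.trans hbc)) Fin.succ).det := by
    refine key b _ ⟨b.val - 1, pb⟩ ?_ ?_ ?_
    · apply Fin.ext
      rw [del2_val]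
      simp only [Fin.val_mk]
      split_ifs <;> omega
    · intro r hr
      simp only [Fin.val_mk] at hr
      rw [del2_val]
      simp only [hdvdef]
      split_ifs <;> omega
    · intro r hr
      simp only [Fin.val_mk] at hr
      rw [del2_val]
      simp only [hdvdef]
      split_ifs <;> omega
  have kc : (N (fun j => A c j.succ)).det
      = (-1:F)^(c.val - 2) * (A.submatrix (del2 (m := m+1) a b hab) Fin.succ).det := by
    refine key c _ ⟨c.val - 2, pc⟩ ?_ ?_ ?_
    · apply Fin.ext
      rw [del2_val]
      simp only [Fin.val_mk]
      split_ifs <;> omega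
    · intro r hr
      simp only [Fin.val_mk] at hr
      rw [del2_val]
      simp only [hdvdef]
      split_ifs <;> omega
    · intro r hr
      simp only [Fin.val_mk] at hr
      rw [del2_val]
      simp only [hdvdef]
      split_ifs <;> omega
  -- restrict the sum to `{a, b, c}`
  have hane : a ∉ ({b, c} : Finset (Fin (m+3))) := by
    simp only [Finset.mem_insert, Finset.mem_singleton]
    push_neg
    exact ⟨Fin.ne_of_val_ne (by omega), Fin.ne_of_val_ne (by omega)⟩
  have hbne : b ∉ ({c} : Finset (Fin (m+3))) := by
    simp only [Finset.mem_singleton]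
    exact Fin.ne_of_val_ne (by omega)
  have hsum : ∑ x : Fin (m+3), (-1:F)^(x:ℕ) * (A.submatrix x.succAbove id).det
        * (N (fun j => A x j.succ)).det
      = (-1:F)^(a:ℕ) * (A.submatrix a.succAbove id).det
          * (N (fun j => A a j.succ)).det
        + ((-1:F)^(b:ℕ) * (A.submatrix b.succAbove id).det
            * (N (fun j => A b j.succ)).det
          + (-1:F)^(c:ℕ) * (A.submatrix c.succAbove id).det
              * (N (fun j => A c j.succ)).det) := by
    rw [← Finset.sum_subset (Finset.subset_univ ({a, b, c} : Finset (Fin (m+3))))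
        (fun x _ hx => hzero x hx)]
    rw [Finset.sum_insert hane, Finset.sum_insert hbne, Finset.sum_singleton]
  rw [main0, ka, kb, kc] at hsum
  have sa : (-1:F)^(a.val) * (-1:F)^(a.val) = 1 := by
    rw [← pow_add]
    exact Even.neg_one_pow ⟨a.val, by ring⟩
  have sb : (-1:F)^(b.val) * (-1:F)^(b.val - 1) = -1 := by
    rw [← pow_add, show b.val + (b.val - 1) = 2*(b.val-1)+1 by omega, pow_succ, pow_mul]
    norm_num
  have sc : (-1:F)^(c.val) * (-1:F)^(c.val - 2) = 1 := by
    rw [← pow_add, show c.val + (c.val - 2) = 2*(c.val-1) by omega, pow_mul]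
    norm_num
  linear_combination hsum
    + ((A.submatrix a.succAbove id).det
        * (A.submatrix (del2 (m := m+1) b c hbc) Fin.succ).det) * sa
    + ((A.submatrix b.succAbove id).det
        * (A.submatrix (del2 (m := m+1) a c (hab.trans hbc)) Fin.succ).det) * sb
    + ((A.submatrix c.succAbove id).det
        * (A.submatrix (del2 (m := m+1) a b hab) Fin.succ).det) * sc

end Plk

/-- Desnanot–Jacobi identity behind the mutation at `h_{s+k,n-i}^{(t-1)}` in the sequence
`V_{s,t}` (for `i > 0`, `k > 0`):
`det Y^{[n−t−i,n]}_{[s−1,s+t−2]∪[s+t+k,s+t+i+k]} · det Y^{[n−t−i+1,n]}_{[s−1,s+t−3]∪[s+t−1+k,s+t−1+i+k]}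
 = det Y^{[n−t−i,n]}_{[s−1,s+t−2]∪[s+t+k−1,s+t+i+k−1]} · det Y^{[n−t−i+1,n]}_{[s−1,s+t−3]∪[s+t+k,s+t+i+k]}
 + det Y^{[n−t−i+1,n]}_{[s−1,s+t−2]∪[s+t+k,s+t+i+k−1]} · det Y^{[n−t−i,n]}_{[s−1,s+t−3]∪[s+t−1+k,s+t+i+k]}`. -/
theorem statement10 {F : Type*} [Field F] {n : ℕ} (Y : Matrix (Fin n) (Fin n) F)
    (s t k i : ℕ) (hs : 2 ≤ s) (ht : 2 ≤ t) (hk : 1 ≤ k) (hi : 1 ≤ i)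
    (h : s + t + i + k ≤ n) :
    subdet Y (t + i + 1) (fun u => if u < t then s - 1 + u else s + k + u)
        (fun u => n - t - i + u) *
      subdet Y (t + i) (fun u => if u < t - 1 then s - 1 + u else s + k + u)
        (fun u => n - t - i + 1 + u)
    = subdet Y (t + i + 1) (fun u => if u < t then s - 1 + u else s + k + u - 1)
          (fun u => n - t - i + u) *
        subdet Y (t + i) (fun u => if u < t - 1 then s - 1 + u else s + k + u + 1)
          (fun u => n - t - i + 1 + u)
      + subdet Y (t + i) (fun u => if u < t then s - 1 + u else s + k + u)
          (fun u => n - t - i + 1 + u) *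
        subdet Y (t + i + 1) (fun u => if u < t - 1 then s - 1 + u else s + k + u)
          (fun u => n - t - i + u) := by
  obtain ⟨m, hm⟩ : ∃ m, t + i = m + 1 := ⟨t + i - 1, by omega⟩
  have hm' : t + i + 1 = m + 2 := by omega
  have pf1 : t - 1 < m + 3 := by omega
  have pf2 : t < m + 3 := by omega
  have pf3 : m + 2 < m + 3 := by omega
  set A : Matrix (Fin (m+3)) (Fin (m+2)) F := Matrix.of fun u v =>
    ent Y (if u.val < t then s - 1 + u.val else s + k + u.val - 1)
      (n - t - i + v.val) with hA
  have hab : (⟨t-1, pf1⟩ : Fin (m+3)).val < (⟨t, pf2⟩ : Fin (m+3)).val := by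
    simp only [Fin.val_mk]; omega
  have hbc : (⟨t, pf2⟩ : Fin (m+3)).val < (⟨m+2, pf3⟩ : Fin (m+3)).val := by
    simp only [Fin.val_mk]; omega
  have P := Plk.plucker3_aux A ⟨t-1, pf1⟩ ⟨t, pf2⟩ ⟨m+2, pf3⟩ hab hbc
  rw [mul_comm ((A.submatrix ((⟨t - 1, pf1⟩ : Fin (m+3))).succAbove id).det)] at P
  simp only [subdet]
  rw [hm', hm]
  convert P using 3
  all_goals
    try refine congrArg Matrix.det ?_
  all_goals
    refine Matrix.ext fun u v => ?_
  all_goals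
    simp only [hA, Matrix.submatrix_apply, Matrix.of_apply, id, Plk.sval, Plk.del2_val,
      Fin.val_mk, Fin.val_succ]
  all_goals
    refine congrArg₂ (ent Y) ?_ ?_ <;> (try split_ifs) <;> omega
end

section
/- Let X be an invertible n×n matrix and Y an n×n matrix over a field, set U = X⁻¹Y, and let k, j be integers with 1 ≤ k ≤ n−1 and 2 ≤ j ≤ n−k+1. Let M be the n×n matrix whose columns are, in order: columns 1,…,k of X, columns j+k,…,n of X, and columns n−j+2,…,n of Y. Then det M = (−1)^{(n−j−k+1)(n−k−1)} · det X · det U^{[n−j+2,n]}_{[k+1,k+j−1]}. -/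
lemma entEq {F : Type*} [Zero F] {r c : ℕ} (A : Matrix (Fin r) (Fin c) F)
    {a b : ℕ} (ha : a - 1 < r) (hb : b - 1 < c) :
    ent A a b = A ⟨a - 1, ha⟩ ⟨b - 1, hb⟩ := dif_pos ⟨ha, hb⟩

lemma finRotatePowVal {m : ℕ} (p : ℕ) (t : Fin (m + 1)) :
    (((finRotate (m + 1)) ^ p) t).val = (t.val + p) % (m + 1) := by
  induction p generalizing t with
  | zero => simp [Nat.mod_eq_of_lt t.isLt]
  | succ p ih =>
      rw [pow_succ, Equiv.Perm.mul_apply, ih, finRotate_succ_apply, Fin.val_add, Fin.val_one',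
        Nat.mod_add_mod, Nat.add_right_comm, Nat.add_mod_mod, Nat.add_assoc]

lemma finRotatePowVal' {m : ℕ} (hm : m ≠ 0) (p : ℕ) (t : Fin m) :
    (((finRotate m) ^ p) t).val = (t.val + p) % m := by
  obtain ⟨m', rfl⟩ := Nat.exists_eq_succ_of_ne_zero hm
  exact finRotatePowVal p t

lemma signFinRotate' {m : ℕ} (hm : m ≠ 0) :
    Equiv.Perm.sign (finRotate m) = (-1) ^ (m - 1) := by
  obtain ⟨m', rfl⟩ := Nat.exists_eq_succ_of_ne_zero hm
  simp [sign_finRotate]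

lemma negOnePowCongr {F : Type*} [Monoid F] [HasDistribNeg F] {a b : ℕ} (h : a % 2 = b % 2) :
    (-1 : F) ^ a = (-1) ^ b := by
  rcases Nat.even_or_odd a with ha | ha
  · rw [ha.neg_one_pow, Even.neg_one_pow (by rw [Nat.even_iff] at ha ⊢; omega)]
  · rw [ha.neg_one_pow, Odd.neg_one_pow (by rw [Nat.odd_iff] at ha ⊢; omega)]

/-- For an invertible `X`, `U = X⁻¹Y`, `1 ≤ k ≤ n−1` and `2 ≤ j ≤ n−k+1`, the matrix `M`
whose columns are (in order) columns `1,…,k` of `X`, columns `j+k,…,n` of `X`, and columns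
`n−j+2,…,n` of `Y`, satisfies
`det M = (−1)^{(n−j−k+1)(n−k−1)} · det X · det U^{[n−j+2,n]}_{[k+1,k+j−1]}`. -/
theorem statement11 {F : Type*} [Field F] {n : ℕ} (X Y : Matrix (Fin n) (Fin n) F)
    (hX : IsUnit X.det) (k j : ℕ) (hk1 : 1 ≤ k) (hk2 : k ≤ n - 1)
    (hj1 : 2 ≤ j) (hj2 : j ≤ n - k + 1) :
    (Matrix.of fun a b : Fin n =>
        if b.val < k then ent X (a.val + 1) (b.val + 1)
        else if b.val < k + (n + 1 - j - k) then ent X (a.val + 1) (j + k + (b.val - k))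
        else ent Y (a.val + 1) (n - j + 2 + (b.val - (k + (n + 1 - j - k))))).det
      = (-1 : F) ^ ((n + 1 - j - k) * (n - k - 1)) * X.det *
          subdet (X⁻¹ * Y) (j - 1) (fun u => k + 1 + u) (fun u => n - j + 2 + u) := by
  have hkn : k + 1 ≤ n := by omega
  have hjkn : j + k ≤ n + 1 := by omega
  set U : Matrix (Fin n) (Fin n) F := X⁻¹ * Y with hU
  have hXU : X * U = Y := by
    rw [hU, ← Matrix.mul_assoc, Matrix.mul_nonsing_inv X hX, Matrix.one_mul]
  set m2 := n + 1 - j - k with hm2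
  have hm2k : k + m2 = n + 1 - j := by omega
  set A : Matrix (Fin n) (Fin n) F := Matrix.of fun r b =>
    if b.val < k then ent (1 : Matrix (Fin n) (Fin n) F) (r.val + 1) (b.val + 1)
    else if b.val < k + m2 then ent (1 : Matrix (Fin n) (Fin n) F) (r.val + 1) (j + k + (b.val - k))
    else ent U (r.val + 1) (n - j + 2 + (b.val - (k + m2))) with hA
  -- entry descriptions for A
  have hA1 : ∀ s b : Fin n, b.val < k → A s b = (1 : Matrix (Fin n) (Fin n) F) s b := by
    intro s b hb
    rw [hA, Matrix.of_apply, if_pos hb, entEq _ (by omega) (by omega)]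
    exact congrArg₂ _ (Fin.ext (by simp only [Fin.val_mk]; omega)) (Fin.ext (by simp only [Fin.val_mk]; omega))
  have hA2 : ∀ (s b : Fin n) (_ : k ≤ b.val) (hb2 : b.val < k + m2),
      A s b = (1 : Matrix (Fin n) (Fin n) F) s ⟨b.val + j - 1, by omega⟩ := by
    intro s b hb1 hb2
    rw [hA, Matrix.of_apply, if_neg (by omega), if_pos hb2, entEq _ (by omega) (by omega)]
    exact congrArg₂ _ (Fin.ext (by simp only [Fin.val_mk]; omega)) (Fin.ext (by simp only [Fin.val_mk]; omega))
  have hA3 : ∀ s b : Fin n, k + m2 ≤ b.val → A s b = U s b := by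
    intro s b hb
    rw [hA, Matrix.of_apply, if_neg (by omega), if_neg (by omega),
      entEq _ (by omega) (by omega)]
    exact congrArg₂ _ (Fin.ext (by simp only [Fin.val_mk]; omega)) (Fin.ext (by simp only [Fin.val_mk]; omega))
  -- the matrix in the statement equals X * A
  have hMA : (Matrix.of fun a b : Fin n =>
        if b.val < k then ent X (a.val + 1) (b.val + 1)
        else if b.val < k + m2 then ent X (a.val + 1) (j + k + (b.val - k))
        else ent Y (a.val + 1) (n - j + 2 + (b.val - (k + m2)))) = X * A := by
    ext r b
    rw [Matrix.of_apply, Matrix.mul_apply]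
    by_cases hb1 : b.val < k
    · rw [if_pos hb1, entEq _ (by omega) (by omega)]
      calc X ⟨r.val + 1 - 1, by omega⟩ ⟨b.val + 1 - 1, by omega⟩
          = X r b := by exact congrArg₂ _ (Fin.ext (by simp only [Fin.val_mk]; omega)) (Fin.ext (by simp only [Fin.val_mk]; omega))
        _ = ∑ s, X r s * (1 : Matrix (Fin n) (Fin n) F) s b := by
            rw [← Matrix.mul_apply, Matrix.mul_one]
        _ = ∑ s, X r s * A s b :=
            Finset.sum_congr rfl fun s _ => by rw [hA1 s b hb1]
    · by_cases hb2 : b.val < k + m2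
      · rw [if_neg hb1, if_pos hb2, entEq _ (by omega) (by omega)]
        calc X ⟨r.val + 1 - 1, by omega⟩ ⟨j + k + (b.val - k) - 1, by omega⟩
            = X r ⟨b.val + j - 1, by omega⟩ := by exact congrArg₂ _ (Fin.ext (by simp only [Fin.val_mk]; omega)) (Fin.ext (by simp only [Fin.val_mk]; omega))
          _ = ∑ s, X r s * (1 : Matrix (Fin n) (Fin n) F) s ⟨b.val + j - 1, by omega⟩ := by
              rw [← Matrix.mul_apply, Matrix.mul_one]
          _ = ∑ s, X r s * A s b :=
              Finset.sum_congr rfl fun s _ => by rw [hA2 s b (by omega) hb2]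
      · rw [if_neg hb1, if_neg hb2, entEq _ (by omega) (by omega)]
        calc Y ⟨r.val + 1 - 1, by omega⟩ ⟨n - j + 2 + (b.val - (k + m2)) - 1, by omega⟩
            = Y r b := by exact congrArg₂ _ (Fin.ext (by simp only [Fin.val_mk]; omega)) (Fin.ext (by simp only [Fin.val_mk]; omega))
          _ = ∑ s, X r s * U s b := by rw [← Matrix.mul_apply, hXU]
          _ = ∑ s, X r s * A s b :=
              Finset.sum_congr rfl fun s _ => by rw [hA3 s b (by omega)]
  -- the permutation
  have hnk : n - k ≠ 0 := by omega
  let e1 : Fin k ⊕ Fin (n - k) ≃ Fin n := finSumFinEquiv.trans (finCongr (by omega))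
  let τ : Equiv.Perm (Fin (n - k)) := (finRotate (n - k)) ^ (j - 1)
  let ρ : Equiv.Perm (Fin n) := e1.permCongr (Equiv.sumCongr (Equiv.refl (Fin k)) τ)
  have hρ : ∀ i : Fin n, (ρ i).val =
      if i.val < k then i.val else k + ((i.val - k + (j - 1)) % (n - k)) := by
    intro i
    by_cases h : i.val < k
    · have he : e1.symm i = Sum.inl ⟨i.val, h⟩ := by
        rw [Equiv.symm_apply_eq]; exact Fin.ext (by simp [e1])
      rw [Equiv.permCongr_apply, he, if_pos h]
      simp [e1]
    · have he : e1.symm i = Sum.inr ⟨i.val - k, by omega⟩ := by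
        rw [Equiv.symm_apply_eq]; exact Fin.ext (by simp [e1]; omega)
      rw [Equiv.permCongr_apply, he, if_neg h]
      simp only [Equiv.sumCongr_apply, Sum.map_inr]
      simp [e1, τ, finRotatePowVal' hnk]
  have hρ0 : ∀ i : Fin n, i.val < k → (ρ i).val = i.val := fun i h => by rw [hρ, if_pos h]
  have hρ1 : ∀ i : Fin n, k ≤ i.val → i.val < k + m2 → (ρ i).val = i.val + (j - 1) := by
    intro i h1 h2
    rw [hρ, if_neg (by omega), Nat.mod_eq_of_lt (by omega)]; omega
  have hρ2 : ∀ i : Fin n, k + m2 ≤ i.val → (ρ i).val = k + (i.val - (k + m2)) := by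
    intro i h1
    rw [hρ, if_neg (by omega)]
    have hrw : i.val - k + (j - 1) = (n - k) + (i.val - (k + m2)) := by omega
    rw [hrw, Nat.add_mod_left, Nat.mod_eq_of_lt (by omega)]
  -- block decomposition
  have h12 : (k + m2) + (j - 1) = n := by omega
  let ec : Fin (k + m2) ⊕ Fin (j - 1) ≃ Fin n := finSumFinEquiv.trans (finCongr h12)
  have hecl : ∀ a : Fin (k + m2), (ec (Sum.inl a)).val = a.val := by intro a; simp [ec]
  have hecr : ∀ v : Fin (j - 1), (ec (Sum.inr v)).val = (k + m2) + v.val := by intro v; simp [ec]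
  set N : Matrix (Fin (k + m2) ⊕ Fin (j - 1)) (Fin (k + m2) ⊕ Fin (j - 1)) F :=
    (A.submatrix ρ id).submatrix ec ec with hN
  set D : Matrix (Fin (j - 1)) (Fin (j - 1)) F :=
    Matrix.of fun a b : Fin (j - 1) => ent U (k + 1 + a.val) (n - j + 2 + b.val) with hD
  have hN11 : N.toBlocks₁₁ = 1 := by
    ext a a'
    show A (ρ (ec (Sum.inl a))) (ec (Sum.inl a')) = (1 : Matrix (Fin (k + m2)) _ F) a a'
    by_cases h' : (ec (Sum.inl a')).val < k
    · rw [hA1 _ _ h', Matrix.one_apply, Matrix.one_apply]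
      by_cases haa : a = a'
      · subst haa
        rw [if_pos rfl, if_pos]
        exact Fin.ext (by rw [hρ0 _ (by rwa [hecl] at h' ⊢), hecl])
      · rw [if_neg haa, if_neg]
        intro hcon
        apply haa
        have hv := congrArg Fin.val hcon
        have ha' := hecl a'
        have ha := hecl a
        by_cases hak : a.val < k
        · rw [hρ0 _ (by omega)] at hv; exact Fin.ext (by omega)
        · rw [hρ, if_neg (by omega)] at hv; omega
    · rw [hA2 _ _ (by omega) (by rw [hecl]; exact a'.isLt), Matrix.one_apply, Matrix.one_apply]
      have ha' := hecl a'
      have ha := hecl a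
      by_cases haa : a = a'
      · subst haa
        rw [if_pos rfl, if_pos]
        refine Fin.ext ?_
        rw [hρ1 _ (by omega) (by omega)]
        simp; omega
      · rw [if_neg haa, if_neg]
        intro hcon
        apply haa
        have hv := congrArg Fin.val hcon
        simp only at hv
        by_cases hak : a.val < k
        · rw [hρ0 _ (by omega)] at hv; omega
        · rw [hρ1 _ (by omega) (by omega)] at hv; exact Fin.ext (by omega)
  have hN21 : N.toBlocks₂₁ = 0 := by
    ext u a'
    show A (ρ (ec (Sum.inr u))) (ec (Sum.inl a')) = 0
    have hu := hecr u
    have ha' := hecl a'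
    have hrow := hρ2 (ec (Sum.inr u)) (by omega)
    by_cases h' : (ec (Sum.inl a')).val < k
    · rw [hA1 _ _ h', Matrix.one_apply, if_neg]
      intro hcon
      have hv := congrArg Fin.val hcon
      omega
    · rw [hA2 _ _ (by omega) (by rw [hecl]; exact a'.isLt), Matrix.one_apply, if_neg]
      intro hcon
      have hv := congrArg Fin.val hcon
      simp only at hv
      have hub : u.val < j - 1 := u.isLt
      omega
  have hN22 : N.toBlocks₂₂ = D := by
    ext u v
    show A (ρ (ec (Sum.inr u))) (ec (Sum.inr v)) = D u v
    have hu := hecr u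
    have hv := hecr v
    have hrow := hρ2 (ec (Sum.inr u)) (by omega)
    rw [hA3 _ _ (by omega), hD, Matrix.of_apply, entEq _ (by omega) (by omega)]
    exact congrArg₂ _ (Fin.ext (by simp only [Fin.val_mk]; omega)) (Fin.ext (by simp only [Fin.val_mk]; omega))
  -- determinant computation
  have hdetN : N.det = D.det := by
    conv_lhs => rw [← Matrix.fromBlocks_toBlocks N, hN11, hN21, hN22]
    rw [Matrix.det_fromBlocks_zero₂₁, Matrix.det_one, one_mul]
  have hdetN' : N.det = (A.submatrix ρ id).det := Matrix.det_submatrix_equiv_self ec _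
  have hperm : (A.submatrix ρ id).det = (Equiv.Perm.sign ρ : ℤ) * A.det :=
    Matrix.det_permute ρ A
  -- the sign
  have hsign : Equiv.Perm.sign ρ = (-1 : ℤˣ) ^ ((n - k - 1) * (j - 1)) := by
    rw [show ρ = e1.permCongr (Equiv.sumCongr (Equiv.refl (Fin k)) τ) from rfl,
      Equiv.Perm.sign_permCongr, Equiv.Perm.sign_sumCongr, Equiv.Perm.sign_refl, one_mul,
      show τ = (finRotate (n - k)) ^ (j - 1) from rfl, map_pow, signFinRotate' hnk, ← pow_mul]
  have hsignF : ((Equiv.Perm.sign ρ : ℤ) : F) = (-1 : F) ^ (m2 * (n - k - 1)) := by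
    rw [hsign]
    push_cast
    refine negOnePowCongr ?_
    have hsum : (n - k - 1) * (j - 1) + m2 * (n - k - 1) = (n - k - 1) * (n - k) := by
      have h' : (j - 1) + m2 = n - k := by omega
      calc (n - k - 1) * (j - 1) + m2 * (n - k - 1) = ((j - 1) + m2) * (n - k - 1) := by ring
        _ = (n - k - 1) * (n - k) := by rw [h']; ring
    have hev : Even ((n - k - 1) * (n - k)) := by
      have := Nat.even_mul_succ_self (n - k - 1)
      rwa [show n - k - 1 + 1 = n - k by omega] at this
    obtain ⟨t, ht⟩ := hev
    omega
  have hsq : (-1 : F) ^ (m2 * (n - k - 1)) * (-1 : F) ^ (m2 * (n - k - 1)) = 1 := by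
    rw [← pow_add]; exact Even.neg_one_pow ⟨m2 * (n - k - 1), rfl⟩
  have hdetA : A.det = (-1 : F) ^ (m2 * (n - k - 1)) * D.det := by
    have h1 : (-1 : F) ^ (m2 * (n - k - 1)) * A.det = D.det := by
      rw [← hdetN, hdetN', hperm, hsignF]
    calc A.det = (-1 : F) ^ (m2 * (n - k - 1)) * ((-1 : F) ^ (m2 * (n - k - 1)) * A.det) := by
          rw [← mul_assoc, hsq, one_mul]
      _ = (-1 : F) ^ (m2 * (n - k - 1)) * D.det := by rw [h1]
  have hsubdet : subdet U (j - 1) (fun u => k + 1 + u) (fun u => n - j + 2 + u) = D.det := rfl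
  rw [hMA, Matrix.det_mul, hdetA, hsubdet]
  ring
end

section
/- Let X and Y be n×n matrices over a field and let k, l be integers with k, l ≥ 1 and k+l ≤ n−1. Define f_{kl}(X,Y) := det [X^{[n−k+1,n]} | Y^{[n−l+1,n]}]_{[n−k−l+1,n]}. Then for every unipotent upper-triangular n×n matrix N₊ and all unipotent lower-triangular n×n matrices N₋ and N₋′, one has f_{kl}(N₊ X N₋, N₊ Y N₋′) = f_{kl}(X, Y). -/
/-- `f_{kl}(X,Y) = det [X^{[n−k+1,n]} | Y^{[n−l+1,n]}]_{[n−k−l+1,n]}`: the determinant of the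
`(k+l) × (k+l)` matrix whose rows are rows `n−k−l+1, …, n` and whose columns are the last
`k` columns of `X` followed by the last `l` columns of `Y`. -/
noncomputable def fkl {F : Type*} [Field F] (n k l : ℕ) (X Y : Matrix (Fin n) (Fin n) F) : F :=
  (Matrix.of fun a b : Fin (k + l) =>
    if b.val < k then ent X (n - k - l + 1 + a.val) (n - k + 1 + b.val)
    else ent Y (n - k - l + 1 + a.val) (n - l + 1 + (b.val - k))).det

section Aux

lemma sum_tail {F : Type*} [AddCommMonoid F] {n d : ℕ} (hd : d ≤ n) (g : Fin n → F)
    (h0 : ∀ j : Fin n, j.val < n - d → g j = 0) :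
    ∑ j, g j = ∑ i : Fin d, g ⟨n - d + i.val, by have := i.isLt; omega⟩ := by
  classical
  rw [← Finset.sum_image (f := g)
    (g := fun i : Fin d => (⟨n - d + i.val, by have := i.isLt; omega⟩ : Fin n))
    (by intro a _ b _ h; have := congrArg Fin.val h; simp at this; exact Fin.ext (by omega))]
  refine (Finset.sum_subset (Finset.subset_univ _) ?_).symm
  intro x _ hx
  refine h0 x ?_
  by_contra hlt
  exact hx (Finset.mem_image.2 ⟨⟨x.val - (n - d), by have := x.isLt; omega⟩, Finset.mem_univ _,
    Fin.ext (by simp; omega)⟩)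

lemma sum_head {F : Type*} [AddCommMonoid F] {n d : ℕ} (hd : d ≤ n) (g : Fin n → F)
    (h0 : ∀ j : Fin n, d ≤ j.val → g j = 0) :
    ∑ j, g j = ∑ i : Fin d, g ⟨i.val, by have := i.isLt; omega⟩ := by
  classical
  rw [← Finset.sum_image (f := g)
    (g := fun i : Fin d => (⟨i.val, by have := i.isLt; omega⟩ : Fin n))
    (by intro a _ b _ h; have := congrArg Fin.val h; simp at this; exact Fin.ext (by omega))]
  refine (Finset.sum_subset (Finset.subset_univ _) ?_).symm
  intro x _ hx
  refine h0 x ?_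
  by_contra hlt
  exact hx (Finset.mem_image.2 ⟨⟨x.val, by omega⟩, Finset.mem_univ _, Fin.ext (by simp)⟩)

variable {F : Type*} [Field F] {n k l : ℕ}

/-- The row index map. -/
def rIdx (n m : ℕ) (h : m ≤ n) (a : Fin m) : Fin n :=
  ⟨n - m + a.val, by have := a.isLt; omega⟩

/-- The `(k+l) × (k+l)` matrix whose determinant is `fkl`. -/
def Mmat (h : k + l ≤ n) (Z W : Matrix (Fin n) (Fin n) F) :
    Matrix (Fin (k + l)) (Fin (k + l)) F :=
  Matrix.of fun a b =>
    if hb : b.val < k then Z (rIdx n (k + l) h a) ⟨n - k + b.val, by omega⟩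
    else W (rIdx n (k + l) h a) ⟨n - l + (b.val - k), by have := b.isLt; omega⟩

def Pmat (h : k + l ≤ n) (Np : Matrix (Fin n) (Fin n) F) :
    Matrix (Fin (k + l)) (Fin (k + l)) F :=
  Matrix.of fun a i => Np (rIdx n (k + l) h a) (rIdx n (k + l) h i)

def Qmat (h : k + l ≤ n) (Nm Nm' : Matrix (Fin n) (Fin n) F) :
    Matrix (Fin (k + l)) (Fin (k + l)) F :=
  Matrix.of fun i b =>
    if hi : i.val < k then
      (if hb : b.val < k then Nm ⟨n - k + i.val, by omega⟩ ⟨n - k + b.val, by omega⟩ else 0)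
    else
      (if hb : b.val < k then 0
       else Nm' ⟨n - l + (i.val - k), by have := i.isLt; omega⟩
            ⟨n - l + (b.val - k), by have := b.isLt; omega⟩)

lemma fkl_eq_Mmat (h : k + l ≤ n) (Z W : Matrix (Fin n) (Fin n) F) :
    fkl n k l Z W = (Mmat h Z W).det := by
  unfold fkl Mmat
  congr 1
  funext a b
  have ha := a.isLt
  have hb := b.isLt
  by_cases hbk : b.val < k
  · rw [Matrix.of_apply, Matrix.of_apply, if_pos hbk, dif_pos hbk]
    have hcond : (n - k - l + 1 + a.val - 1 < n ∧ n - k + 1 + b.val - 1 < n) := by omega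
    rw [ent, dif_pos hcond]
    congr 1
    · exact Fin.ext (by simp [rIdx] <;> omega)
    · exact Fin.ext (by simp <;> omega)
  · rw [Matrix.of_apply, Matrix.of_apply, if_neg hbk, dif_neg hbk]
    have hcond : (n - k - l + 1 + a.val - 1 < n ∧ n - l + 1 + (b.val - k) - 1 < n) := by omega
    rw [ent, dif_pos hcond]
    congr 1
    · exact Fin.ext (by simp [rIdx] <;> omega)
    · exact Fin.ext (by simp <;> omega)

lemma expand_entry (Np Z N : Matrix (Fin n) (Fin n) F)
    (hNp_tri : ∀ a b : Fin n, b < a → Np a b = 0)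
    {m d : ℕ} (hm : m ≤ n) (hd : d ≤ n) (a : Fin m) (c : Fin n)
    (hN : ∀ q : Fin n, q.val < n - d → N q c = 0) :
    (Np * Z * N) ⟨n - m + a.val, by have := a.isLt; omega⟩ c
      = ∑ i : Fin m, ∑ j : Fin d,
          Np ⟨n - m + a.val, by have := a.isLt; omega⟩ ⟨n - m + i.val, by have := i.isLt; omega⟩
          * Z ⟨n - m + i.val, by have := i.isLt; omega⟩ ⟨n - d + j.val, by have := j.isLt; omega⟩
          * N ⟨n - d + j.val, by have := j.isLt; omega⟩ c := by
  have ha := a.isLt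
  rw [Matrix.mul_apply]
  rw [sum_tail hd _ (fun q hq => by rw [hN q hq, mul_zero])]
  have step : ∀ j : Fin d,
      (Np * Z) ⟨n - m + a.val, by omega⟩ ⟨n - d + j.val, by have := j.isLt; omega⟩
        = ∑ i : Fin m, Np ⟨n - m + a.val, by omega⟩ ⟨n - m + i.val, by have := i.isLt; omega⟩
            * Z ⟨n - m + i.val, by have := i.isLt; omega⟩
              ⟨n - d + j.val, by have := j.isLt; omega⟩ := by
    intro j
    rw [Matrix.mul_apply]
    exact sum_tail hm _ (fun p hp => by
      rw [hNp_tri _ p (by rw [Fin.lt_def]; simpa using by omega), zero_mul])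
  simp only [step, Finset.sum_mul]
  rw [Finset.sum_comm]

end Aux

/-- The invariance property `f_{kl}(N₊ X N₋, N₊ Y N₋′) = f_{kl}(X, Y)` for a unipotent
upper-triangular matrix `N₊` and unipotent lower-triangular matrices `N₋`, `N₋′`. -/
theorem statement12 {F : Type*} [Field F] {n k l : ℕ} (hk : 1 ≤ k) (hl : 1 ≤ l)
    (hkl : k + l ≤ n - 1) (X Y Np Nm Nm' : Matrix (Fin n) (Fin n) F)
    (hNp_tri : ∀ a b : Fin n, b < a → Np a b = 0) (hNp_diag : ∀ a : Fin n, Np a a = 1)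
    (hNm_tri : ∀ a b : Fin n, a < b → Nm a b = 0) (hNm_diag : ∀ a : Fin n, Nm a a = 1)
    (hNm'_tri : ∀ a b : Fin n, a < b → Nm' a b = 0) (hNm'_diag : ∀ a : Fin n, Nm' a a = 1) :
    fkl n k l (Np * X * Nm) (Np * Y * Nm') = fkl n k l X Y := by
  have hn : k + l + 1 ≤ n := by omega
  have hmn : k + l ≤ n := by omega
  rw [fkl_eq_Mmat hmn, fkl_eq_Mmat hmn (Z := X)]
  have hfact : Mmat hmn (Np * X * Nm) (Np * Y * Nm')
      = Pmat hmn Np * (Mmat hmn X Y * Qmat hmn Nm Nm') := by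
    ext a b
    have ha := a.isLt
    have hb := b.isLt
    rw [Matrix.mul_apply]
    by_cases hbk : b.val < k
    · -- X-column case
      rw [show Mmat hmn (Np * X * Nm) (Np * Y * Nm') a b
          = (Np * X * Nm) (rIdx n (k+l) hmn a) ⟨n - k + b.val, by omega⟩ from by
        unfold Mmat; rw [Matrix.of_apply, dif_pos hbk]]
      rw [show rIdx n (k+l) hmn a = ⟨n - (k+l) + a.val, by omega⟩ from rfl]
      rw [expand_entry Np X Nm hNp_tri (d := k) hmn (by omega) a ⟨n - k + b.val, by omega⟩
        (fun q hq => hNm_tri q ⟨n - k + b.val, by omega⟩ (by rw [Fin.lt_def]; simp; omega))]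
      refine Finset.sum_congr rfl fun i _ => ?_
      have hi := i.isLt
      conv_rhs => rw [Matrix.mul_apply]
      conv_rhs => rw [sum_head (d := k) (by omega) _ (fun j hj => by
        have : Qmat hmn Nm Nm' j b = 0 := by
          unfold Qmat; rw [Matrix.of_apply, dif_neg (by omega), dif_pos hbk]
        rw [this, mul_zero])]
      conv_rhs => rw [Finset.mul_sum]
      refine Finset.sum_congr rfl fun j _ => ?_
      have hj := j.isLt
      rw [show Mmat hmn X Y i ⟨j.val, by omega⟩
          = X (rIdx n (k+l) hmn i) ⟨n - k + j.val, by omega⟩ from by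
        unfold Mmat; rw [Matrix.of_apply, dif_pos (show j.val < k by omega)]]
      rw [show Qmat hmn Nm Nm' ⟨j.val, by omega⟩ b
          = Nm ⟨n - k + j.val, by omega⟩ ⟨n - k + b.val, by omega⟩ from by
        unfold Qmat; rw [Matrix.of_apply, dif_pos (show j.val < k by omega), dif_pos hbk]]
      rw [show Pmat hmn Np a i
          = Np ⟨n - (k+l) + a.val, by omega⟩ ⟨n - (k+l) + i.val, by omega⟩ from rfl]
      simp only [rIdx]
      ring
    · -- Y-column case
      rw [show Mmat hmn (Np * X * Nm) (Np * Y * Nm') a b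
          = (Np * Y * Nm') (rIdx n (k+l) hmn a) ⟨n - l + (b.val - k), by omega⟩ from by
        unfold Mmat; rw [Matrix.of_apply, dif_neg hbk]]
      rw [show rIdx n (k+l) hmn a = ⟨n - (k+l) + a.val, by omega⟩ from rfl]
      rw [expand_entry Np Y Nm' hNp_tri (d := l) hmn (by omega) a ⟨n - l + (b.val - k), by omega⟩
        (fun q hq => hNm'_tri q ⟨n - l + (b.val - k), by omega⟩ (by rw [Fin.lt_def]; simp; omega))]
      refine Finset.sum_congr rfl fun i _ => ?_
      have hi := i.isLt
      conv_rhs => rw [Matrix.mul_apply]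
      conv_rhs => rw [sum_tail (d := l) (by omega) _ (fun j hj => by
        have : Qmat hmn Nm Nm' j b = 0 := by
          unfold Qmat; rw [Matrix.of_apply, dif_pos (by omega), dif_neg hbk]
        rw [this, mul_zero])]
      conv_rhs => rw [Finset.mul_sum]
      refine Finset.sum_congr rfl fun j _ => ?_
      have hj := j.isLt
      have e1 : (⟨k + l - l + j.val, by omega⟩ : Fin (k + l)) = ⟨k + j.val, by omega⟩ :=
        Fin.ext (by simp <;> omega)
      rw [e1]
      simp only [Mmat, Qmat, Pmat, rIdx, Matrix.of_apply]
      rw [dif_neg (show ¬ k + j.val < k by omega), dif_neg (show ¬ k + j.val < k by omega),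
          dif_neg hbk]
      have e2 : k + j.val - k = j.val := by omega
      simp only [e2]
      ring
  have hdetP : (Pmat hmn Np).det = 1 := by
    rw [Matrix.det_of_upperTriangular (by
      intro i j hij
      have hij1 : (j : Fin (k + l)) < i := hij
      have hij' : j.val < i.val := hij1
      unfold Pmat
      rw [Matrix.of_apply]
      exact hNp_tri _ _ (by rw [Fin.lt_def]; simp [rIdx] <;> omega))]
    refine Finset.prod_eq_one fun i _ => ?_
    unfold Pmat
    rw [Matrix.of_apply, hNp_diag]
  have hdetQ : (Qmat hmn Nm Nm').det = 1 := by
    rw [Matrix.det_of_lowerTriangular _ (by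
      intro i j hij
      have hij1 : (i : Fin (k + l)) < j := hij
      have hij' : i.val < j.val := hij1
      clear hij hij1
      unfold Qmat
      rw [Matrix.of_apply]
      by_cases hik : i.val < k
      · rw [dif_pos hik]
        by_cases hjk : j.val < k
        · rw [dif_pos hjk]
          exact hNm_tri _ _ (by rw [Fin.lt_def]; simp <;> omega)
        · rw [dif_neg hjk]
      · rw [dif_neg hik, dif_neg (show ¬ j.val < k by omega)]
        exact hNm'_tri _ _ (by rw [Fin.lt_def]; have := i.isLt; have := j.isLt; simp <;> omega))]
    refine Finset.prod_eq_one fun i _ => ?_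
    unfold Qmat
    rw [Matrix.of_apply]
    by_cases hik : i.val < k
    · rw [dif_pos hik, dif_pos hik, hNm_diag]
    · rw [dif_neg hik, dif_neg hik, hNm'_diag]
  rw [hfact, Matrix.det_mul, Matrix.det_mul, hdetP, hdetQ, one_mul, mul_one]
end
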